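/- arXiv:2305.12836 — 9 statements merged into one kernel-verified Lean document; each statement's English description precedes it below -/
import Mathlib

section
/- Let V be a finite-dimensional real inner product space of dimension n+1 ≥ 2 and S(V) = {u ∈ V : ‖u‖ = 1} its unit sphere. For u ∈ S(V) and w ∈ V with ⟨u,w⟩ = 0, set π(u,w) = ( ((1−‖w‖²)u + 2w)/(1+‖w‖²) , ((‖w‖²−1)u + 2w)/(1+‖w‖²) ). Then: (i) if ‖w‖ ≤ 1, both components of π(u,w) lie in S(V); (ii) if ‖w‖ = 1, both components equal w, so π(u,w) lies on the diagonal of S(V) × S(V); (iii) π restricts to a homeomorphism from E = {(u,w) ∈ V × V : ‖u‖ = 1, ⟨u,w⟩ = 0, ‖w‖ < 1} (with the subspace topology of V × V) onto the complement of the diagonal, {(x,y) ∈ S(V) × S(V) : x ≠ y}. -/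
open scoped RealInnerProductSpace


section AuxStmt0
variable {V : Type*} [NormedAddCommGroup V] [InnerProductSpace ℝ V]

lemma aux_norm_sq0 (a : ℝ) {u w : V} (hu : ‖u‖ = 1) (huw : ⟪u, w⟫ = 0) :
    ‖a • u + (2:ℝ) • w‖ ^ 2 = a ^ 2 + 4 * ‖w‖ ^ 2 := by
  rw [norm_add_sq_real, real_inner_smul_left, real_inner_smul_right, huw, norm_smul, norm_smul, hu]
  simp [mul_pow, sq_abs]
  norm_num

lemma key_norm0 {u w : V} (a : ℝ) (hu : ‖u‖ = 1) (huw : ⟪u, w⟫ = 0)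
    (ha : a ^ 2 = (1 - ‖w‖ ^ 2) ^ 2) :
    ‖((1 + ‖w‖ ^ 2)⁻¹ : ℝ) • (a • u + (2:ℝ) • w)‖ = 1 := by
  have ht : (0:ℝ) < 1 + ‖w‖ ^ 2 := by positivity
  have h1 : ‖a • u + (2:ℝ) • w‖ ^ 2 = (1 + ‖w‖ ^ 2) ^ 2 := by
    rw [aux_norm_sq0 a hu huw, ha]; ring
  have h2 : ‖a • u + (2:ℝ) • w‖ = 1 + ‖w‖ ^ 2 :=
    by nlinarith [norm_nonneg (a • u + (2:ℝ) • w)]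
  rw [norm_smul, h2, Real.norm_eq_abs, abs_of_pos (by positivity), inv_mul_cancel₀ ht.ne']

noncomputable def fwdMap (p : V × V) : V × V :=
  (((1 + ‖p.2‖ ^ 2)⁻¹ : ℝ) • ((1 - ‖p.2‖ ^ 2) • p.1 + (2:ℝ) • p.2),
   ((1 + ‖p.2‖ ^ 2)⁻¹ : ℝ) • ((‖p.2‖ ^ 2 - 1) • p.1 + (2:ℝ) • p.2))

noncomputable def bwdMap (q : V × V) : V × V :=
  ((‖q.1 - q.2‖⁻¹ : ℝ) • (q.1 - q.2), ((2 + ‖q.1 - q.2‖)⁻¹ : ℝ) • (q.1 + q.2))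

lemma fwd_sub (u w : V) :
    (fwdMap (u, w)).1 - (fwdMap (u, w)).2 = (2 * (1 - ‖w‖ ^ 2) / (1 + ‖w‖ ^ 2)) • u := by
  have ht : (1 + ‖w‖ ^ 2 : ℝ) ≠ 0 := by positivity
  simp only [fwdMap]
  match_scalars <;> field_simp <;> ring

lemma fwd_add (u w : V) :
    (fwdMap (u, w)).1 + (fwdMap (u, w)).2 = (4 / (1 + ‖w‖ ^ 2)) • w := by
  have ht : (1 + ‖w‖ ^ 2 : ℝ) ≠ 0 := by positivity
  simp only [fwdMap]
  match_scalars <;> field_simp <;> ring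

lemma fwd_norm_sub {u w : V} (hu : ‖u‖ = 1) (hw : ‖w‖ < 1) :
    ‖(fwdMap (u, w)).1 - (fwdMap (u, w)).2‖ = 2 * (1 - ‖w‖ ^ 2) / (1 + ‖w‖ ^ 2) := by
  have h1 : (0:ℝ) < 1 - ‖w‖ ^ 2 := by nlinarith [norm_nonneg w]
  rw [fwd_sub, norm_smul, hu, Real.norm_eq_abs, abs_of_pos (by positivity), mul_one]

-- facts about a pair on the sphere
lemma sphere_inner_sub_add {x y : V} (hx : ‖x‖ = 1) (hy : ‖y‖ = 1) :
    ⟪x - y, x + y⟫ = 0 := by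
  rw [inner_sub_left, inner_add_right, inner_add_right, real_inner_self_eq_norm_sq,
    real_inner_self_eq_norm_sq, hx, hy, real_inner_comm x y]
  ring

lemma sphere_norm_add_sq {x y : V} (hx : ‖x‖ = 1) (hy : ‖y‖ = 1) :
    ‖x + y‖ ^ 2 = 4 - ‖x - y‖ ^ 2 := by
  have := parallelogram_law_with_norm ℝ x y
  nlinarith [this]

lemma bwd_w_norm_sq {x y : V} (hx : ‖x‖ = 1) (hy : ‖y‖ = 1) :
    ‖((2 + ‖x - y‖)⁻¹ : ℝ) • (x + y)‖ ^ 2 = (2 - ‖x - y‖) / (2 + ‖x - y‖) := by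
  have hd : (0:ℝ) ≤ ‖x - y‖ := norm_nonneg _
  have h2 : (0:ℝ) < 2 + ‖x - y‖ := by positivity
  rw [norm_smul, Real.norm_eq_abs, abs_of_pos (by positivity), mul_pow,
    sphere_norm_add_sq hx hy]
  field_simp
  ring

end AuxStmt0

section Aux2
variable {V : Type*} [NormedAddCommGroup V] [InnerProductSpace ℝ V]

lemma bwd_fwd0 {u w : V} (hu : ‖u‖ = 1) (hw : ‖w‖ < 1) :
    bwdMap (fwdMap (u, w)) = (u, w) := by
  have h1 : (0:ℝ) < 1 - ‖w‖ ^ 2 := by nlinarith [norm_nonneg w]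
  have ht : (0:ℝ) < 1 + ‖w‖ ^ 2 := by positivity
  have hbw : bwdMap (fwdMap (u, w)) =
      ((2 * (1 - ‖w‖ ^ 2) / (1 + ‖w‖ ^ 2))⁻¹ • ((2 * (1 - ‖w‖ ^ 2) / (1 + ‖w‖ ^ 2)) • u),
       (2 + 2 * (1 - ‖w‖ ^ 2) / (1 + ‖w‖ ^ 2))⁻¹ • ((4 / (1 + ‖w‖ ^ 2)) • w)) := by
    rw [bwdMap, fwd_norm_sub hu hw, fwd_sub, fwd_add]
  rw [hbw]
  have hs : (0:ℝ) < 2 * (1 - ‖w‖ ^ 2) / (1 + ‖w‖ ^ 2) := by positivity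
  ext
  · rw [smul_smul, inv_mul_cancel₀ hs.ne', one_smul]
  · show (2 + 2 * (1 - ‖w‖ ^ 2) / (1 + ‖w‖ ^ 2))⁻¹ • ((4 / (1 + ‖w‖ ^ 2)) • w) = (u, w).2
    rw [smul_smul]
    have : (2 + 2 * (1 - ‖w‖ ^ 2) / (1 + ‖w‖ ^ 2))⁻¹ * (4 / (1 + ‖w‖ ^ 2)) = 1 := by
      rw [show (2 + 2 * (1 - ‖w‖ ^ 2) / (1 + ‖w‖ ^ 2)) = 4 / (1 + ‖w‖ ^ 2) by
        field_simp; ring]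
      field_simp
    rw [this, one_smul]

lemma fwd_bwd0 {x y : V} (hx : ‖x‖ = 1) (hy : ‖y‖ = 1) (hxy : x ≠ y) :
    fwdMap (bwdMap (x, y)) = (x, y) := by
  have hd : (0:ℝ) < ‖x - y‖ := by
    rw [norm_pos_iff]; exact sub_ne_zero_of_ne hxy
  have h2 : (0:ℝ) < 2 + ‖x - y‖ := by positivity
  have hw2 : ‖((2 + ‖x - y‖)⁻¹ : ℝ) • (x + y)‖ ^ 2 = (2 - ‖x - y‖) / (2 + ‖x - y‖) :=
    bwd_w_norm_sq hx hy
  have h4 : (1 : ℝ) + (2 - ‖x - y‖) / (2 + ‖x - y‖) = 4 / (2 + ‖x - y‖) := by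
    field_simp; ring
  simp only [fwdMap, bwdMap]
  rw [hw2, h4]
  have h4' : (4 / (2 + ‖x - y‖) : ℝ) ≠ 0 := by positivity
  ext
  · show (4 / (2 + ‖x - y‖) : ℝ)⁻¹ •
      ((1 - (2 - ‖x - y‖) / (2 + ‖x - y‖)) • (‖x - y‖⁻¹ • (x - y)) +
        (2:ℝ) • ((2 + ‖x - y‖)⁻¹ • (x + y))) = x
    match_scalars <;> field_simp <;> ring
  · show (4 / (2 + ‖x - y‖) : ℝ)⁻¹ •
      (((2 - ‖x - y‖) / (2 + ‖x - y‖) - 1) • (‖x - y‖⁻¹ • (x - y)) +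
        (2:ℝ) • ((2 + ‖x - y‖)⁻¹ • (x + y))) = y
    match_scalars <;> field_simp <;> ring

end Aux2

section Aux3
variable {V : Type*} [NormedAddCommGroup V] [InnerProductSpace ℝ V]

lemma fwd_mem0 {u w : V} (hu : ‖u‖ = 1) (huw : ⟪u, w⟫ = 0) (hw : ‖w‖ < 1) :
    ‖(fwdMap (u, w)).1‖ = 1 ∧ ‖(fwdMap (u, w)).2‖ = 1 ∧
      (fwdMap (u, w)).1 ≠ (fwdMap (u, w)).2 := by
  refine ⟨key_norm0 _ hu huw (by ring), key_norm0 _ hu huw (by ring), ?_⟩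
  intro h
  have h0 := fwd_sub u w
  rw [h, sub_self] at h0
  have h1 : (0:ℝ) < 1 - ‖w‖ ^ 2 := by nlinarith [norm_nonneg w]
  have hs : (0:ℝ) < 2 * (1 - ‖w‖ ^ 2) / (1 + ‖w‖ ^ 2) := by positivity
  have hu0 : u ≠ 0 := by intro h'; rw [h', norm_zero] at hu; norm_num at hu
  exact (smul_ne_zero hs.ne' hu0) h0.symm

lemma bwd_mem0 {x y : V} (hx : ‖x‖ = 1) (hy : ‖y‖ = 1) (hxy : x ≠ y) :
    ‖(bwdMap (x, y)).1‖ = 1 ∧ ⟪(bwdMap (x, y)).1, (bwdMap (x, y)).2⟫ = 0 ∧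
      ‖(bwdMap (x, y)).2‖ < 1 := by
  have hd : (0:ℝ) < ‖x - y‖ := by rw [norm_pos_iff]; exact sub_ne_zero_of_ne hxy
  have h2 : (0:ℝ) < 2 + ‖x - y‖ := by positivity
  refine ⟨?_, ?_, ?_⟩
  · show ‖(‖x - y‖⁻¹ : ℝ) • (x - y)‖ = 1
    rw [norm_smul, Real.norm_eq_abs, abs_of_pos (by positivity), inv_mul_cancel₀ hd.ne']
  · show ⟪(‖x - y‖⁻¹ : ℝ) • (x - y), ((2 + ‖x - y‖)⁻¹ : ℝ) • (x + y)⟫ = 0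
    rw [real_inner_smul_left, real_inner_smul_right, sphere_inner_sub_add hx hy]
    ring
  · show ‖((2 + ‖x - y‖)⁻¹ : ℝ) • (x + y)‖ < 1
    have h3 := bwd_w_norm_sq hx hy
    by_contra hge
    rw [not_lt] at hge
    have hn2 : (1:ℝ) ≤ ‖((2 + ‖x - y‖)⁻¹ : ℝ) • (x + y)‖ ^ 2 := by nlinarith
    rw [h3, one_le_div h2] at hn2
    linarith

lemma cont_fwd0 : Continuous (fwdMap : V × V → V × V) := by
  have hc : Continuous fun p : V × V => ((1 + ‖p.2‖ ^ 2)⁻¹ : ℝ) :=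
    (continuous_const.add ((continuous_snd.norm).pow 2)).inv₀ (fun p => (by positivity : (0:ℝ) < 1 + ‖p.2‖ ^ 2).ne')
  refine Continuous.prodMk ?_ ?_
  · exact hc.smul (((continuous_const.sub ((continuous_snd.norm).pow 2)).smul
      continuous_fst).add (continuous_const.smul continuous_snd))
  · exact hc.smul ((((continuous_snd.norm).pow 2).sub continuous_const).smul
      continuous_fst |>.add (continuous_const.smul continuous_snd))

end Aux3

/-- Lemma 2.1: the map `π` identifies the open disc bundle of `ζ̃` over `S(V)`
with the complement of the diagonal in `S(V) × S(V)`. -/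
theorem stmt0 {V : Type*} [NormedAddCommGroup V] [InnerProductSpace ℝ V]
    [FiniteDimensional ℝ V] {n : ℕ} (hn : 1 ≤ n) (hdim : Module.finrank ℝ V = n + 1)
    (P : V → V → V × V)
    (hP : ∀ u w : V, P u w =
      (((1 + ‖w‖ ^ 2)⁻¹ : ℝ) • ((1 - ‖w‖ ^ 2) • u + (2 : ℝ) • w),
       ((1 + ‖w‖ ^ 2)⁻¹ : ℝ) • ((‖w‖ ^ 2 - 1) • u + (2 : ℝ) • w))) :
    (∀ u w : V, ‖u‖ = 1 → ⟪u, w⟫ = 0 → ‖w‖ ≤ 1 →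
        ‖(P u w).1‖ = 1 ∧ ‖(P u w).2‖ = 1) ∧
    (∀ u w : V, ‖u‖ = 1 → ⟪u, w⟫ = 0 → ‖w‖ = 1 → P u w = (w, w)) ∧
    (∃ h : {p : V × V // ‖p.1‖ = 1 ∧ ⟪p.1, p.2⟫ = 0 ∧ ‖p.2‖ < 1} ≃ₜ
        {q : V × V // ‖q.1‖ = 1 ∧ ‖q.2‖ = 1 ∧ q.1 ≠ q.2},
      ∀ p, (h p : V × V) = P (p : V × V).1 (p : V × V).2) := by
  refine ⟨?_, ?_, ?_⟩
  · intro u w hu huw _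
    rw [hP]
    exact ⟨key_norm0 _ hu huw (by ring), key_norm0 _ hu huw (by ring)⟩
  · intro u w hu huw hw
    rw [hP, hw]
    ext
    · show ((1 + (1:ℝ) ^ 2)⁻¹ : ℝ) • ((1 - (1:ℝ) ^ 2) • u + (2 : ℝ) • w) = (w, w).1
      match_scalars <;> norm_num
    · show ((1 + (1:ℝ) ^ 2)⁻¹ : ℝ) • (((1:ℝ) ^ 2 - 1) • u + (2 : ℝ) • w) = (w, w).2
      match_scalars <;> norm_num
  · have h1 : Continuous fun q : {q : V × V // ‖q.1‖ = 1 ∧ ‖q.2‖ = 1 ∧ q.1 ≠ q.2} =>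
        (q : V × V).1 - (q : V × V).2 :=
      (continuous_subtype_val.fst).sub (continuous_subtype_val.snd)
    refine ⟨{
      toFun := fun p => ⟨fwdMap p.1,
        (fwd_mem0 p.2.1 p.2.2.1 p.2.2.2).1,
        (fwd_mem0 p.2.1 p.2.2.1 p.2.2.2).2.1,
        (fwd_mem0 p.2.1 p.2.2.1 p.2.2.2).2.2⟩
      invFun := fun q => ⟨bwdMap q.1,
        (bwd_mem0 q.2.1 q.2.2.1 q.2.2.2).1,
        (bwd_mem0 q.2.1 q.2.2.1 q.2.2.2).2.1,
        (bwd_mem0 q.2.1 q.2.2.1 q.2.2.2).2.2⟩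
      left_inv := fun p => Subtype.ext (bwd_fwd0 p.2.1 p.2.2.2)
      right_inv := fun q => Subtype.ext (fwd_bwd0 q.2.1 q.2.2.1 q.2.2.2)
      continuous_toFun := (cont_fwd0.comp continuous_subtype_val).subtype_mk _
      continuous_invFun := by
        refine Continuous.subtype_mk ?_ _
        refine Continuous.prodMk ?_ ?_
        · exact (h1.norm.inv₀ fun q => by
            rw [norm_ne_zero_iff]; exact sub_ne_zero_of_ne q.2.2.2).smul h1
        · exact ((continuous_const.add h1.norm).inv₀ fun q => (by positivity : (0:ℝ) < 2 + ‖(q : V × V).1 - (q : V × V).2‖).ne').smul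
            ((continuous_subtype_val.fst).add (continuous_subtype_val.snd)) }, ?_⟩
    intro p
    rw [hP]
    rfl
end

section
/- Let 𝕂 be ℝ or ℂ and let V be a finite-dimensional inner product space over 𝕂 of dimension n+1 ≥ 2. For one-dimensional 𝕂-subspaces L, M ⊆ V with M ⊆ L^⊥, a 𝕂-linear map a : L → M with operator norm ‖a‖, and its adjoint a* : M → L (characterized by ⟨a x, y⟩ = ⟨x, a* y⟩ for x ∈ L, y ∈ M), put π(L,M,a) = ( {x + a x : x ∈ L}, {y + a* y : y ∈ M} ). Then: (i) both components of π(L,M,a) are one-dimensional 𝕂-subspaces of V whenever ‖a‖ ≤ 1; (ii) if ‖a‖ = 1 the two components are equal; (iii) the assignment (L,M,a) ↦ π(L,M,a), restricted to triples with ‖a‖ < 1, is a bijection onto the set of ordered pairs (L′,M′) of distinct one-dimensional 𝕂-subspaces of V. -/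
set_option linter.unusedSectionVars false

/-- A triple `(L, M, a)` consisting of two orthogonal one-dimensional
`𝕂`-subspaces of `V` together with a `𝕂`-linear map `a : L → M`. -/
structure OrthLinePair (𝕂 : Type*) [RCLike 𝕂] (V : Type*) [NormedAddCommGroup V]
    [InnerProductSpace 𝕂 V] [FiniteDimensional 𝕂 V] where
  L : Submodule 𝕂 V
  M : Submodule 𝕂 V
  hL : Module.finrank 𝕂 L = 1
  hM : Module.finrank 𝕂 M = 1
  orth : M ≤ Lᗮ
  a : L →L[𝕂] M

/-- The map `π(L,M,a) = ({x + a x : x ∈ L}, {y + a* y : y ∈ M})`, where `a*` is the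
adjoint of `a`. -/
noncomputable def OrthLinePair.pi {𝕂 : Type*} [RCLike 𝕂] {V : Type*} [NormedAddCommGroup V]
    [InnerProductSpace 𝕂 V] [FiniteDimensional 𝕂 V] (p : OrthLinePair 𝕂 V) :
    Submodule 𝕂 V × Submodule 𝕂 V :=
  (LinearMap.range (p.L.subtype + p.M.subtype ∘ₗ p.a.toLinearMap),
   LinearMap.range (p.M.subtype + p.L.subtype ∘ₗ
      (ContinuousLinearMap.adjoint p.a).toLinearMap))

section Aux

open Module Submodule

variable {𝕂 : Type*} [RCLike 𝕂] {V : Type*} [NormedAddCommGroup V]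
  [InnerProductSpace 𝕂 V] [FiniteDimensional 𝕂 V]

local notation "⟪" x ", " y "⟫" => inner (𝕜 := 𝕂) x y
local notation "conj'" => starRingEnd 𝕂

/-! ### Scalar lemmas -/

lemma aux_norm_eq_norm_of_conj_mul {x y : 𝕂} (h : conj' x * x = conj' y * y) : ‖x‖ = ‖y‖ := by
  have hx := RCLike.conj_mul x
  have hy := RCLike.conj_mul y
  rw [hx, hy] at h
  have h2 : (‖x‖ : ℝ)^2 = ‖y‖^2 := by exact_mod_cast h
  nlinarith [norm_nonneg x, norm_nonneg y]

lemma aux_sq_ne_one_of_norm_lt {t : 𝕂} (ht : ‖t‖ < 1) : (1 : 𝕂) - t^2 ≠ 0 := by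
  intro h
  have ht2 : t^2 = 1 := by linear_combination -h
  have : ‖t^2‖ = 1 := by rw [ht2]; simp
  rw [norm_pow] at this
  nlinarith [norm_nonneg t]

lemma aux_one_sub_ne_zero {t : 𝕂} (ht : ‖t‖ < 1) : (1 : 𝕂) - t ≠ 0 := by
  intro h
  have ht2 : t = 1 := by linear_combination -h
  rw [ht2] at ht
  simp at ht

lemma aux_key_alg {lam lam' c d α β γ δ : 𝕂}
    (hlam : ‖lam‖ < 1) (hlam' : ‖lam'‖ < 1)
    (hA1 : α + lam' * γ = c)
    (hA2 : β + lam' * δ = c * lam)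
    (hB1 : γ + conj' lam' * α = d * conj' lam)
    (hB2 : δ + conj' lam' * β = d)
    (hC1 : conj' α * α + conj' β * β = 1)
    (hC2 : conj' γ * γ + conj' δ * δ = 1)
    (hC3 : conj' α * γ + conj' β * δ = 0) :
    β = 0 ∧ γ = 0 ∧ lam' * δ = lam * α := by
  have hC3' : α * conj' γ + β * conj' δ = 0 := by
    have := congrArg conj' hC3
    simpa [map_add, map_mul, mul_comm] using this
  have E1 : β + lam' * δ = lam * α + lam * lam' * γ := by
    linear_combination hA2 + lam * hA1.symm
  have hB1c : conj' γ + lam' * conj' α = conj' d * lam := by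
    have := congrArg conj' hB1
    simpa [map_add, map_mul] using this
  have hB2c : conj' δ + lam' * conj' β = conj' d := by
    have := congrArg conj' hB2
    simpa [map_add, map_mul] using this
  have E2c : conj' γ + lam' * conj' α = lam * conj' δ + lam * lam' * conj' β := by
    linear_combination hB1c + lam * hB2c.symm
  have S : (conj' α * α) * (conj' γ * γ) = (conj' β * β) * (conj' δ * δ) := by
    have e3 : conj' α * γ = -(conj' β * δ) := by linear_combination hC3
    have e4 : α * conj' γ = -(β * conj' δ) := by linear_combination hC3'
    calc (conj' α * α) * (conj' γ * γ) = (conj' α * γ) * (α * conj' γ) := by ring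
      _ = (-(conj' β * δ)) * (-(β * conj' δ)) := by rw [e3, e4]
      _ = (conj' β * β) * (conj' δ * δ) := by ring
  have R2 : conj' β * β + conj' δ * δ = 1 := by
    have h1 : (1 - conj' β * β) * (1 - conj' δ * δ) = (conj' β * β) * (conj' δ * δ) := by
      calc (1 - conj' β * β) * (1 - conj' δ * δ) = (conj' α * α) * (conj' γ * γ) := by
            rw [show (1:𝕂) - conj' β * β = conj' α * α by linear_combination -hC1,
                show (1:𝕂) - conj' δ * δ = conj' γ * γ by linear_combination -hC2]
        _ = (conj' β * β) * (conj' δ * δ) := S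
    linear_combination -h1
  have hαδ : conj' α * α = conj' δ * δ := by linear_combination hC1 - R2
  have hβγ : conj' γ * γ = conj' β * β := by linear_combination hC2 - R2
  have t1 : conj' α * (α * conj' β + γ * conj' δ) = 0 := by
    calc conj' α * (α * conj' β + γ * conj' δ)
        = conj' β * (conj' α * α - conj' δ * δ) + (conj' α * γ + conj' β * δ) * conj' δ := by ring
      _ = 0 := by rw [hC3, hαδ]; ring
  have t2 : conj' γ * (α * conj' β + γ * conj' δ) = 0 := by
    calc conj' γ * (α * conj' β + γ * conj' δ)
        = conj' δ * (conj' γ * γ - conj' β * β) + (α * conj' γ + β * conj' δ) * conj' β := by ring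
      _ = 0 := by rw [hC3', hβγ]; ring
  have R3 : α * conj' β + γ * conj' δ = 0 := by
    have hsum : conj' α * α + conj' γ * γ = 1 := by linear_combination hC1 + hβγ
    have h7 : (conj' α * α + conj' γ * γ) * (α * conj' β + γ * conj' δ) = 0 := by
      calc (conj' α * α + conj' γ * γ) * (α * conj' β + γ * conj' δ)
          = α * (conj' α * (α * conj' β + γ * conj' δ))
            + γ * (conj' γ * (α * conj' β + γ * conj' δ)) := by ring
        _ = 0 := by rw [t1, t2]; ring
    rwa [hsum, one_mul] at h7
  have F1 : lam' * (conj' β * δ) = lam * (α * conj' β) := by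
    linear_combination (conj' β / 2) * E1 - (γ / 2) * E2c + (1/2 : 𝕂) * hβγ
      + (lam' / 2) * hC3 - (lam / 2) * R3
  have F2 : β * conj' δ = -(lam * lam') * (α * conj' β) := by
    linear_combination (conj' δ / 2) * E1 - (α / 2) * E2c + (lam' / 2) * hαδ
      + (1/2 : 𝕂) * hC3' + (lam * lam' / 2) * R3
  have H : β * conj' δ + lam'^2 * (conj' β * δ) = 0 := by
    linear_combination F2 + lam' * F1
  have Hc : conj' β * δ + (conj' lam')^2 * (β * conj' δ) = 0 := by
    have := congrArg conj' H
    simpa [map_add, map_mul, map_pow] using this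
  have key : (conj' β * δ) * (1 - (lam' * conj' lam')^2) = 0 := by
    linear_combination Hc - (conj' lam')^2 * H
  have hne : (1 : 𝕂) - (lam' * conj' lam')^2 ≠ 0 := by
    apply aux_sq_ne_one_of_norm_lt
    rw [norm_mul, RCLike.norm_conj]
    nlinarith [norm_nonneg lam']
  have hbd : conj' β * δ = 0 := by
    rcases mul_eq_zero.mp key with h | h
    · exact h
    · exact absurd h hne
  have hδ : δ ≠ 0 := by
    intro h0
    subst h0
    have hα0 : α = 0 := by
      have h8 : conj' α * α = 0 := by rw [hαδ]; ring
      rcases mul_eq_zero.mp h8 with h | h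
      · simpa using h
      · exact h
    subst hα0
    have hE1 : β = lam * lam' * γ := by linear_combination E1
    have hnb : ‖β‖ = ‖γ‖ := aux_norm_eq_norm_of_conj_mul (by linear_combination -hβγ)
    have hb1 : ‖β‖ = 1 := by
      have h1 : conj' β * β = 1 := by linear_combination hC1
      have h9 := aux_norm_eq_norm_of_conj_mul (x := β) (y := (1:𝕂)) (by simpa using h1)
      simpa using h9
    have h10 : ‖β‖ = ‖lam‖ * ‖lam'‖ * ‖γ‖ := by rw [hE1]; simp [norm_mul]
    rw [hb1, ← hnb, hb1] at h10
    nlinarith [norm_nonneg lam, norm_nonneg lam']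
  have hβ : β = 0 := by
    rcases mul_eq_zero.mp hbd with h | h
    · simpa using h
    · exact absurd h hδ
  subst hβ
  have hγ : γ = 0 := by
    have h8 : conj' γ * γ = 0 := by rw [hβγ]; ring
    rcases mul_eq_zero.mp h8 with h | h
    · simpa using h
    · exact h
  subst hγ
  refine ⟨rfl, rfl, ?_⟩
  linear_combination E1

/-! ### Vector space lemmas -/

lemma aux_inner_unit_self {u : V} (hu1 : ‖u‖ = 1) : ⟪u, u⟫ = 1 := by
  rw [inner_self_eq_norm_sq_to_K, hu1]; simp

lemma aux_exists_unit_span (L : Submodule 𝕂 V) (hL : finrank 𝕂 L = 1) :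
    ∃ u : V, ‖u‖ = 1 ∧ u ∈ L ∧ L = 𝕂 ∙ u := by
  obtain ⟨⟨v, hv⟩, hv0, hspan⟩ := finrank_eq_one_iff'.mp hL
  have hv0' : v ≠ 0 := by simpa [Subtype.ext_iff] using hv0
  have hnorm : ‖v‖ ≠ 0 := norm_ne_zero_iff.mpr hv0'
  refine ⟨(‖v‖ : 𝕂)⁻¹ • v, ?_, ?_, ?_⟩
  · simp [norm_smul, inv_mul_cancel₀ hnorm]
  · exact L.smul_mem _ hv
  · have h1 : L = 𝕂 ∙ v := by
      apply le_antisymm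
      · intro x hx
        obtain ⟨c, hc⟩ := hspan ⟨x, hx⟩
        exact Submodule.mem_span_singleton.mpr ⟨c, by simpa [Subtype.ext_iff] using hc⟩
      · rw [Submodule.span_singleton_le_iff_mem]; exact hv
    rw [h1]
    have h2 : IsUnit ((‖v‖ : 𝕂)⁻¹) := by simp [isUnit_iff_ne_zero, hnorm]
    rw [span_singleton_smul_eq h2]

lemma aux_exists_coeff {M : Submodule 𝕂 V} {v : V} (hv : v ∈ M) (hMv : M = 𝕂 ∙ v)
    (y : M) : ∃ c : 𝕂, y = c • (⟨v, hv⟩ : M) := by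
  have h1 : (y : V) ∈ 𝕂 ∙ v := hMv ▸ y.2
  obtain ⟨c, hc⟩ := Submodule.mem_span_singleton.mp h1
  exact ⟨c, Subtype.ext hc.symm⟩

lemma aux_norm_eq_of_apply {L M : Submodule 𝕂 V} {u v : V} (hu : u ∈ L) (hv : v ∈ M)
    (hu1 : ‖u‖ = 1) (hv1 : ‖v‖ = 1) (hLu : L = 𝕂 ∙ u)
    (a : L →L[𝕂] M) {lam : 𝕂} (ha : a ⟨u, hu⟩ = lam • (⟨v, hv⟩ : M)) : ‖a‖ = ‖lam‖ := by
  apply le_antisymm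
  · apply ContinuousLinearMap.opNorm_le_bound _ (norm_nonneg lam)
    rintro ⟨x, hx⟩
    obtain ⟨c, hc⟩ := Submodule.mem_span_singleton.mp (hLu ▸ hx)
    have hxc : (⟨x, hx⟩ : L) = c • (⟨u, hu⟩ : L) := Subtype.ext hc.symm
    rw [hxc, map_smul, ha, smul_smul]
    have h1 : ‖(c • (⟨u, hu⟩ : L))‖ = ‖c‖ := by simp [norm_smul, hu1]
    have h2 : ‖(c * lam) • (⟨v, hv⟩ : M)‖ = ‖c‖ * ‖lam‖ := by simp [norm_smul, hv1]
    rw [h1, h2]; ring_nf; exact le_refl _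
  · calc ‖lam‖ = ‖a ⟨u, hu⟩‖ := by rw [ha]; simp [norm_smul, hv1]
       _ ≤ ‖a‖ * ‖(⟨u, hu⟩ : L)‖ := a.le_opNorm _
       _ = ‖a‖ := by simp [hu1]

lemma aux_adjoint_apply_line {L M : Submodule 𝕂 V} {u v : V} (hu : u ∈ L) (hv : v ∈ M)
    (hu1 : ‖u‖ = 1) (hv1 : ‖v‖ = 1) (hLu : L = 𝕂 ∙ u)
    (a : L →L[𝕂] M) {lam : 𝕂} (ha : a ⟨u, hu⟩ = lam • (⟨v, hv⟩ : M)) :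
    ContinuousLinearMap.adjoint a ⟨v, hv⟩ = (conj' lam) • (⟨u, hu⟩ : L) := by
  obtain ⟨μ, hμ⟩ := aux_exists_coeff hu hLu (ContinuousLinearMap.adjoint a ⟨v, hv⟩)
  have h1 : (inner 𝕂 (⟨u, hu⟩ : L) (ContinuousLinearMap.adjoint a ⟨v, hv⟩) : 𝕂)
      = inner 𝕂 (a ⟨u, hu⟩) (⟨v, hv⟩ : M) := ContinuousLinearMap.adjoint_inner_right a _ _
  rw [hμ, ha] at h1
  have h2 : (inner 𝕂 (⟨u, hu⟩ : L) (μ • (⟨u, hu⟩ : L)) : 𝕂) = μ := by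
    rw [inner_smul_right, Submodule.coe_inner, aux_inner_unit_self hu1, mul_one]
  have h3 : (inner 𝕂 (lam • (⟨v, hv⟩ : M)) (⟨v, hv⟩ : M) : 𝕂) = conj' lam := by
    rw [inner_smul_left, Submodule.coe_inner, aux_inner_unit_self hv1, mul_one]
  rw [h2, h3] at h1
  rw [hμ, h1]

lemma aux_range_from_line {L : Submodule 𝕂 V} {u : V} (hu : u ∈ L) (hLu : L = 𝕂 ∙ u)
    (f : L →ₗ[𝕂] V) : LinearMap.range f = 𝕂 ∙ f ⟨u, hu⟩ := by
  have htop : (⊤ : Submodule 𝕂 L) = 𝕂 ∙ (⟨u, hu⟩ : L) := by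
    apply le_antisymm
    · rintro ⟨x, hx⟩ -
      have h1 : x ∈ 𝕂 ∙ u := hLu ▸ hx
      obtain ⟨c, hc⟩ := Submodule.mem_span_singleton.mp h1
      exact Submodule.mem_span_singleton.mpr ⟨c, Subtype.ext hc⟩
    · exact le_top
  rw [LinearMap.range_eq_map, htop, Submodule.map_span, Set.image_singleton]

lemma aux_pi_eq (p : OrthLinePair 𝕂 V) {u v : V} (hu : u ∈ p.L) (hv : v ∈ p.M)
    (hu1 : ‖u‖ = 1) (hv1 : ‖v‖ = 1) (hLu : p.L = 𝕂 ∙ u) (hMv : p.M = 𝕂 ∙ v)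
    {lam : 𝕂} (ha : p.a ⟨u, hu⟩ = lam • (⟨v, hv⟩ : p.M)) :
    p.pi = (𝕂 ∙ (u + lam • v), 𝕂 ∙ (v + (conj' lam) • u)) := by
  have hadj := aux_adjoint_apply_line hu hv hu1 hv1 hLu p.a ha
  unfold OrthLinePair.pi
  have h1 : LinearMap.range (p.L.subtype + p.M.subtype ∘ₗ p.a.toLinearMap)
      = 𝕂 ∙ (u + lam • v) := by
    rw [aux_range_from_line hu hLu]
    congr 1
    simp [ha]
  have h2 : LinearMap.range (p.M.subtype + p.L.subtype ∘ₗ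
      (ContinuousLinearMap.adjoint p.a).toLinearMap) = 𝕂 ∙ (v + (conj' lam) • u) := by
    rw [aux_range_from_line hv hMv]
    congr 1
    simp [hadj]
  rw [h1, h2]

lemma aux_inner_of_orth {L M : Submodule 𝕂 V} (h : M ≤ Lᗮ) {u v : V}
    (hu : u ∈ L) (hv : v ∈ M) : ⟪u, v⟫ = 0 :=
  (Submodule.mem_orthogonal L v).mp (h hv) u hu

lemma aux_span_orth {u v : V} (h : ⟪u, v⟫ = 0) : (𝕂 ∙ v) ≤ (𝕂 ∙ u)ᗮ := by
  rw [Submodule.span_singleton_le_iff_mem, Submodule.mem_orthogonal]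
  intro x hx
  obtain ⟨c, hc⟩ := Submodule.mem_span_singleton.mp hx
  rw [← hc, inner_smul_left, h, mul_zero]

lemma aux_ne_zero_of_unit_inner {u x : V} (hu1 : ‖u‖ = 1) (hx : ⟪u, x⟫ = 1) : x ≠ 0 := by
  intro h
  rw [h, inner_zero_right] at hx
  simp at hx

/-- The graph vector `u + lam • v` is nonzero. -/
lemma aux_graph_ne_zero {u v : V} (hu1 : ‖u‖ = 1) (huv : ⟪u, v⟫ = 0) (lam : 𝕂) :
    u + lam • v ≠ 0 := by
  apply aux_ne_zero_of_unit_inner (𝕂 := 𝕂) hu1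
  rw [inner_add_right, inner_smul_right, huv, aux_inner_unit_self hu1, mul_zero, add_zero]

/-- Data for an `OrthLinePair`: orthonormal spanning vectors and the coefficient of `a`. -/
lemma aux_data (p : OrthLinePair 𝕂 V) :
    ∃ (u v : V) (hu : u ∈ p.L) (hv : v ∈ p.M) (lam : 𝕂),
      ‖u‖ = 1 ∧ ‖v‖ = 1 ∧ p.L = (𝕂 ∙ u) ∧ p.M = (𝕂 ∙ v) ∧ ⟪u, v⟫ = 0 ∧
      p.a ⟨u, hu⟩ = lam • (⟨v, hv⟩ : p.M) ∧ ‖p.a‖ = ‖lam‖ ∧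
      p.pi = (𝕂 ∙ (u + lam • v), 𝕂 ∙ (v + (conj' lam) • u)) := by
  obtain ⟨u, hu1, hu, hLu⟩ := aux_exists_unit_span p.L p.hL
  obtain ⟨v, hv1, hv, hMv⟩ := aux_exists_unit_span p.M p.hM
  obtain ⟨lam, hlam⟩ := aux_exists_coeff hv hMv (p.a ⟨u, hu⟩)
  exact ⟨u, v, hu, hv, lam, hu1, hv1, hLu, hMv,
    aux_inner_of_orth p.orth hu hv, hlam,
    aux_norm_eq_of_apply hu hv hu1 hv1 hLu p.a hlam,
    aux_pi_eq p hu hv hu1 hv1 hLu hMv hlam⟩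

/-- The rank-one continuous linear map sending `u` to `lam • v`. -/
noncomputable def auxLineCLM (L M : Submodule 𝕂 V) {v : V} (u : V) (hv : v ∈ M) (lam : 𝕂) :
    L →L[𝕂] M :=
  LinearMap.toContinuousLinearMap
    { toFun := fun x => (lam * ⟪u, (x : V)⟫) • (⟨v, hv⟩ : M)
      map_add' := by
        intro x y
        simp only [Submodule.coe_add, inner_add_right, mul_add, add_smul]
      map_smul' := by
        intro c x
        simp only [Submodule.coe_smul, inner_smul_right, RingHom.id_apply, smul_smul]
        ring_nf }

lemma auxLineCLM_apply (L M : Submodule 𝕂 V) {u v : V} (hu : u ∈ L) (hv : v ∈ M)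
    (hu1 : ‖u‖ = 1) (lam : 𝕂) :
    auxLineCLM L M u hv lam ⟨u, hu⟩ = lam • (⟨v, hv⟩ : M) := by
  simp [auxLineCLM, LinearMap.toContinuousLinearMap, aux_inner_unit_self hu1, hu1]

lemma aux_orthonormal_expand {u v x : V} (hu1 : ‖u‖ = 1) (hv1 : ‖v‖ = 1)
    (huv : ⟪u, v⟫ = 0) (hx : x ∈ Submodule.span 𝕂 {u, v}) :
    x = ⟪u, x⟫ • u + ⟪v, x⟫ • v := by
  have hvu : ⟪v, u⟫ = 0 := by rw [← inner_conj_symm, huv, map_zero]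
  obtain ⟨a, b, hab⟩ := Submodule.mem_span_pair.mp hx
  have ha : ⟪u, x⟫ = a := by
    rw [← hab]
    simp [inner_add_right, inner_smul_right, aux_inner_unit_self hu1, huv, hu1]
  have hb : ⟪v, x⟫ = b := by
    rw [← hab]
    simp [inner_add_right, inner_smul_right, aux_inner_unit_self hv1, hvu, hv1]
  rw [ha, hb]; exact hab.symm

/-- distinctness of the two graph lines when `‖lam‖ < 1`. -/
lemma aux_graph_ne {u v : V} (hu1 : ‖u‖ = 1) (hv1 : ‖v‖ = 1) (huv : ⟪u, v⟫ = 0)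
    {lam : 𝕂} (hlam : ‖lam‖ < 1) :
    (𝕂 ∙ (u + lam • v)) ≠ (𝕂 ∙ (v + (conj' lam) • u)) := by
  have hvu : ⟪v, u⟫ = 0 := by rw [← inner_conj_symm, huv, map_zero]
  intro h
  have h1 : u + lam • v ∈ (𝕂 ∙ (v + (conj' lam) • u)) := by
    rw [← h]; exact Submodule.mem_span_singleton_self _
  obtain ⟨c, hc⟩ := Submodule.mem_span_singleton.mp h1
  have h2 : ⟪u, c • (v + (conj' lam) • u)⟫ = ⟪u, u + lam • v⟫ := by rw [hc]
  have h3 : ⟪v, c • (v + (conj' lam) • u)⟫ = ⟪v, u + lam • v⟫ := by rw [hc]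
  rw [inner_smul_right, inner_add_right, inner_add_right, inner_smul_right,
    inner_smul_right, huv, aux_inner_unit_self hu1] at h2
  rw [inner_smul_right, inner_add_right, inner_add_right, inner_smul_right,
    inner_smul_right, hvu, aux_inner_unit_self hv1] at h3
  -- h2 : c * (0 + conj' lam * 1) = 1 + lam * 0 ; h3 : c * (1 + conj' lam * 0) = 0 + lam * 1
  have h4 : c * conj' lam = 1 := by linear_combination h2
  have h5 : c = lam := by linear_combination h3
  rw [h5, RCLike.mul_conj] at h4
  have h6 : (‖lam‖ : ℝ)^2 = 1 := by exact_mod_cast h4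
  nlinarith [norm_nonneg lam]

end Aux

section Main

open Module Submodule

variable {𝕂 : Type*} [RCLike 𝕂] {V : Type*} [NormedAddCommGroup V]
  [InnerProductSpace 𝕂 V] [FiniteDimensional 𝕂 V]

local notation "⟪" x ", " y "⟫" => inner (𝕜 := 𝕂) x y
local notation "conj'" => starRingEnd 𝕂

lemma aux_inner_expand {u v : V} (hu1 : ‖u‖ = 1) (hv1 : ‖v‖ = 1) (huv : ⟪u, v⟫ = 0)
    (a b c' d' : 𝕂) :
    ⟪a • u + b • v, c' • u + d' • v⟫ = conj' a * c' + conj' b * d' := by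
  have hvu : ⟪v, u⟫ = 0 := by rw [← inner_conj_symm, huv, map_zero]
  simp only [inner_add_left, inner_add_right, inner_smul_left, inner_smul_right,
    aux_inner_unit_self hu1, aux_inner_unit_self hv1, huv, hvu]
  ring

lemma aux_ext {p q : OrthLinePair 𝕂 V} (hL : p.L = q.L) (hM : p.M = q.M)
    (ha : ∀ (x : V) (hxp : x ∈ p.L) (hxq : x ∈ q.L),
      ((p.a ⟨x, hxp⟩ : V)) = ((q.a ⟨x, hxq⟩ : V))) :
    p = q := by
  obtain ⟨L, M, h1, h2, h3, a⟩ := p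
  obtain ⟨L', M', h1', h2', h3', a'⟩ := q
  dsimp at hL hM ha
  subst hL; subst hM
  have haa : a = a' := by
    ext x
    exact ha x.1 x.2 x.2
  subst haa
  rfl

lemma aux_finrank_pi (p : OrthLinePair 𝕂 V) :
    Module.finrank 𝕂 p.pi.1 = 1 ∧ Module.finrank 𝕂 p.pi.2 = 1 := by
  obtain ⟨u, v, hu, hv, lam, hu1, hv1, hLu, hMv, huv, ha, hnorm, hpieq⟩ := aux_data p
  have hvu : ⟪v, u⟫ = 0 := by rw [← inner_conj_symm, huv, map_zero]
  rw [hpieq]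
  exact ⟨finrank_span_singleton (aux_graph_ne_zero hu1 huv lam),
    finrank_span_singleton (aux_graph_ne_zero hv1 hvu (conj' lam))⟩

lemma aux_adjoint_char (p : OrthLinePair 𝕂 V) (x : p.L) (y : p.M) :
    (inner 𝕂 ((p.a x : V)) ((y : V)) : 𝕂) =
      inner 𝕂 ((x : V)) (((ContinuousLinearMap.adjoint p.a) y : V)) := by
  calc (inner 𝕂 ((p.a x : V)) ((y : V)) : 𝕂)
        = (inner 𝕂 (p.a x) y : 𝕂) := (Submodule.coe_inner _ _ _).symm
      _ = (inner 𝕂 x (ContinuousLinearMap.adjoint p.a y) : 𝕂) :=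
          (ContinuousLinearMap.adjoint_inner_right p.a x y).symm
      _ = inner 𝕂 ((x : V)) (((ContinuousLinearMap.adjoint p.a) y : V)) :=
          Submodule.coe_inner _ _ _

lemma aux_norm_one (p : OrthLinePair 𝕂 V) (hp : ‖p.a‖ = 1) : p.pi.1 = p.pi.2 := by
  
    obtain ⟨u, v, hu, hv, lam, hu1, hv1, hLu, hMv, huv, ha, hnorm, hpieq⟩ := aux_data p
    rw [hnorm] at hp
    rw [hpieq]
    have hll : conj' lam * lam = 1 := by
      rw [RCLike.conj_mul, hp]; simp
    have hvec : v + (conj' lam) • u = (conj' lam) • (u + lam • v) := by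
      rw [smul_add, smul_smul, hll, one_smul, add_comm]
    have hunit : IsUnit (conj' lam) := by
      rw [isUnit_iff_ne_zero]
      intro h
      have : ‖conj' lam‖ = 0 := by rw [h]; simp
      rw [RCLike.norm_conj, hp] at this
      norm_num at this
    simp only []
    rw [hvec, span_singleton_smul_eq hunit]

lemma aux_mapsto : Set.MapsTo (fun p : OrthLinePair 𝕂 V => p.pi) {p | ‖p.a‖ < 1}
    {q : Submodule 𝕂 V × Submodule 𝕂 V |
      Module.finrank 𝕂 q.1 = 1 ∧ Module.finrank 𝕂 q.2 = 1 ∧ q.1 ≠ q.2} := by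
  intro p hp
  simp only [Set.mem_setOf_eq] at hp ⊢
  obtain ⟨u, v, hu, hv, lam, hu1, hv1, hLu, hMv, huv, ha, hnorm, hpieq⟩ := aux_data p
  rw [hnorm] at hp
  refine ⟨(aux_finrank_pi p).1, (aux_finrank_pi p).2, ?_⟩
  rw [hpieq]
  exact aux_graph_ne hu1 hv1 huv hp

lemma aux_injon : Set.InjOn (fun p : OrthLinePair 𝕂 V => p.pi) {p | ‖p.a‖ < 1} := by
  intro p hp p' hp' hpi
  simp only [Set.mem_setOf_eq] at hp hp' hpi
  obtain ⟨u, v, hu, hv, lam, hu1, hv1, hLu, hMv, huv, ha, hnorm, hpieq⟩ := aux_data p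
  obtain ⟨u', v', hu', hv', lam', hu'1, hv'1, hLu', hMv', huv', ha', hnorm', hpieq'⟩ :=
    aux_data p'
  rw [hnorm] at hp; rw [hnorm'] at hp'
  rw [hpieq, hpieq'] at hpi
  have hvu : ⟪v, u⟫ = 0 := by rw [← inner_conj_symm, huv, map_zero]
  have h1 : (𝕂 ∙ (u + lam • v)) = (𝕂 ∙ (u' + lam' • v')) := congrArg Prod.fst hpi
  have h2 : (𝕂 ∙ (v + conj' lam • u)) = (𝕂 ∙ (v' + conj' lam' • u')) :=
    congrArg Prod.snd hpi
  have hm1 : u' + lam' • v' ∈ (𝕂 ∙ (u + lam • v)) := by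
    rw [h1]; exact Submodule.mem_span_singleton_self _
  obtain ⟨c, hc⟩ := Submodule.mem_span_singleton.mp hm1
  have hm2 : v' + conj' lam' • u' ∈ (𝕂 ∙ (v + conj' lam • u)) := by
    rw [h2]; exact Submodule.mem_span_singleton_self _
  obtain ⟨d, hd⟩ := Submodule.mem_span_singleton.mp hm2
  -- u', v' lie in the span of u and v
  have hk1 : (1 : 𝕂) - lam' * conj' lam' ≠ 0 := by
    apply aux_one_sub_ne_zero
    rw [norm_mul, RCLike.norm_conj]
    nlinarith [norm_nonneg lam']
  have hw1 : u + lam • v ∈ Submodule.span 𝕂 {u, v} :=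
    add_mem (Submodule.subset_span (by simp))
      (Submodule.smul_mem _ _ (Submodule.subset_span (by simp)))
  have hz1 : v + conj' lam • u ∈ Submodule.span 𝕂 {u, v} :=
    add_mem (Submodule.subset_span (by simp))
      (Submodule.smul_mem _ _ (Submodule.subset_span (by simp)))
  have hu'span : u' ∈ Submodule.span 𝕂 {u, v} := by
    have h6 : ((1 : 𝕂) - lam' * conj' lam') • u'
        = c • (u + lam • v) - (lam' * d) • (v + conj' lam • u) := by
      rw [mul_smul lam' d, hd, hc]
      module
    have h7 : ((1 : 𝕂) - lam' * conj' lam') • u' ∈ Submodule.span 𝕂 {u, v} := by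
      rw [h6]
      exact sub_mem (Submodule.smul_mem _ _ hw1) (Submodule.smul_mem _ _ hz1)
    have h8 := Submodule.smul_mem (Submodule.span 𝕂 {u, v})
      ((1 : 𝕂) - lam' * conj' lam')⁻¹ h7
    rwa [smul_smul, inv_mul_cancel₀ hk1, one_smul] at h8
  have hv'span : v' ∈ Submodule.span 𝕂 {u, v} := by
    have h6 : ((1 : 𝕂) - lam' * conj' lam') • v'
        = d • (v + conj' lam • u) - (conj' lam' * c) • (u + lam • v) := by
      rw [mul_smul (conj' lam') c, hc, hd]
      module
    have h7 : ((1 : 𝕂) - lam' * conj' lam') • v' ∈ Submodule.span 𝕂 {u, v} := by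
      rw [h6]
      exact sub_mem (Submodule.smul_mem _ _ hz1) (Submodule.smul_mem _ _ hw1)
    have h8 := Submodule.smul_mem (Submodule.span 𝕂 {u, v})
      ((1 : 𝕂) - lam' * conj' lam')⁻¹ h7
    rwa [smul_smul, inv_mul_cancel₀ hk1, one_smul] at h8
  have hu'exp : u' = ⟪u, u'⟫ • u + ⟪v, u'⟫ • v :=
    aux_orthonormal_expand hu1 hv1 huv hu'span
  have hv'exp : v' = ⟪u, v'⟫ • u + ⟪v, v'⟫ • v :=
    aux_orthonormal_expand hu1 hv1 huv hv'span
  -- scalar equations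
  have e_u_c : (⟪u, c • (u + lam • v)⟫ : 𝕂) = c := by
    rw [inner_smul_right, inner_add_right, inner_smul_right, huv,
      aux_inner_unit_self hu1]
    ring
  have e_v_c : (⟪v, c • (u + lam • v)⟫ : 𝕂) = c * lam := by
    rw [inner_smul_right, inner_add_right, inner_smul_right, hvu,
      aux_inner_unit_self hv1]
    ring
  have e_u_d : (⟪u, d • (v + conj' lam • u)⟫ : 𝕂) = d * conj' lam := by
    rw [inner_smul_right, inner_add_right, inner_smul_right, huv,
      aux_inner_unit_self hu1]
    ring
  have e_v_d : (⟪v, d • (v + conj' lam • u)⟫ : 𝕂) = d := by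
    rw [inner_smul_right, inner_add_right, inner_smul_right, hvu,
      aux_inner_unit_self hv1]
    ring
  have hA1 : ⟪u, u'⟫ + lam' * ⟪u, v'⟫ = c := by
    rw [← e_u_c, hc, inner_add_right, inner_smul_right]
  have hA2 : ⟪v, u'⟫ + lam' * ⟪v, v'⟫ = c * lam := by
    rw [← e_v_c, hc, inner_add_right, inner_smul_right]
  have hB1 : ⟪u, v'⟫ + conj' lam' * ⟪u, u'⟫ = d * conj' lam := by
    rw [← e_u_d, hd, inner_add_right, inner_smul_right]
  have hB2 : ⟪v, v'⟫ + conj' lam' * ⟪v, u'⟫ = d := by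
    rw [← e_v_d, hd, inner_add_right, inner_smul_right]
  have hC1 : conj' ⟪u, u'⟫ * ⟪u, u'⟫ + conj' ⟪v, u'⟫ * ⟪v, u'⟫ = 1 := by
    have h9 : (⟪u', u'⟫ : 𝕂) = 1 := aux_inner_unit_self hu'1
    conv at h9 => lhs; rw [hu'exp]
    rw [aux_inner_expand hu1 hv1 huv] at h9
    exact h9
  have hC2 : conj' ⟪u, v'⟫ * ⟪u, v'⟫ + conj' ⟪v, v'⟫ * ⟪v, v'⟫ = 1 := by
    have h9 : (⟪v', v'⟫ : 𝕂) = 1 := aux_inner_unit_self hv'1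
    conv at h9 => lhs; rw [hv'exp]
    rw [aux_inner_expand hu1 hv1 huv] at h9
    exact h9
  have hC3 : conj' ⟪u, u'⟫ * ⟪u, v'⟫ + conj' ⟪v, u'⟫ * ⟪v, v'⟫ = 0 := by
    have h9 : (⟪u', v'⟫ : 𝕂) = 0 := huv'
    conv at h9 => lhs; rw [hu'exp, hv'exp]
    rw [aux_inner_expand hu1 hv1 huv] at h9
    exact h9
  obtain ⟨hβ0, hγ0, hld⟩ := aux_key_alg hp hp' hA1 hA2 hB1 hB2 hC1 hC2 hC3
  set α : 𝕂 := ⟪u, u'⟫ with hαdef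
  set δ : 𝕂 := ⟪v, v'⟫ with hδdef
  have hα1 : conj' α * α = 1 := by
    rw [hβ0] at hC1; simpa using hC1
  have hα0 : α ≠ 0 := by
    intro h; rw [h] at hα1; simp at hα1
  have hδ1 : conj' δ * δ = 1 := by
    rw [hγ0] at hC2; simpa using hC2
  have hδ0 : δ ≠ 0 := by
    intro h; rw [h] at hδ1; simp at hδ1
  have hu'α : u' = α • u := by
    have h20 := hu'exp
    rw [hβ0, zero_smul, add_zero] at h20
    exact h20
  have hv'δ : v' = δ • v := by
    have h20 := hv'exp
    rw [hγ0, zero_smul, zero_add] at h20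
    exact h20
  have hLL : p.L = p'.L := by
    rw [hLu, hLu', hu'α, span_singleton_smul_eq (isUnit_iff_ne_zero.mpr hα0)]
  have hMM : p.M = p'.M := by
    rw [hMv, hMv', hv'δ, span_singleton_smul_eq (isUnit_iff_ne_zero.mpr hδ0)]
  apply aux_ext hLL hMM
  intro x hxp hxq
  obtain ⟨e, he⟩ := Submodule.mem_span_singleton.mp (hLu ▸ hxp)
  have hx1 : (⟨x, hxp⟩ : p.L) = e • (⟨u, hu⟩ : p.L) := Subtype.ext he.symm
  have hx2 : (⟨x, hxq⟩ : p'.L) = (e * α⁻¹) • (⟨u', hu'⟩ : p'.L) := by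
    apply Subtype.ext
    show x = (e * α⁻¹) • u'
    rw [hu'α, smul_smul, mul_assoc, inv_mul_cancel₀ hα0, mul_one, he]
  rw [hx1, map_smul, ha, hx2, map_smul, ha']
  simp only [SetLike.val_smul, smul_smul]
  rw [hv'δ, smul_smul]
  congr 1
  field_simp
  linear_combination e * hld.symm

lemma aux_surjon : Set.SurjOn (fun p : OrthLinePair 𝕂 V => p.pi) {p | ‖p.a‖ < 1}
    {q : Submodule 𝕂 V × Submodule 𝕂 V |
      Module.finrank 𝕂 q.1 = 1 ∧ Module.finrank 𝕂 q.2 = 1 ∧ q.1 ≠ q.2} := by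
  rintro ⟨A, B⟩ ⟨hA, hB, hAB⟩
  simp only [Set.mem_setOf_eq] at hAB ⊢
  obtain ⟨w, hw1, hw, hAw⟩ := aux_exists_unit_span A hA
  obtain ⟨z, hz1, hz, hBz⟩ := aux_exists_unit_span B hB
  have hww : (⟪w, w⟫ : 𝕂) = 1 := aux_inner_unit_self hw1
  have hzz : (⟪z, z⟫ : 𝕂) = 1 := aux_inner_unit_self hz1
  have hzw : (⟪z, w⟫ : 𝕂) = conj' ⟪w, z⟫ := by rw [← inner_conj_symm]
  have hs1 : ‖(⟪w, z⟫ : 𝕂)‖ < 1 := by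
    have hle : ‖(⟪w, z⟫ : 𝕂)‖ ≤ 1 := by
      simpa [hw1, hz1] using norm_inner_le_norm (𝕜 := 𝕂) w z
    refine lt_of_le_of_ne hle ?_
    intro h
    have hw0 : w ≠ 0 := by intro h0; rw [h0] at hw1; simp at hw1
    have hz0 : z ≠ 0 := by intro h0; rw [h0] at hz1; simp at hz1
    obtain ⟨r0, hr0, hzr⟩ := (norm_inner_eq_norm_iff hw0 hz0).mp
      (by rw [h, hw1, hz1]; ring)
    apply hAB
    rw [hAw, hBz, hzr, span_singleton_smul_eq (isUnit_iff_ne_zero.mpr hr0)]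
  set s : 𝕂 := ⟪w, z⟫ with hsdef
  have hr2 : (Real.sqrt (1 - ‖s‖^2))^2 = 1 - ‖s‖^2 :=
    Real.sq_sqrt (by nlinarith [norm_nonneg s])
  set r : ℝ := Real.sqrt (1 - ‖s‖^2) with hrdef
  have hr_pos : 0 < r := Real.sqrt_pos.mpr (by nlinarith [norm_nonneg s])
  have hr_le : r ≤ 1 := by nlinarith
  set lam : 𝕂 := ((1 - r : ℝ) : 𝕂) / s with hlamdef
  have hlam : ‖lam‖ < 1 := by
    by_cases hs0 : s = 0
    · rw [hlamdef, hs0]; simp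
    · have hs0' : 0 < ‖s‖ := norm_pos_iff.mpr hs0
      rw [hlamdef, norm_div, RCLike.norm_ofReal, abs_of_nonneg (by linarith)]
      rw [div_lt_one hs0']
      nlinarith
  have hcs : conj' s * s = ((1 - r^2 : ℝ) : 𝕂) := by
    rw [RCLike.conj_mul, show (1 - r^2 : ℝ) = ‖s‖^2 by linarith]
    push_cast; ring
  have hquad : conj' s - 2 * lam + lam^2 * s = 0 := by
    by_cases hs0 : s = 0
    · rw [hlamdef, hs0]; simp [map_zero]
    · have hlams : lam * s = ((1 - r : ℝ) : 𝕂) := by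
        rw [hlamdef]; field_simp
      have h12 : (conj' s) * s - 2*(lam*s) + (lam*s)^2 = 0 := by
        rw [hcs, hlams]; push_cast; ring
      have h13 : (conj' s - 2*lam + lam^2*s) * s = 0 := by linear_combination h12
      rcases mul_eq_zero.mp h13 with h | h
      · exact h
      · exact absurd h hs0
  have hquadc : s - 2 * conj' lam + (conj' lam)^2 * conj' s = 0 := by
    have h14 := congrArg conj' hquad
    simpa [map_add, map_sub, map_mul, map_pow, map_ofNat] using h14
  -- the orthonormal pair
  have hinner00 : (⟪w - lam • z, z - conj' lam • w⟫ : 𝕂) = 0 := by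
    simp only [inner_sub_left, inner_sub_right, inner_smul_left, inner_smul_right,
      hww, hzz, hzw, RCLike.conj_conj]
    linear_combination hquadc
  have hnn : (⟪w - lam • z, w - lam • z⟫ : 𝕂) = ⟪z - conj' lam • w, z - conj' lam • w⟫ := by
    simp only [inner_sub_left, inner_sub_right, inner_smul_left, inner_smul_right,
      hww, hzz, hzw, RCLike.conj_conj]
    ring
  have hu00 : w - lam • z ≠ 0 := by
    intro h
    have h15 : w = lam • z := by
      have := sub_eq_zero.mp h; exact this
    have h16 : ‖w‖ = ‖lam‖ * ‖z‖ := by rw [h15, norm_smul]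
    rw [hw1, hz1, mul_one] at h16
    rw [← h16] at hlam
    norm_num at hlam
  have hN_pos : 0 < ‖w - lam • z‖ := norm_pos_iff.mpr hu00
  have hv0N : ‖z - conj' lam • w‖ = ‖w - lam • z‖ := by
    have h14 : ((‖w - lam • z‖ : ℝ) : 𝕂)^2 = ((‖z - conj' lam • w‖ : ℝ) : 𝕂)^2 := by
      rw [← inner_self_eq_norm_sq_to_K, ← inner_self_eq_norm_sq_to_K, hnn]
    have h15 : (‖w - lam • z‖ : ℝ)^2 = (‖z - conj' lam • w‖ : ℝ)^2 := by exact_mod_cast h14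
    nlinarith [norm_nonneg (w - lam • z), norm_nonneg (z - conj' lam • w)]
  set N : ℝ := ‖w - lam • z‖ with hNdef
  set u : V := ((N : ℝ) : 𝕂)⁻¹ • (w - lam • z) with hudef
  set v : V := ((N : ℝ) : 𝕂)⁻¹ • (z - conj' lam • w) with hvdef
  have hNK : ((N : ℝ) : 𝕂) ≠ 0 := by
    simp only [ne_eq, RCLike.ofReal_eq_zero]
    exact ne_of_gt hN_pos
  have hu1 : ‖u‖ = 1 := by
    rw [hudef, norm_smul, norm_inv, RCLike.norm_ofReal, abs_of_pos hN_pos, ← hNdef,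
      inv_mul_cancel₀ (ne_of_gt hN_pos)]
  have hv1 : ‖v‖ = 1 := by
    rw [hvdef, norm_smul, norm_inv, RCLike.norm_ofReal, abs_of_pos hN_pos, hv0N,
      inv_mul_cancel₀ (ne_of_gt hN_pos)]
  have huv : (⟪u, v⟫ : 𝕂) = 0 := by
    rw [hudef, hvdef, inner_smul_left, inner_smul_right, hinner00]
    ring
  have hune : u ≠ 0 := by intro h; rw [h] at hu1; simp at hu1
  have hvne : v ≠ 0 := by intro h; rw [h] at hv1; simp at hv1
  have humem : u ∈ (𝕂 ∙ u) := Submodule.mem_span_singleton_self u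
  have hvmem : v ∈ (𝕂 ∙ v) := Submodule.mem_span_singleton_self v
  set P : OrthLinePair 𝕂 V :=
    ⟨𝕂 ∙ u, 𝕂 ∙ v, finrank_span_singleton hune, finrank_span_singleton hvne,
      aux_span_orth huv, auxLineCLM (𝕂 ∙ u) (𝕂 ∙ v) u hvmem lam⟩ with hPdef
  have haP : P.a ⟨u, humem⟩ = lam • (⟨v, hvmem⟩ : P.M) :=
    auxLineCLM_apply _ _ humem hvmem hu1 lam
  have hPnorm : ‖P.a‖ = ‖lam‖ :=
    aux_norm_eq_of_apply humem hvmem hu1 hv1 rfl P.a haP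
  refine ⟨P, ?_, ?_⟩
  · simp only [Set.mem_setOf_eq, hPnorm]; exact hlam
  · show P.pi = (A, B)
    rw [aux_pi_eq P humem hvmem hu1 hv1 rfl rfl haP]
    have hk2 : ((N : ℝ) : 𝕂)⁻¹ * (1 - lam * conj' lam) ≠ 0 := by
      apply mul_ne_zero (inv_ne_zero hNK)
      apply aux_one_sub_ne_zero
      rw [norm_mul, RCLike.norm_conj]
      nlinarith [norm_nonneg lam]
    have key1 : u + lam • v = (((N : ℝ) : 𝕂)⁻¹ * (1 - lam * conj' lam)) • w := by
      rw [hudef, hvdef]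
      module
    have key2 : v + conj' lam • u = (((N : ℝ) : 𝕂)⁻¹ * (1 - lam * conj' lam)) • z := by
      rw [hudef, hvdef]
      module
    rw [key1, key2, span_singleton_smul_eq (isUnit_iff_ne_zero.mpr hk2),
      span_singleton_smul_eq (isUnit_iff_ne_zero.mpr hk2), ← hAw, ← hBz]

end Main

/-- Lemma 3.1: `π` identifies the open disc bundle of `α̃` over the space of
orthogonal pairs of lines with the complement of the diagonal in
`P_𝕂(V) × P_𝕂(V)`.  The adjoint `a*` used in `OrthLinePair.pi` is characterized by
`⟨a x, y⟩ = ⟨x, a* y⟩` (first conjunct). -/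
theorem stmt1 {𝕂 : Type*} [RCLike 𝕂] {V : Type*} [NormedAddCommGroup V]
    [InnerProductSpace 𝕂 V] [FiniteDimensional 𝕂 V] {n : ℕ} (hn : 1 ≤ n)
    (hdim : Module.finrank 𝕂 V = n + 1) :
    (∀ p : OrthLinePair 𝕂 V, ∀ (x : p.L) (y : p.M),
        (inner 𝕂 ((p.a x : V)) ((y : V)) : 𝕂) =
          inner 𝕂 ((x : V)) (((ContinuousLinearMap.adjoint p.a) y : V))) ∧
    (∀ p : OrthLinePair 𝕂 V, ‖p.a‖ ≤ 1 →
        Module.finrank 𝕂 p.pi.1 = 1 ∧ Module.finrank 𝕂 p.pi.2 = 1) ∧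
    (∀ p : OrthLinePair 𝕂 V, ‖p.a‖ = 1 → p.pi.1 = p.pi.2) ∧
    Set.BijOn (fun p : OrthLinePair 𝕂 V => p.pi) {p | ‖p.a‖ < 1}
      {q : Submodule 𝕂 V × Submodule 𝕂 V |
        Module.finrank 𝕂 q.1 = 1 ∧ Module.finrank 𝕂 q.2 = 1 ∧ q.1 ≠ q.2} :=
  ⟨aux_adjoint_char, fun p _ => aux_finrank_pi p, aux_norm_one,
    aux_mapsto, aux_injon, aux_surjon⟩
end

section
/- Let V be a finite-dimensional real inner product space with dim V = n+1 ≥ 2, B a topological space and k ≥ 1. Suppose s_1, …, s_k : B × S(V) → V are continuous maps such that ⟨s_i(b,u), u⟩ = 0 for all (b,u) ∈ B × S(V) and all i, and for every (b,u) at least one s_i(b,u) ≠ 0. Then there exist open sets V_1, …, V_k covering B × S(V) and continuous maps ψ_i : [−1,1] × V_i → S(V) such that ψ_i(1,(b,u)) = u and ψ_i(−1,(b,u)) = −u for all (b,u) ∈ V_i. -/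
open scoped RealInnerProductSpace

/-- Theorem 2.2, implication (1) ⟹ (2), for a trivialized bundle: a nowhere-zero
section of `kζ̃` yields an open cover of `B × S(V)` with fibrewise paths from `u`
to `-u`. -/
theorem stmt2 {V : Type*} [NormedAddCommGroup V] [InnerProductSpace ℝ V]
    [FiniteDimensional ℝ V] {n : ℕ} (hn : 1 ≤ n) (hdim : Module.finrank ℝ V = n + 1)
    {B : Type*} [TopologicalSpace B] {k : ℕ} (hk : 1 ≤ k)
    (s : Fin k → B × Metric.sphere (0 : V) 1 → V)
    (hscont : ∀ i, Continuous (s i))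
    (hsorth : ∀ i p, ⟪s i p, ((p.2 : Metric.sphere (0 : V) 1) : V)⟫ = 0)
    (hsnz : ∀ p, ∃ i, s i p ≠ 0) :
    ∃ (U : Fin k → Set (B × Metric.sphere (0 : V) 1))
      (ψ : Fin k → ℝ × (B × Metric.sphere (0 : V) 1) → Metric.sphere (0 : V) 1),
      (∀ i, IsOpen (U i)) ∧
      (⋃ i, U i) = Set.univ ∧
      (∀ i, ContinuousOn (ψ i) (Set.Icc (-1 : ℝ) 1 ×ˢ U i)) ∧
      (∀ i, ∀ p ∈ U i, ψ i (1, p) = p.2) ∧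
      (∀ i, ∀ p ∈ U i, ψ i (-1, p) = -p.2) := by
  classical
  set θ : ℝ → ℝ := fun t => Real.pi * (1 - t) / 2 with hθ
  set g : Fin k → ℝ × (B × Metric.sphere (0 : V) 1) → V := fun i x =>
    Real.cos (θ x.1) • ((x.2.2 : V)) +
      Real.sin (θ x.1) • (‖s i x.2‖⁻¹ • s i x.2) with hg
  set U : Fin k → Set (B × Metric.sphere (0 : V) 1) := fun i => {p | s i p ≠ 0} with hU
  -- key norm computation
  have hmem : ∀ i x, x.2 ∈ U i → g i x ∈ Metric.sphere (0 : V) 1 := by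
    intro i x hx
    have hs : s i x.2 ≠ 0 := hx
    set u : V := (x.2.2 : V)
    set w : V := ‖s i x.2‖⁻¹ • s i x.2 with hw
    have hu : ‖u‖ = 1 := by
      have := x.2.2.2
      simpa [u] using this
    have hwnorm : ‖w‖ = 1 := by
      rw [hw, norm_smul, norm_inv, norm_norm]
      field_simp [norm_ne_zero_iff.mpr hs]
    have huw : ⟪u, w⟫ = 0 := by
      rw [hw, real_inner_smul_right]
      have : ⟪u, s i x.2⟫ = 0 := by
        rw [real_inner_comm]; exact hsorth i x.2
      rw [this, mul_zero]
    have hinner : ⟪Real.cos (θ x.1) • u, Real.sin (θ x.1) • w⟫ = 0 := by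
      rw [real_inner_smul_left, real_inner_smul_right, huw]
      ring
    have hnormsq : ‖g i x‖ ^ 2 = 1 := by
      have := norm_add_sq_real (Real.cos (θ x.1) • u) (Real.sin (θ x.1) • w)
      show ‖Real.cos (θ x.1) • u + Real.sin (θ x.1) • w‖ ^ 2 = 1
      simp only [this, hinner, mul_zero, add_zero, norm_smul, Real.norm_eq_abs,
        hu, hwnorm, mul_one]
      rw [sq_abs, sq_abs]
      exact Real.cos_sq_add_sin_sq (θ x.1)
    have : ‖g i x‖ = 1 := by
      nlinarith [norm_nonneg (g i x), hnormsq]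
    simpa [Metric.mem_sphere, dist_eq_norm] using this
  set ψ : Fin k → ℝ × (B × Metric.sphere (0 : V) 1) → Metric.sphere (0 : V) 1 :=
    fun i x => if h : g i x ∈ Metric.sphere (0 : V) 1 then ⟨g i x, h⟩ else x.2.2 with hψ
  refine ⟨U, ψ, ?_, ?_, ?_, ?_, ?_⟩
  · intro i
    exact isOpen_compl_iff.mpr (IsClosed.preimage (hscont i) isClosed_singleton)
  · ext p
    simp only [Set.mem_iUnion, Set.mem_univ, iff_true]
    obtain ⟨i, hi⟩ := hsnz p
    exact ⟨i, hi⟩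
  · intro i
    have hgcont : ContinuousOn (g i) (Set.Icc (-1 : ℝ) 1 ×ˢ U i) := by
      apply ContinuousOn.add
      · apply ContinuousOn.smul
        · exact (Real.continuous_cos.comp (by fun_prop)).continuousOn
        · exact (continuous_subtype_val.comp (continuous_snd.comp continuous_snd)).continuousOn
      · apply ContinuousOn.smul
        · exact (Real.continuous_sin.comp (by fun_prop)).continuousOn
        · apply ContinuousOn.smul
          · apply ContinuousOn.inv₀
            · exact (continuous_norm.comp ((hscont i).comp continuous_snd)).continuousOn
            · intro x hx
              exact norm_ne_zero_iff.mpr hx.2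
          · exact ((hscont i).comp continuous_snd).continuousOn
    have : ContinuousOn (fun x => (ψ i x : V)) (Set.Icc (-1 : ℝ) 1 ×ˢ U i) := by
      apply hgcont.congr
      intro x hx
      simp only [hψ, dif_pos (hmem i x hx.2)]
    rw [Topology.IsInducing.subtypeVal.continuousOn_iff]
    exact this
  · intro i p hp
    have h1 : θ 1 = 0 := by simp [hθ]
    have hgv : g i (1, p) = (p.2 : V) := by
      simp [hg, h1]
    have hm : g i (1, p) ∈ Metric.sphere (0 : V) 1 := hmem i (1, p) hp
    simp only [hψ, dif_pos hm]
    exact Subtype.ext hgv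
  · intro i p hp
    have h1 : θ (-1) = Real.pi := by
      rw [hθ]; ring_nf
    have hgv : g i (-1, p) = -(p.2 : V) := by
      simp [hg, h1]
    have hm : g i (-1, p) ∈ Metric.sphere (0 : V) 1 := hmem i (-1, p) hp
    simp only [hψ, dif_pos hm]
    exact Subtype.ext (by simpa using hgv)
end

section
/- Let V be a finite-dimensional real inner product space with dim V = n+1 ≥ 2, B a topological space and k ≥ 1. Suppose s_1, …, s_k : B × S(V) → V are continuous maps such that ⟨s_i(b,u), u⟩ = 0 for all (b,u) and all i, and for every (b,u) at least one s_i(b,u) ≠ 0. Then there exist open sets U_0, U_1, …, U_k covering B × S(V) × S(V) and continuous maps φ_i : [−1,1] × U_i → S(V) such that φ_i(1,(b,u,v)) = u and φ_i(−1,(b,u,v)) = v for all (b,u,v) ∈ U_i, and φ_i(t,(b,u,u)) = u for all t ∈ [−1,1] whenever (b,u,u) ∈ U_i. (One may take U_0 = {(b,u,v) : v ≠ −u}, with motion planner the shortest-geodesic map, and U_i = {(b,u,v) : s_i(b,u) ≠ 0, ⟨u,v⟩ < 0} with motion planner the geodesic through s_i(b,u)/‖s_i(b,u)‖.) -/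
open scoped RealInnerProductSpace

open Classical in
noncomputable def nsph {V : Type*} [NormedAddCommGroup V] [InnerProductSpace ℝ V]
    (x : V) (u : Metric.sphere (0 : V) 1) : Metric.sphere (0 : V) 1 :=
  if h : x = 0 then u else
    ⟨‖x‖⁻¹ • x, by
      simp [mem_sphere_zero_iff_norm, norm_smul,
        inv_mul_cancel₀ (norm_ne_zero_iff.2 h)]⟩

lemma nsph_coe {V : Type*} [NormedAddCommGroup V] [InnerProductSpace ℝ V]
    {x : V} (h : x ≠ 0) (u : Metric.sphere (0 : V) 1) :
    (nsph x u : V) = ‖x‖⁻¹ • x := by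
  simp [nsph, h]

lemma nsph_unit {V : Type*} [NormedAddCommGroup V] [InnerProductSpace ℝ V]
    (u v : Metric.sphere (0 : V) 1) : nsph (u : V) v = u := by
  have hu : ‖(u : V)‖ = 1 := mem_sphere_zero_iff_norm.1 u.2
  have h : (u : V) ≠ 0 := by
    intro h0; rw [h0] at hu; simp at hu
  ext
  rw [nsph_coe h, hu]
  simp

lemma lemA {V : Type*} [NormedAddCommGroup V] [NormedSpace ℝ V]
    {t : ℝ} (ht : t ∈ Set.Icc (-1 : ℝ) 1) {u v : V}
    (hu : ‖u‖ = 1) (hv : ‖v‖ = 1) (hvu : v ≠ -u) :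
    ((1 + t) / 2) • u + ((1 - t) / 2) • v ≠ 0 := by
  intro h
  set a : ℝ := (1 + t) / 2 with ha
  set b : ℝ := (1 - t) / 2 with hb
  have ha0 : 0 ≤ a := by dsimp [a]; linarith [ht.1]
  have hb0 : 0 ≤ b := by dsimp [b]; linarith [ht.2]
  have hnorm : a = b := by
    have h' : a • u = b • (-v) := by
      rw [smul_neg]; linear_combination (norm := module) h
    have h2 := congrArg norm h'
    rwa [norm_smul, norm_smul, norm_neg, hu, hv, mul_one, mul_one,
      Real.norm_eq_abs, Real.norm_eq_abs,
      abs_of_nonneg ha0, abs_of_nonneg hb0] at h2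
  have hab : a = 1/2 := by dsimp [a, b] at hnorm ⊢; linarith
  have hb2 : b = 1/2 := by rw [← hnorm, hab]
  apply hvu
  rw [hab, hb2] at h
  have h3 : u + v = 0 := by
    apply smul_right_injective V (two_ne_zero (α := ℝ))
    show (2:ℝ) • (u + v) = (2:ℝ) • (0:V)
    rw [smul_zero, smul_add]
    linear_combination (norm := module) (4:ℝ) • h
  linear_combination (norm := module) h3

lemma lemB {V : Type*} [NormedAddCommGroup V] [InnerProductSpace ℝ V]
    {t : ℝ} {u v w : V} (hw : w ≠ 0) (hwu : ⟪w, u⟫ = 0)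
    (huv : ⟪u, v⟫ < 0) (hu : ‖u‖ = 1) :
    max t 0 • u + (1 - |t|) • w + max (-t) 0 • v ≠ 0 := by
  intro h
  have hin := congrArg (fun x => ⟪x, u⟫) h
  simp only [inner_add_left, real_inner_smul_left, inner_zero_left, hwu,
    real_inner_self_eq_norm_sq, hu] at hin
  rcases le_or_gt 0 t with h0 | h0
  · have h1 : max t 0 = t := max_eq_left h0
    have h2 : max (-t) 0 = 0 := max_eq_right (by linarith)
    rw [h1, h2] at hin
    norm_num at hin
    have ht0 : t = 0 := by linarith
    rw [h1, h2, ht0] at h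
    norm_num at h
    exact hw h
  · have h1 : max t 0 = 0 := max_eq_right (le_of_lt h0)
    have h2 : max (-t) 0 = -t := max_eq_left (by linarith)
    rw [h1, h2] at hin
    norm_num at hin
    have hvu : ⟪v, u⟫ < 0 := by rwa [real_inner_comm]
    rcases hin with h3 | h3 <;> linarith

/-- Theorem 2.2, direct implication (1) ⟹ (3) (Remark 2.3), for a trivialized
bundle: a nowhere-zero section of `kζ̃` yields `k+1` fibrewise motion planners
fixing the diagonal. -/
theorem stmt4 {V : Type*} [NormedAddCommGroup V] [InnerProductSpace ℝ V]
    [FiniteDimensional ℝ V] {n : ℕ} (hn : 1 ≤ n) (hdim : Module.finrank ℝ V = n + 1)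
    {B : Type*} [TopologicalSpace B] {k : ℕ} (hk : 1 ≤ k)
    (s : Fin k → B × Metric.sphere (0 : V) 1 → V)
    (hscont : ∀ i, Continuous (s i))
    (hsorth : ∀ i p, ⟪s i p, (p.2 : V)⟫ = 0)
    (hsnz : ∀ p, ∃ i, s i p ≠ 0) :
    ∃ (U : Fin (k + 1) → Set (B × Metric.sphere (0 : V) 1 × Metric.sphere (0 : V) 1))
      (φ : Fin (k + 1) → ℝ × (B × Metric.sphere (0 : V) 1 × Metric.sphere (0 : V) 1) →
        Metric.sphere (0 : V) 1),
      (∀ i, IsOpen (U i)) ∧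
      (⋃ i, U i) = Set.univ ∧
      (∀ i, ContinuousOn (φ i) (Set.Icc (-1 : ℝ) 1 ×ˢ U i)) ∧
      (∀ i, ∀ p ∈ U i, φ i (1, p) = p.2.1) ∧
      (∀ i, ∀ p ∈ U i, φ i (-1, p) = p.2.2) ∧
      (∀ i, ∀ p ∈ U i, p.2.1 = p.2.2 → ∀ t ∈ Set.Icc (-1 : ℝ) 1, φ i (t, p) = p.2.1) := by
  classical
  set U0 : Set (B × Metric.sphere (0:V) 1 × Metric.sphere (0:V) 1) :=
    {p | (p.2.2 : V) ≠ -(p.2.1 : V)} with hU0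
  set Uc : Fin k → Set (B × Metric.sphere (0:V) 1 × Metric.sphere (0:V) 1) :=
    fun i => {p | s i (p.1, p.2.1) ≠ 0 ∧ ⟪(p.2.1 : V), (p.2.2 : V)⟫ < 0} with hUc
  set g0 : ℝ × (B × Metric.sphere (0:V) 1 × Metric.sphere (0:V) 1) → V :=
    fun q => ((1 + q.1) / 2) • (q.2.2.1 : V) + ((1 - q.1) / 2) • (q.2.2.2 : V) with hg0
  set gc : Fin k → ℝ × (B × Metric.sphere (0:V) 1 × Metric.sphere (0:V) 1) → V :=
    fun i q => max q.1 0 • (q.2.2.1 : V) + (1 - |q.1|) • s i (q.2.1, q.2.2.1)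
      + max (-q.1) 0 • (q.2.2.2 : V) with hgc
  have unorm : ∀ u : Metric.sphere (0:V) 1, ‖(u : V)‖ = 1 :=
    fun u => mem_sphere_zero_iff_norm.1 u.2
  have hg0ne : ∀ q ∈ Set.Icc (-1 : ℝ) 1 ×ˢ U0, g0 q ≠ 0 := by
    rintro ⟨t, p⟩ ⟨ht, hp⟩
    exact lemA ht (unorm _) (unorm _) hp
  have hgcne : ∀ i, ∀ q ∈ Set.Icc (-1 : ℝ) 1 ×ˢ Uc i, gc i q ≠ 0 := by
    rintro i ⟨t, p⟩ ⟨ht, hp⟩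
    exact lemB hp.1 (hsorth i (p.1, p.2.1)) hp.2 (unorm _)
  have hsicont : ∀ i, Continuous
      (fun q : ℝ × (B × Metric.sphere (0:V) 1 × Metric.sphere (0:V) 1) =>
        s i (q.2.1, q.2.2.1)) := by
    intro i
    exact (hscont i).comp (by fun_prop)
  refine ⟨Fin.cases U0 Uc, Fin.cases (fun q => nsph (g0 q) q.2.2.1)
    (fun i q => nsph (gc i q) q.2.2.1), ?_, ?_, ?_, ?_, ?_, ?_⟩
  · -- open
    intro i
    induction i using Fin.cases with
    | zero =>
      simp only [Fin.cases_zero]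
      exact isOpen_ne_fun (by fun_prop) (by fun_prop)
    | succ i =>
      simp only [Fin.cases_succ]
      have hs2 : Continuous
          (fun p : B × Metric.sphere (0:V) 1 × Metric.sphere (0:V) 1 =>
            s i (p.1, p.2.1)) := (hscont i).comp (by fun_prop)
      have hinn : Continuous
          (fun p : B × Metric.sphere (0:V) 1 × Metric.sphere (0:V) 1 =>
            (⟪(p.2.1 : V), (p.2.2 : V)⟫ : ℝ)) :=
        Continuous.inner (by fun_prop) (by fun_prop)
      exact (isOpen_ne_fun hs2 continuous_const).inter
        (isOpen_lt hinn continuous_const)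
  · -- cover
    ext p
    simp only [Set.mem_iUnion, Set.mem_univ, iff_true]
    by_cases h : (p.2.2 : V) = -(p.2.1 : V)
    · obtain ⟨i, hi⟩ := hsnz (p.1, p.2.1)
      refine ⟨i.succ, ?_⟩
      simp only [Fin.cases_succ]
      refine ⟨hi, ?_⟩
      rw [h, inner_neg_right, real_inner_self_eq_norm_sq, unorm]
      norm_num
    · exact ⟨0, h⟩
  · -- continuity
    intro i
    induction i using Fin.cases with
    | zero =>
      simp only [Fin.cases_zero]
      have hg : Continuous g0 := by fun_prop
      have hcont : ContinuousOn (fun q => ‖g0 q‖⁻¹ • g0 q) (Set.Icc (-1:ℝ) 1 ×ˢ U0) :=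
        ((hg.continuousOn.norm).inv₀ (fun q hq => norm_ne_zero_iff.2 (hg0ne q hq))).smul
          hg.continuousOn
      rw [Topology.IsInducing.continuousOn_iff Topology.IsInducing.subtypeVal]
      exact hcont.congr fun q hq => by
        simp only [Function.comp]; rw [nsph_coe (hg0ne q hq)]
    | succ i =>
      simp only [Fin.cases_succ]
      have hg : Continuous (gc i) := by
        rw [hgc]
        apply Continuous.add
        apply Continuous.add
        · fun_prop
        · exact (continuous_const.sub continuous_fst.abs).smul (hsicont i)
        · fun_prop
      have hcont : ContinuousOn (fun q => ‖gc i q‖⁻¹ • gc i q)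
          (Set.Icc (-1:ℝ) 1 ×ˢ Uc i) :=
        ((hg.continuousOn.norm).inv₀ (fun q hq => norm_ne_zero_iff.2 (hgcne i q hq))).smul
          hg.continuousOn
      rw [Topology.IsInducing.continuousOn_iff Topology.IsInducing.subtypeVal]
      exact hcont.congr fun q hq => by
        simp only [Function.comp]; rw [nsph_coe (hgcne i q hq)]
  · -- t = 1
    intro i
    induction i using Fin.cases with
    | zero =>
      intro p hp
      simp only [Fin.cases_zero]
      have h1 : g0 (1, p) = (p.2.1 : V) := by simp [hg0]
      rw [h1, nsph_unit]
    | succ i =>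
      intro p hp
      simp only [Fin.cases_succ]
      have h1 : gc i (1, p) = (p.2.1 : V) := by simp [hgc]
      rw [h1, nsph_unit]
  · -- t = -1
    intro i
    induction i using Fin.cases with
    | zero =>
      intro p hp
      simp only [Fin.cases_zero]
      have h1 : g0 (-1, p) = (p.2.2 : V) := by simp [hg0]
      rw [h1, nsph_unit]
    | succ i =>
      intro p hp
      simp only [Fin.cases_succ]
      have h1 : gc i (-1, p) = (p.2.2 : V) := by simp [hgc]
      rw [h1, nsph_unit]
  · -- diagonal
    intro i
    induction i using Fin.cases with
    | zero =>
      intro p hp hdiag t ht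
      simp only [Fin.cases_zero]
      have h1 : g0 (t, p) = (p.2.1 : V) := by
        simp only [hg0, ← hdiag]
        rw [← add_smul]
        have : (1 + t) / 2 + (1 - t) / 2 = 1 := by ring
        rw [this, one_smul]
      rw [h1, nsph_unit]
    | succ i =>
      intro p hp hdiag t ht
      exfalso
      simp only [Fin.cases_succ, hUc, Set.mem_setOf_eq] at hp
      rw [hdiag] at hp
      have h2 := hp.2
      rw [real_inner_self_eq_norm_sq, unorm] at h2
      norm_num at h2
end

section
/- Let V be a finite-dimensional real inner product space with dim V = n+1 ≥ 2, B a topological space and k ≥ 1. Suppose s_1, …, s_k : B × S(V) → V are continuous maps such that ⟨s_i(b,u), u⟩ = 0, s_i(b,−u) = s_i(b,u) for all (b,u) and all i, and for every (b,u) at least one s_i(b,u) ≠ 0. Then there exist open sets V_1, …, V_k covering B × S(V), each invariant under the involution (b,u) ↦ (b,−u), and continuous maps ψ_i : [−1,1] × V_i → S(V) such that ψ_i(1,(b,u)) = u and ψ_i(−t,(b,−u)) = ψ_i(t,(b,u)) for all (b,u) ∈ V_i and t ∈ [−1,1]. -/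
open scoped RealInnerProductSpace
open Real

/-- Theorem 2.9 (symmetrized version), implication (1) ⟹ (2), for a trivialized
bundle: a nowhere-zero symmetric section of `kζ` yields a ℤ/2-invariant open
cover of `B × S(V)` with equivariant fibrewise paths. -/
theorem stmt7 {V : Type*} [NormedAddCommGroup V] [InnerProductSpace ℝ V]
    [FiniteDimensional ℝ V] {n : ℕ} (hn : 1 ≤ n) (hdim : Module.finrank ℝ V = n + 1)
    {B : Type*} [TopologicalSpace B] {k : ℕ} (hk : 1 ≤ k)
    (s : Fin k → B × Metric.sphere (0 : V) 1 → V)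
    (hscont : ∀ i, Continuous (s i))
    (hsorth : ∀ i p, ⟪s i p, (p.2 : V)⟫ = 0)
    (hssymm : ∀ i (b : B) (u : Metric.sphere (0 : V) 1), s i (b, -u) = s i (b, u))
    (hsnz : ∀ p, ∃ i, s i p ≠ 0) :
    ∃ (U : Fin k → Set (B × Metric.sphere (0 : V) 1))
      (ψ : Fin k → ℝ × (B × Metric.sphere (0 : V) 1) → Metric.sphere (0 : V) 1),
      (∀ i, IsOpen (U i)) ∧
      (⋃ i, U i) = Set.univ ∧
      (∀ i, ∀ p ∈ U i, (p.1, -p.2) ∈ U i) ∧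
      (∀ i, ContinuousOn (ψ i) (Set.Icc (-1 : ℝ) 1 ×ˢ U i)) ∧
      (∀ i, ∀ p ∈ U i, ψ i (1, p) = p.2) ∧
      (∀ i, ∀ p ∈ U i, ∀ t ∈ Set.Icc (-1 : ℝ) 1, ψ i (-t, (p.1, -p.2)) = ψ i (t, p)) := by
  classical
  set f : Fin k → ℝ × (B × Metric.sphere (0 : V) 1) → V :=
    fun i q => Real.sin (π/2 * q.1) • (q.2.2 : V)
      + Real.cos (π/2 * q.1) • (‖s i q.2‖⁻¹ • s i q.2) with hf
  have hnorm : ∀ i q, s i q.2 ≠ 0 → ‖f i q‖ = 1 := by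
    intro i q hq
    have hu : ‖(q.2.2 : V)‖ = 1 := by
      simpa using mem_sphere_zero_iff_norm.1 q.2.2.2
    have hw : ‖(‖s i q.2‖⁻¹ • s i q.2 : V)‖ = 1 := norm_smul_inv_norm hq
    have hin : ⟪Real.sin (π/2 * q.1) • (q.2.2 : V),
        Real.cos (π/2 * q.1) • (‖s i q.2‖⁻¹ • s i q.2)⟫ = 0 := by
      rw [real_inner_smul_left, real_inner_smul_right, real_inner_smul_right,
        real_inner_comm, hsorth]
      ring
    have hsq : ‖f i q‖ ^ 2 = 1 := by
      rw [hf]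
      simp only
      rw [norm_add_sq_real, hin, norm_smul, norm_smul, hu, hw]
      simp only [mul_one, Real.norm_eq_abs, mul_zero, add_zero]
      rw [sq_abs, sq_abs]
      exact Real.sin_sq_add_cos_sq _
    nlinarith [norm_nonneg (f i q)]
  refine ⟨fun i => {p | s i p ≠ 0},
    fun i q => if h : s i q.2 = 0 then q.2.2 else
      ⟨f i q, by rw [mem_sphere_zero_iff_norm]; exact hnorm i q h⟩,
    ?_, ?_, ?_, ?_, ?_, ?_⟩
  · exact fun i => isOpen_compl_singleton.preimage (hscont i)
  · ext p
    simpa using hsnz p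
  · intro i p hp
    simp only [Set.mem_setOf_eq] at hp ⊢
    rw [show ((p.1, -p.2) : B × Metric.sphere (0:V) 1) = (p.1, -p.2) from rfl,
      hssymm i p.1 p.2]
    exact hp
  · intro i
    rw [Topology.IsInducing.continuousOn_iff Topology.IsInducing.subtypeVal]
    have hcongr : Set.EqOn
        (Subtype.val ∘ fun q => if h : s i q.2 = 0 then q.2.2 else
          (⟨f i q, by rw [mem_sphere_zero_iff_norm]; exact hnorm i q h⟩ :
            Metric.sphere (0:V) 1))
        (f i) (Set.Icc (-1 : ℝ) 1 ×ˢ {p | s i p ≠ 0}) := by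
      intro q hq
      have : s i q.2 ≠ 0 := hq.2
      simp [this]
    refine ContinuousOn.congr ?_ hcongr
    have hc2 : Continuous fun q : ℝ × (B × Metric.sphere (0:V) 1) => s i q.2 :=
      (hscont i).comp continuous_snd
    apply ContinuousOn.add
    · exact ((Real.continuous_sin.comp (continuous_const.mul continuous_fst)).smul
        (continuous_subtype_val.comp (continuous_snd.comp continuous_snd))).continuousOn
    · apply ContinuousOn.smul
      · exact (Real.continuous_cos.comp (continuous_const.mul continuous_fst)).continuousOn
      · apply ContinuousOn.smul
        · apply ContinuousOn.inv₀
          · exact hc2.norm.continuousOn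
          · intro q hq
            exact norm_ne_zero_iff.2 hq.2
        · exact hc2.continuousOn
  · intro i p hp
    have hp' : s i p ≠ 0 := hp
    simp only [hp', dif_neg, not_false_iff]
    ext
    simp [hf, mul_one, Real.sin_pi_div_two, Real.cos_pi_div_two]
  · intro i p hp t ht
    have hs' : s i (p.1, -p.2) = s i p := by
      have := hssymm i p.1 p.2
      simpa using this
    have hp' : s i p ≠ 0 := hp
    have hp'' : s i ((p.1, -p.2) : B × Metric.sphere (0:V) 1) ≠ 0 := by
      rw [hs']; exact hp'
    simp only [dif_neg, hp', hp'', not_false_iff]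
    ext
    simp only [hf]
    have : ((-p.2 : Metric.sphere (0:V) 1) : V) = -(p.2 : V) := rfl
    simp [hs', this, mul_neg, Real.sin_neg, Real.cos_neg]
end

section
/- Let V be a finite-dimensional real inner product space with dim V = n+1 ≥ 2, B a topological space and k ≥ 1. Suppose there exist open sets V_1, …, V_k covering B × S(V), each invariant under (b,u) ↦ (b,−u), and continuous maps ψ_i : [−1,1] × V_i → S(V) with ψ_i(1,(b,u)) = u and ψ_i(−t,(b,−u)) = ψ_i(t,(b,u)). Then there exist open sets U_0, U_1, …, U_k covering B × S(V) × S(V), each invariant under the involution (b,u,v) ↦ (b,v,u), and continuous maps φ_i : [−1,1] × U_i → S(V) such that for all (b,u,v) ∈ U_i and t ∈ [−1,1]: φ_i(1,(b,u,v)) = u, φ_i(−1,(b,u,v)) = v, φ_i(−t,(b,v,u)) = φ_i(t,(b,u,v)), and φ_i(t,(b,u,u)) = u whenever (b,u,u) ∈ U_i. -/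
open scoped RealInnerProductSpace Classical

noncomputable section Stmt8Aux

variable {V : Type*} [NormedAddCommGroup V] [InnerProductSpace ℝ V]

/-- Normalization into the unit sphere, with a junk value for `0`. -/
def nzs (x : V) (j : Metric.sphere (0 : V) 1) : Metric.sphere (0 : V) 1 :=
  if h : x = 0 then j else
    ⟨‖x‖⁻¹ • x, by
      have hx : ‖x‖ ≠ 0 := norm_ne_zero_iff.mpr h
      rw [mem_sphere_zero_iff_norm, norm_smul, norm_inv, norm_norm, inv_mul_cancel₀ hx]⟩

lemma nzs_coe {x : V} (h : x ≠ 0) (j : Metric.sphere (0 : V) 1) :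
    (nzs x j : V) = ‖x‖⁻¹ • x := by simp [nzs, h]

lemma nzs_congr {x : V} (h : x ≠ 0) (j j' : Metric.sphere (0 : V) 1) :
    nzs x j = nzs x j' := by simp [nzs, h]

lemma nzs_neg {x : V} (h : x ≠ 0) (j j' : Metric.sphere (0 : V) 1) :
    nzs (-x) j' = -(nzs x j) := by
  have h' : (-x : V) ≠ 0 := neg_ne_zero.mpr h
  apply Subtype.ext
  rw [coe_neg_sphere, nzs_coe h', nzs_coe h, norm_neg, smul_neg]

lemma nzs_smul_pos {c : ℝ} (hc : 0 < c) (u : Metric.sphere (0 : V) 1)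
    (j : Metric.sphere (0 : V) 1) : nzs (c • (u : V)) j = u := by
  have hu : ‖(u : V)‖ = 1 := mem_sphere_zero_iff_norm.mp u.2
  have hu0 : (u : V) ≠ 0 := by
    intro h; rw [h, norm_zero] at hu; norm_num at hu
  have h : c • (u : V) ≠ 0 := smul_ne_zero hc.ne' hu0
  apply Subtype.ext
  rw [nzs_coe h, norm_smul, hu, Real.norm_eq_abs, abs_of_pos hc, mul_one, smul_smul,
    inv_mul_cancel₀ hc.ne', one_smul]

lemma sphere_coe_ne_zero (u : Metric.sphere (0 : V) 1) : (u : V) ≠ 0 := by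
  have hu : ‖(u : V)‖ = 1 := mem_sphere_zero_iff_norm.mp u.2
  intro h; rw [h, norm_zero] at hu; norm_num at hu

lemma sphere_norm_one (u : Metric.sphere (0 : V) 1) : ‖(u : V)‖ = 1 :=
  mem_sphere_zero_iff_norm.mp u.2

lemma sphere_inner_self (u : Metric.sphere (0 : V) 1) : @inner ℝ _ _ (u : V) (u : V) = 1 := by
  rw [real_inner_self_eq_norm_sq, sphere_norm_one]; norm_num

lemma nzs_sphere (u j : Metric.sphere (0 : V) 1) : nzs ((u : V)) j = u := by
  have h := nzs_smul_pos one_pos u j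
  rwa [one_smul] at h

lemma continuousOn_nzs {α : Type*} [TopologicalSpace α] {F : α → V} {D : Set α}
    (hF : ContinuousOn F D) (h0 : ∀ x ∈ D, F x ≠ 0) (j : α → Metric.sphere (0 : V) 1) :
    ContinuousOn (fun x => nzs (F x) (j x)) D := by
  rw [Topology.IsInducing.subtypeVal.continuousOn_iff]
  have h : ContinuousOn (fun x => ‖F x‖⁻¹ • F x) D :=
    ((hF.norm).inv₀ (fun x hx => norm_ne_zero_iff.mpr (h0 x hx))).smul hF
  exact h.congr fun x hx => by
    simp only [Function.comp_apply, nzs_coe (h0 x hx)]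

variable {B : Type*} [TopologicalSpace B]

/-- The ambient-space path for the "far from antipodal" open set. -/
def F0 (x : ℝ × (B × Metric.sphere (0 : V) 1 × Metric.sphere (0 : V) 1)) : V :=
  (1 + x.1) • (x.2.2.1 : V) + (1 - x.1) • (x.2.2.2 : V)

def U0 : Set (B × Metric.sphere (0 : V) 1 × Metric.sphere (0 : V) 1) :=
  {p | (p.2.1 : V) + (p.2.2 : V) ≠ 0}

def wmap (p : B × Metric.sphere (0 : V) 1 × Metric.sphere (0 : V) 1) :
    Metric.sphere (0 : V) 1 :=
  nzs ((p.2.1 : V) - (p.2.2 : V)) p.2.1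

def UW (W : Set (B × Metric.sphere (0 : V) 1)) :
    Set (B × Metric.sphere (0 : V) 1 × Metric.sphere (0 : V) 1) :=
  {p | (p.2.1 : V) - (p.2.2 : V) ≠ 0 ∧ (p.1, wmap p) ∈ W}

def acoef (t : ℝ) : ℝ := max 0 (2 * t - 1)

def clampt (t : ℝ) : ℝ := max (-1) (min 1 (2 * t))

lemma acoef_cont : Continuous acoef :=
  continuous_const.max (((continuous_const.mul continuous_id).sub continuous_const))

lemma clampt_cont : Continuous clampt :=
  continuous_const.max ((continuous_const.min (continuous_const.mul continuous_id)))

lemma clampt_mem (t : ℝ) : clampt t ∈ Set.Icc (-1 : ℝ) 1 :=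
  ⟨le_max_left _ _, max_le (by norm_num) (min_le_left _ _)⟩

lemma clampt_neg (t : ℝ) : clampt (-t) = -clampt t := by
  unfold clampt
  have e : 2 * -t = -(2 * t) := by ring
  rw [e]
  rcases le_total (2 * t) (-1) with h | h
  · rw [min_eq_right (by linarith : 2 * t ≤ (1:ℝ)), max_eq_left h,
      min_eq_left (by linarith : (1:ℝ) ≤ -(2 * t)),
      max_eq_right (by norm_num : (-1:ℝ) ≤ 1)]
    norm_num
  · rcases le_total 1 (2 * t) with h' | h'
    · rw [min_eq_left h', max_eq_right (by norm_num : (-1:ℝ) ≤ 1),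
        min_eq_right (by linarith : -(2 * t) ≤ (1:ℝ)),
        max_eq_left (by linarith : -(2 * t) ≤ (-1:ℝ))]
    · rw [min_eq_right h', max_eq_right h,
        min_eq_right (by linarith : -(2 * t) ≤ (1:ℝ)),
        max_eq_right (by linarith : (-1:ℝ) ≤ -(2 * t))]

/-- The ambient-space path for the sets coming from the `W`'s. -/
def FW (ψ : ℝ × (B × Metric.sphere (0 : V) 1) → Metric.sphere (0 : V) 1)
    (x : ℝ × (B × Metric.sphere (0 : V) 1 × Metric.sphere (0 : V) 1)) : V :=
  (1 - acoef x.1 - acoef (-x.1)) • (ψ (clampt x.1, (x.2.1, wmap x.2)) : V)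
    + acoef x.1 • (x.2.2.1 : V) + acoef (-x.1) • (x.2.2.2 : V)

/-- the swap involution -/
def sw (p : B × Metric.sphere (0 : V) 1 × Metric.sphere (0 : V) 1) :
    B × Metric.sphere (0 : V) 1 × Metric.sphere (0 : V) 1 := (p.1, p.2.2, p.2.1)

lemma F0_cont : Continuous (F0 (V := V) (B := B)) := by
  unfold F0
  fun_prop

lemma F0_symm (t : ℝ) (p : B × Metric.sphere (0 : V) 1 × Metric.sphere (0 : V) 1) :
    F0 (-t, sw p) = F0 (t, p) := by
  show (1 + -t) • ((p.2.2 : V)) + (1 - -t) • ((p.2.1 : V)) = _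
  rw [show (1 + -t) = 1 - t by ring, show (1 - -t) = 1 + t by ring]
  exact add_comm _ _

lemma F0_ne {p : B × Metric.sphere (0 : V) 1 × Metric.sphere (0 : V) 1}
    (hp : p ∈ U0) (t : ℝ) : F0 (t, p) ≠ 0 := by
  intro h
  have h1 : @inner ℝ _ _ (F0 (t, p)) ((p.2.1 : V) + (p.2.2 : V))
      = ‖(p.2.1 : V) + (p.2.2 : V)‖ ^ 2 := by
    rw [← real_inner_self_eq_norm_sq]
    simp only [F0, inner_add_left, inner_add_right, real_inner_smul_left]
    rw [sphere_inner_self, sphere_inner_self,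
      real_inner_comm ((p.2.2 : V)) ((p.2.1 : V))]
    ring
  rw [h, inner_zero_left] at h1
  exact hp (norm_eq_zero.mp (sq_eq_zero_iff.mp h1.symm))

lemma F0_eval1 (p : B × Metric.sphere (0 : V) 1 × Metric.sphere (0 : V) 1) :
    F0 (1, p) = (2 : ℝ) • (p.2.1 : V) := by
  show (1 + 1 : ℝ) • ((p.2.1 : V)) + (1 - 1 : ℝ) • ((p.2.2 : V)) = _
  norm_num

lemma F0_evalneg1 (p : B × Metric.sphere (0 : V) 1 × Metric.sphere (0 : V) 1) :
    F0 (-1, p) = (2 : ℝ) • (p.2.2 : V) := by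
  show (1 + -1 : ℝ) • ((p.2.1 : V)) + (1 - -1 : ℝ) • ((p.2.2 : V)) = _
  norm_num

lemma F0_diag {p : B × Metric.sphere (0 : V) 1 × Metric.sphere (0 : V) 1}
    (h : p.2.1 = p.2.2) (t : ℝ) : F0 (t, p) = (2 : ℝ) • (p.2.1 : V) := by
  show (1 + t) • ((p.2.1 : V)) + (1 - t) • ((p.2.2 : V)) = _
  rw [← h, ← add_smul]
  congr 1
  ring

lemma U0_symm {p : B × Metric.sphere (0 : V) 1 × Metric.sphere (0 : V) 1}
    (hp : p ∈ U0) : sw p ∈ U0 := by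
  show ((p.2.2 : V)) + ((p.2.1 : V)) ≠ 0
  rw [add_comm]; exact hp

lemma U0_open : IsOpen (U0 (V := V) (B := B)) := by
  have hc : Continuous fun p : B × Metric.sphere (0 : V) 1 × Metric.sphere (0 : V) 1 =>
      ((p.2.1 : V)) + ((p.2.2 : V)) :=
    (continuous_subtype_val.comp (continuous_fst.comp continuous_snd)).add
      (continuous_subtype_val.comp (continuous_snd.comp continuous_snd))
  exact (isOpen_compl_singleton (x := (0 : V))).preimage hc

lemma wmap_contOn :
    ContinuousOn (fun p : B × Metric.sphere (0 : V) 1 × Metric.sphere (0 : V) 1 => wmap p)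
      {p | (p.2.1 : V) - (p.2.2 : V) ≠ 0} := by
  apply continuousOn_nzs
  · exact ((continuous_subtype_val.comp (continuous_fst.comp continuous_snd)).sub
      (continuous_subtype_val.comp (continuous_snd.comp continuous_snd))).continuousOn
  · exact fun x hx => hx

section Wpart

variable {W : Set (B × Metric.sphere (0 : V) 1)}
  {ψ : ℝ × (B × Metric.sphere (0 : V) 1) → Metric.sphere (0 : V) 1}

lemma UW_open (hWo : IsOpen W) : IsOpen (UW W) := by
  have hc : Continuous fun p : B × Metric.sphere (0 : V) 1 × Metric.sphere (0 : V) 1 =>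
      ((p.2.1 : V)) - ((p.2.2 : V)) :=
    (continuous_subtype_val.comp (continuous_fst.comp continuous_snd)).sub
      (continuous_subtype_val.comp (continuous_snd.comp continuous_snd))
  have hT : IsOpen {p : B × Metric.sphere (0 : V) 1 × Metric.sphere (0 : V) 1 |
      (p.2.1 : V) - (p.2.2 : V) ≠ 0} :=
    (isOpen_compl_singleton (x := (0 : V))).preimage hc
  have hg : ContinuousOn
      (fun p : B × Metric.sphere (0 : V) 1 × Metric.sphere (0 : V) 1 => (p.1, wmap p))
      {p | (p.2.1 : V) - (p.2.2 : V) ≠ 0} :=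
    continuous_fst.continuousOn.prodMk wmap_contOn
  have he : UW W = {p : B × Metric.sphere (0 : V) 1 × Metric.sphere (0 : V) 1 |
      (p.2.1 : V) - (p.2.2 : V) ≠ 0} ∩
      (fun p : B × Metric.sphere (0 : V) 1 × Metric.sphere (0 : V) 1 =>
        (p.1, wmap p)) ⁻¹' W := rfl
  rw [he]
  exact hg.isOpen_inter_preimage hT hWo

lemma wmap_sw {p : B × Metric.sphere (0 : V) 1 × Metric.sphere (0 : V) 1}
    (hp : (p.2.1 : V) - (p.2.2 : V) ≠ 0) : wmap (sw p) = -wmap p := by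
  show nzs ((p.2.2 : V) - (p.2.1 : V)) p.2.2 = -(nzs ((p.2.1 : V) - (p.2.2 : V)) p.2.1)
  rw [← neg_sub ((p.2.1 : V)) ((p.2.2 : V))]
  exact nzs_neg hp _ _

lemma UW_symm (hWs : ∀ p ∈ W, (p.1, -p.2) ∈ W)
    {p : B × Metric.sphere (0 : V) 1 × Metric.sphere (0 : V) 1}
    (hp : p ∈ UW W) : sw p ∈ UW W := by
  obtain ⟨hne, hw⟩ := hp
  refine ⟨?_, ?_⟩
  · show ((p.2.2 : V)) - ((p.2.1 : V)) ≠ 0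
    rw [← neg_sub ((p.2.1 : V)) ((p.2.2 : V))]
    exact neg_ne_zero.mpr hne
  · show ((sw p).1, wmap (sw p)) ∈ W
    have : wmap (sw p) = -wmap p := wmap_sw hne
    rw [this]
    exact hWs (p.1, wmap p) hw

lemma FW_symm (hWs : ∀ p ∈ W, (p.1, -p.2) ∈ W)
    (hψs : ∀ p ∈ W, ∀ t ∈ Set.Icc (-1 : ℝ) 1, ψ (-t, (p.1, -p.2)) = ψ (t, p))
    {p : B × Metric.sphere (0 : V) 1 × Metric.sphere (0 : V) 1}
    (hp : p ∈ UW W) (t : ℝ) : FW ψ (-t, sw p) = FW ψ (t, p) := by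
  obtain ⟨hne, hw⟩ := hp
  have h1 : wmap (sw p) = -wmap p := wmap_sw hne
  have h2 : ψ (clampt (-t), ((sw p).1, wmap (sw p))) = ψ (clampt t, (p.1, wmap p)) := by
    show ψ (clampt (-t), (p.1, wmap (sw p))) = _
    rw [h1, clampt_neg]
    exact hψs (p.1, wmap p) hw (clampt t) (clampt_mem t)
  show (1 - acoef (-t) - acoef (-(-t))) • (ψ (clampt (-t), ((sw p).1, wmap (sw p))) : V)
      + acoef (-t) • ((p.2.2 : V)) + acoef (-(-t)) • ((p.2.1 : V)) = _
  rw [neg_neg, h2]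
  rw [show (1 - acoef (-t) - acoef t) = (1 - acoef t - acoef (-t)) by ring]
  exact add_right_comm _ _ _

lemma inner_wmap_pos {p : B × Metric.sphere (0 : V) 1 × Metric.sphere (0 : V) 1}
    (hne : (p.2.1 : V) - (p.2.2 : V) ≠ 0) :
    0 < @inner ℝ _ _ ((p.2.1 : V)) ((wmap p : V)) := by
  have hn : ‖(p.2.1 : V) - (p.2.2 : V)‖ ≠ 0 := norm_ne_zero_iff.mpr hne
  have hnpos : 0 < ‖(p.2.1 : V) - (p.2.2 : V)‖ := lt_of_le_of_ne (norm_nonneg _) (Ne.symm hn)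
  have hcoe : (wmap p : V) = ‖(p.2.1 : V) - (p.2.2 : V)‖⁻¹ • ((p.2.1 : V) - (p.2.2 : V)) :=
    nzs_coe hne _
  rw [hcoe, real_inner_smul_right]
  apply mul_pos (inv_pos.mpr hnpos)
  have hexp : @inner ℝ _ _ ((p.2.1 : V)) ((p.2.1 : V) - (p.2.2 : V))
      = ‖(p.2.1 : V) - (p.2.2 : V)‖ ^ 2 / 2 := by
    rw [← real_inner_self_eq_norm_sq]
    simp only [inner_sub_left, inner_sub_right]
    rw [sphere_inner_self, sphere_inner_self,
      real_inner_comm ((p.2.2 : V)) ((p.2.1 : V))]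
    ring
  rw [hexp]
  positivity

lemma FW_ne_mid {p : B × Metric.sphere (0 : V) 1 × Metric.sphere (0 : V) 1} {t : ℝ}
    (h1 : -(1 / 2) ≤ t) (h2 : t ≤ 1 / 2) : FW ψ (t, p) ≠ 0 := by
  have ha : acoef t = 0 := max_eq_left (by linarith)
  have hb : acoef (-t) = 0 := max_eq_left (by linarith)
  have : FW ψ (t, p) = (ψ (clampt t, (p.1, wmap p)) : V) := by
    show (1 - acoef t - acoef (-t)) • _ + acoef t • _ + acoef (-t) • _ = _
    rw [ha, hb]
    simp
  rw [this]
  exact sphere_coe_ne_zero _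

lemma FW_ne_hi (hψ1 : ∀ p ∈ W, ψ (1, p) = p.2)
    {p : B × Metric.sphere (0 : V) 1 × Metric.sphere (0 : V) 1} {t : ℝ}
    (hp : p ∈ UW W) (h1 : 1 / 2 < t) (h2 : t ≤ 1) : FW ψ (t, p) ≠ 0 := by
  obtain ⟨hne, hw⟩ := hp
  have ha : acoef t = 2 * t - 1 := max_eq_right (by linarith)
  have hb : acoef (-t) = 0 := max_eq_left (by linarith)
  have hc : clampt t = 1 := by
    unfold clampt
    rw [min_eq_left (by linarith), max_eq_right (by norm_num)]
  have hev : ψ (clampt t, (p.1, wmap p)) = wmap p := by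
    rw [hc]; exact hψ1 (p.1, wmap p) hw
  have hF : FW ψ (t, p) = (2 - 2 * t) • ((wmap p : V)) + (2 * t - 1) • ((p.2.1 : V)) := by
    show (1 - acoef t - acoef (-t)) • (ψ (clampt t, (p.1, wmap p)) : V)
        + acoef t • _ + acoef (-t) • _ = _
    rw [ha, hb, hev]
    rw [show (1 - (2 * t - 1) - 0 : ℝ) = 2 - 2 * t by ring]
    simp
  intro h
  have hpos : 0 < @inner ℝ _ _ ((wmap p : V)) (FW ψ (t, p)) := by
    rw [hF]
    simp only [inner_add_right, real_inner_smul_right]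
    rw [sphere_inner_self]
    have hiw : 0 < @inner ℝ _ _ ((wmap p : V)) ((p.2.1 : V)) := by
      rw [real_inner_comm]; exact inner_wmap_pos hne
    nlinarith
  rw [h, inner_zero_right] at hpos
  exact lt_irrefl 0 hpos

lemma FW_ne (hWs : ∀ p ∈ W, (p.1, -p.2) ∈ W)
    (hψ1 : ∀ p ∈ W, ψ (1, p) = p.2)
    (hψs : ∀ p ∈ W, ∀ t ∈ Set.Icc (-1 : ℝ) 1, ψ (-t, (p.1, -p.2)) = ψ (t, p))
    {p : B × Metric.sphere (0 : V) 1 × Metric.sphere (0 : V) 1} {t : ℝ}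
    (hp : p ∈ UW W) (ht : t ∈ Set.Icc (-1 : ℝ) 1) : FW ψ (t, p) ≠ 0 := by
  rcases le_or_gt t (1 / 2 : ℝ) with h2 | h2
  · rcases le_or_gt (-(1 / 2) : ℝ) t with h1 | h1
    · exact FW_ne_mid h1 h2
    · have hsymm : FW ψ (t, p) = FW ψ (-t, sw p) := by
        have := FW_symm hWs hψs (UW_symm hWs hp) (-t)
        rw [neg_neg] at this
        rw [← this]
        rfl
      rw [hsymm]
      exact FW_ne_hi hψ1 (UW_symm hWs hp) (by linarith) (by linarith [ht.1])
  · exact FW_ne_hi hψ1 hp h2 ht.2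

lemma FW_eval1 (p : B × Metric.sphere (0 : V) 1 × Metric.sphere (0 : V) 1) :
    FW ψ (1, p) = (p.2.1 : V) := by
  have ha : acoef (1 : ℝ) = 1 := by unfold acoef; norm_num
  have hb : acoef (-1 : ℝ) = 0 := by unfold acoef; norm_num
  show (1 - acoef (1:ℝ) - acoef (-(1:ℝ))) • _ + acoef (1:ℝ) • _ + acoef (-(1:ℝ)) • _ = _
  rw [ha, hb]
  simp

lemma FW_evalneg1 (p : B × Metric.sphere (0 : V) 1 × Metric.sphere (0 : V) 1) :
    FW ψ (-1, p) = (p.2.2 : V) := by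
  have ha : acoef (1 : ℝ) = 1 := by unfold acoef; norm_num
  have hb : acoef (-1 : ℝ) = 0 := by unfold acoef; norm_num
  show (1 - acoef (-1:ℝ) - acoef (-(-1:ℝ))) • _ + acoef (-1:ℝ) • _ + acoef (-(-1:ℝ)) • _ = _
  rw [neg_neg, ha, hb]
  simp

lemma FW_contOn (hψc : ContinuousOn ψ (Set.Icc (-1 : ℝ) 1 ×ˢ W)) :
    ContinuousOn (FW ψ) (Set.Icc (-1 : ℝ) 1 ×ˢ UW W) := by
  set D := Set.Icc (-1 : ℝ) 1 ×ˢ UW W with hD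
  have hmaps1 : Set.MapsTo (fun x : ℝ × (B × Metric.sphere (0 : V) 1 × Metric.sphere (0 : V) 1)
      => x.2) D {p | (p.2.1 : V) - (p.2.2 : V) ≠ 0} := fun x hx => hx.2.1
  have hg : ContinuousOn (fun x : ℝ × (B × Metric.sphere (0 : V) 1 × Metric.sphere (0 : V) 1)
      => (clampt x.1, (x.2.1, wmap x.2))) D := by
    refine (clampt_cont.comp continuous_fst).continuousOn.prodMk (ContinuousOn.prodMk ?_ ?_)
    · exact (continuous_fst.comp continuous_snd).continuousOn
    · exact wmap_contOn.comp continuous_snd.continuousOn hmaps1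
  have hmaps2 : Set.MapsTo (fun x : ℝ × (B × Metric.sphere (0 : V) 1 × Metric.sphere (0 : V) 1)
      => (clampt x.1, (x.2.1, wmap x.2))) D (Set.Icc (-1 : ℝ) 1 ×ˢ W) :=
    fun x hx => Set.mem_prod.mpr ⟨clampt_mem _, hx.2.2⟩
  have hψval : ContinuousOn (fun x : ℝ × (B × Metric.sphere (0 : V) 1 × Metric.sphere (0 : V) 1)
      => (ψ (clampt x.1, (x.2.1, wmap x.2)) : V)) D :=
    continuous_subtype_val.comp_continuousOn (hψc.comp hg hmaps2)
  have hscal : Continuous fun x : ℝ × (B × Metric.sphere (0 : V) 1 × Metric.sphere (0 : V) 1)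
      => (1 - acoef x.1 - acoef (-x.1)) :=
    (continuous_const.sub (acoef_cont.comp continuous_fst)).sub
      (acoef_cont.comp continuous_fst.neg)
  have h2 : Continuous fun x : ℝ × (B × Metric.sphere (0 : V) 1 × Metric.sphere (0 : V) 1)
      => acoef x.1 • ((x.2.2.1 : V)) :=
    (acoef_cont.comp continuous_fst).smul
      (continuous_subtype_val.comp (continuous_fst.comp (continuous_snd.comp continuous_snd)))
  have h3 : Continuous fun x : ℝ × (B × Metric.sphere (0 : V) 1 × Metric.sphere (0 : V) 1)
      => acoef (-x.1) • ((x.2.2.2 : V)) :=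
    ((acoef_cont.comp continuous_fst.neg)).smul
      (continuous_subtype_val.comp (continuous_snd.comp (continuous_snd.comp continuous_snd)))
  exact ((hscal.continuousOn.smul hψval).add h2.continuousOn).add h3.continuousOn

end Wpart

end Stmt8Aux


/-- Theorem 2.9 (symmetrized version), implication (2) ⟹ (3), for a trivialized
bundle: from equivariant fibrewise paths reversing the antipodal map one
constructs symmetric fibrewise motion planners fixing the diagonal. -/
theorem stmt8 {V : Type*} [NormedAddCommGroup V] [InnerProductSpace ℝ V]
    [FiniteDimensional ℝ V] {n : ℕ} (hn : 1 ≤ n) (hdim : Module.finrank ℝ V = n + 1)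
    {B : Type*} [TopologicalSpace B] {k : ℕ} (hk : 1 ≤ k)
    (W : Fin k → Set (B × Metric.sphere (0 : V) 1))
    (ψ : Fin k → ℝ × (B × Metric.sphere (0 : V) 1) → Metric.sphere (0 : V) 1)
    (hWopen : ∀ i, IsOpen (W i))
    (hWcover : (⋃ i, W i) = Set.univ)
    (hWsymm : ∀ i, ∀ p ∈ W i, (p.1, -p.2) ∈ W i)
    (hψcont : ∀ i, ContinuousOn (ψ i) (Set.Icc (-1 : ℝ) 1 ×ˢ W i))
    (hψ1 : ∀ i, ∀ p ∈ W i, ψ i (1, p) = p.2)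
    (hψsymm : ∀ i, ∀ p ∈ W i, ∀ t ∈ Set.Icc (-1 : ℝ) 1, ψ i (-t, (p.1, -p.2)) = ψ i (t, p)) :
    ∃ (U : Fin (k + 1) → Set (B × Metric.sphere (0 : V) 1 × Metric.sphere (0 : V) 1))
      (φ : Fin (k + 1) → ℝ × (B × Metric.sphere (0 : V) 1 × Metric.sphere (0 : V) 1) →
        Metric.sphere (0 : V) 1),
      (∀ i, IsOpen (U i)) ∧
      (⋃ i, U i) = Set.univ ∧
      (∀ i, ∀ p ∈ U i, (p.1, p.2.2, p.2.1) ∈ U i) ∧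
      (∀ i, ContinuousOn (φ i) (Set.Icc (-1 : ℝ) 1 ×ˢ U i)) ∧
      (∀ i, ∀ p ∈ U i, φ i (1, p) = p.2.1) ∧
      (∀ i, ∀ p ∈ U i, φ i (-1, p) = p.2.2) ∧
      (∀ i, ∀ p ∈ U i, ∀ t ∈ Set.Icc (-1 : ℝ) 1,
        φ i (-t, (p.1, p.2.2, p.2.1)) = φ i (t, p)) ∧
      (∀ i, ∀ p ∈ U i, p.2.1 = p.2.2 → ∀ t ∈ Set.Icc (-1 : ℝ) 1, φ i (t, p) = p.2.1) := by
  classical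
  refine ⟨Fin.cases U0 (fun j => UW (W j)),
    Fin.cases (fun x => nzs (F0 x) x.2.2.1) (fun j x => nzs (FW (ψ j) x) x.2.2.1),
    ?_, ?_, ?_, ?_, ?_, ?_, ?_, ?_⟩
  · -- openness
    intro i
    refine Fin.cases ?_ ?_ i
    · simpa only [Fin.cases_zero] using U0_open
    · intro j
      simpa only [Fin.cases_succ] using UW_open (hWopen j)
  · -- cover
    apply Set.eq_univ_iff_forall.mpr
    intro p
    rw [Set.mem_iUnion]
    by_cases hsub : (p.2.1 : V) - (p.2.2 : V) = 0
    · refine ⟨0, ?_⟩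
      simp only [Fin.cases_zero]
      show ((p.2.1 : V)) + ((p.2.2 : V)) ≠ 0
      have hv : (p.2.2 : V) = (p.2.1 : V) := (sub_eq_zero.mp hsub).symm
      rw [hv, ← two_smul ℝ]
      exact smul_ne_zero two_ne_zero (sphere_coe_ne_zero _)
    · have hmem : (p.1, wmap p) ∈ ⋃ i, W i := hWcover ▸ Set.mem_univ _
      obtain ⟨j, hj⟩ := Set.mem_iUnion.mp hmem
      refine ⟨j.succ, ?_⟩
      simp only [Fin.cases_succ]
      exact ⟨hsub, hj⟩
  · -- symmetry of the sets
    intro i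
    refine Fin.cases ?_ ?_ i
    · simp only [Fin.cases_zero]
      exact fun p hp => U0_symm hp
    · intro j
      simp only [Fin.cases_succ]
      exact fun p hp => UW_symm (hWsymm j) hp
  · -- continuity
    intro i
    refine Fin.cases ?_ ?_ i
    · simp only [Fin.cases_zero]
      exact continuousOn_nzs F0_cont.continuousOn
        (fun x hx => F0_ne hx.2 x.1) (fun x => x.2.2.1)
    · intro j
      simp only [Fin.cases_succ]
      exact continuousOn_nzs (FW_contOn (hψcont j))
        (fun x hx => FW_ne (hWsymm j) (hψ1 j) (hψsymm j) hx.2 hx.1) (fun x => x.2.2.1)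
  · -- value at 1
    intro i
    refine Fin.cases ?_ ?_ i
    · simp only [Fin.cases_zero]
      intro p hp
      show nzs (F0 (1, p)) p.2.1 = p.2.1
      rw [F0_eval1]
      exact nzs_smul_pos two_pos _ _
    · intro j
      simp only [Fin.cases_succ]
      intro p hp
      show nzs (FW (ψ j) (1, p)) p.2.1 = p.2.1
      rw [FW_eval1]
      exact nzs_sphere _ _
  · -- value at -1
    intro i
    refine Fin.cases ?_ ?_ i
    · simp only [Fin.cases_zero]
      intro p hp
      show nzs (F0 (-1, p)) p.2.1 = p.2.2
      rw [F0_evalneg1]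
      exact nzs_smul_pos two_pos _ _
    · intro j
      simp only [Fin.cases_succ]
      intro p hp
      show nzs (FW (ψ j) (-1, p)) p.2.1 = p.2.2
      rw [FW_evalneg1]
      exact nzs_sphere _ _
  · -- symmetry of the planners
    intro i
    refine Fin.cases ?_ ?_ i
    · simp only [Fin.cases_zero]
      intro p hp t ht
      show nzs (F0 (-t, sw p)) (sw p).2.1 = nzs (F0 (t, p)) p.2.1
      rw [F0_symm]
      exact nzs_congr (F0_ne hp t) _ _
    · intro j
      simp only [Fin.cases_succ]
      intro p hp t ht
      show nzs (FW (ψ j) (-t, sw p)) (sw p).2.1 = nzs (FW (ψ j) (t, p)) p.2.1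
      rw [FW_symm (hWsymm j) (hψsymm j) hp t]
      exact nzs_congr (FW_ne (hWsymm j) (hψ1 j) (hψsymm j) hp ht) _ _
  · -- fixing the diagonal
    intro i
    refine Fin.cases ?_ ?_ i
    · simp only [Fin.cases_zero]
      intro p hp h t ht
      show nzs (F0 (t, p)) p.2.1 = p.2.1
      rw [F0_diag h]
      exact nzs_smul_pos two_pos _ _
    · intro j
      simp only [Fin.cases_succ]
      intro p hp h t ht
      have hz : (p.2.1 : V) - (p.2.2 : V) = 0 := by rw [h]; exact sub_self _
      exact absurd hz hp.1
end

section
/- Let V be a finite-dimensional real inner product space with dim V = n+1 ≥ 2, B a compact metric space and k ≥ 1. Suppose there exist open sets U′_0, …, U′_k covering B × S(V) × S(V), each invariant under the involution (b,u,v) ↦ (b,v,u), and continuous maps φ′_i : [−1,1] × U′_i → S(V) satisfying φ′_i(1,(b,u,v)) = u, φ′_i(−1,(b,u,v)) = v and φ′_i(−t,(b,v,u)) = φ′_i(t,(b,u,v)) for all (b,u,v) ∈ U′_i and t ∈ [−1,1]. Then there exist open sets U_0, …, U_k covering B × S(V) × S(V), each invariant under (b,u,v) ↦ (b,v,u), and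 continuous maps φ_i : [−1,1] × U_i → S(V) satisfying, in addition to the three conditions above (with U_i, φ_i in place of U′_i, φ′_i), the diagonal condition φ_i(t,(b,u,u)) = u for all t ∈ [−1,1] whenever (b,u,u) ∈ U_i. -/
open scoped RealInnerProductSpace

open Set Metric
set_option linter.unusedSectionVars false
set_option linter.unnecessarySimpa false

noncomputable section SymAux

variable {V : Type*} [NormedAddCommGroup V] [InnerProductSpace ℝ V]
variable {X : Type*} [TopologicalSpace X]

variable (σ : X → X) (f : ℝ × X → Metric.sphere (0 : V) 1)

def symD (p : X) : ℝ :=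
  sSup ((fun s : ℝ => ‖(f (s, p) : V) - (f (s, σ p) : V)‖) '' Set.Icc (-1 : ℝ) 1)

def symM (p : X) : ℝ := max 0 (1 - 2 * symD σ f p)

def symC (q : ℝ × X) : V :=
  (max 0 (symM σ f q.2 + q.1) + max 0 (1/2 - |q.1| - symM σ f q.2)) •
      (f (max |q.1| (symM σ f q.2), q.2) : V)
    + (max 0 (symM σ f q.2 - q.1) + max 0 (1/2 - |q.1| - symM σ f q.2)) •
      (f (-max |q.1| (symM σ f q.2), q.2) : V)

open Classical in
def symPhi (q : ℝ × X) : Metric.sphere (0 : V) 1 :=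
  if h : (‖symC σ f q‖⁻¹ • symC σ f q) ∈ Metric.sphere (0 : V) 1 then ⟨_, h⟩ else f q

variable {σ f}

lemma sph_norm (x : Metric.sphere (0 : V) 1) : ‖(x : V)‖ = 1 := by
  simpa using mem_sphere_zero_iff_norm.mp x.2

lemma le_symD {p : X} {s : ℝ} (hs : s ∈ Set.Icc (-1 : ℝ) 1) :
    ‖(f (s, p) : V) - (f (s, σ p) : V)‖ ≤ symD σ f p := by
  refine le_csSup ⟨2, ?_⟩ (Set.mem_image_of_mem _ hs)
  rintro r ⟨s', _, rfl⟩
  calc ‖(f (s', p) : V) - (f (s', σ p) : V)‖ ≤ ‖(f (s', p) : V)‖ + ‖(f (s', σ p) : V)‖ :=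
        norm_sub_le _ _
    _ = 2 := by rw [sph_norm, sph_norm]; norm_num

lemma symD_nonneg (p : X) : 0 ≤ symD σ f p :=
  le_trans (norm_nonneg ((f (1, p) : V) - (f (1, σ p) : V))) (le_symD (by norm_num))

lemma symM_nonneg (p : X) : 0 ≤ symM σ f p := le_max_left _ _

lemma symM_le_one (p : X) : symM σ f p ≤ 1 := by
  have := symD_nonneg (σ := σ) (f := f) p
  apply max_le <;> linarith

lemma symD_diag {p : X} (h : σ p = p) : symD σ f p = 0 := by
  unfold symD
  rw [h]
  have : (fun s : ℝ => ‖(f (s, p) : V) - (f (s, p) : V)‖) = fun _ => 0 := by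
    funext s; simp
  rw [this, Set.Nonempty.image_const ⟨1, by norm_num⟩, csSup_singleton]

lemma symD_symm {p : X} (h : σ (σ p) = p) : symD σ f (σ p) = symD σ f p := by
  unfold symD
  rw [h]
  congr 1
  have : (fun s : ℝ => ‖(f (s, σ p) : V) - (f (s, p) : V)‖)
      = fun s : ℝ => ‖(f (s, p) : V) - (f (s, σ p) : V)‖ := by
    funext s; exact norm_sub_rev _ _
  rw [this]


lemma key_dist {U : Set X}
    (hsymm : ∀ p ∈ U, ∀ t ∈ Set.Icc (-1:ℝ) 1, f (-t, σ p) = f (t, p))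
    {p : X} (hp : p ∈ U) {s : ℝ} (hs : s ∈ Set.Icc (0:ℝ) 1) :
    ‖(f (s, p) : V) - (f (-s, p) : V)‖ ≤ symD σ f p := by
  have h1 : f (s, σ p) = f (-s, p) := by
    have := hsymm p hp (-s) ⟨by linarith [hs.2], by linarith [hs.1]⟩
    simpa using this
  rw [← h1]
  exact le_symD ⟨by linarith [hs.1], hs.2⟩

lemma symC_ne {U : Set X}
    (hsymm : ∀ p ∈ U, ∀ t ∈ Set.Icc (-1:ℝ) 1, f (-t, σ p) = f (t, p))
    {p : X} (hp : p ∈ U) {t : ℝ} (ht : t ∈ Set.Icc (-1:ℝ) 1) :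
    symC σ f (t, p) ≠ 0 := by
  set m := symM σ f p with hm_def
  have hm0 : 0 ≤ m := symM_nonneg p
  have hm1 : m ≤ 1 := symM_le_one p
  have habs : |t| ≤ 1 := abs_le.mpr ⟨ht.1, ht.2⟩
  set s := max |t| m with hs_def
  have hs0 : 0 ≤ s := le_trans (abs_nonneg t) (le_max_left _ _)
  have hs1 : s ≤ 1 := max_le habs hm1
  set x := (f (s, p) : V) with hx_def
  set y := (f (-s, p) : V) with hy_def
  have hx : ‖x‖ = 1 := sph_norm _
  have hy : ‖y‖ = 1 := sph_norm _
  set A := max 0 (m + t) with hA_def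
  set Bc := max 0 (m - t) with hB_def
  set e := max 0 (1/2 - |t| - m) with he_def
  have hA : 0 ≤ A := le_max_left _ _
  have hB : 0 ≤ Bc := le_max_left _ _
  have he : 0 ≤ e := le_max_left _ _
  have hAe : 0 ≤ A + e := by linarith
  have hBe : 0 ≤ Bc + e := by linarith
  have hC : symC σ f (t, p) = (A + e) • x + (Bc + e) • y := rfl
  by_cases hm : m = 0
  · by_cases ht0 : t = 0
    · have hsz : s = 0 := by rw [hs_def, hm, ht0]; simp
      have hxy : x = y := by rw [hx_def, hy_def, hsz, neg_zero]
      have hC' : symC σ f (t, p) = (A + e + (Bc + e)) • x := by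
        rw [hC, hxy, ← add_smul]
      have hcoef : A + e + (Bc + e) = 1 := by
        rw [hA_def, hB_def, he_def, hm, ht0]
        norm_num
      rw [hC', hcoef, one_smul]
      intro h
      rw [h, norm_zero] at hx
      norm_num at hx
    · intro h0
      rw [hC] at h0
      have h1 : (A+e) • x = -((Bc+e) • y) := eq_neg_of_add_eq_zero_left h0
      have h2 := congrArg norm h1
      rw [norm_neg, norm_smul, norm_smul, hx, hy, Real.norm_eq_abs, Real.norm_eq_abs,
        abs_of_nonneg hAe, abs_of_nonneg hBe, mul_one, mul_one] at h2
      rcases lt_or_gt_of_ne ht0 with h | h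
      · have hA' : A = 0 := by
          rw [hA_def, hm, zero_add]; exact max_eq_left (by linarith)
        have hB' : Bc = -t := by
          rw [hB_def, hm, zero_sub]; exact max_eq_right (by linarith)
        rw [hA', hB'] at h2; linarith
      · have hA' : A = t := by
          rw [hA_def, hm, zero_add]; exact max_eq_right (by linarith)
        have hB' : Bc = 0 := by
          rw [hB_def, hm, zero_sub]; exact max_eq_left (by linarith)
        rw [hA', hB'] at h2; linarith
  · have hmpos : 0 < m := lt_of_le_of_ne hm0 (Ne.symm hm)
    have hD : symD σ f p < 1/2 := by
      by_contra hcon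
      push_neg at hcon
      have : m = 0 := by
        rw [hm_def, symM]; exact max_eq_left (by linarith)
      exact hm this
    have hxyD : ‖x - y‖ ≤ symD σ f p := key_dist hsymm hp ⟨hs0, hs1⟩
    have hxylt : ‖x - y‖ < 1/2 := lt_of_le_of_lt hxyD hD
    have hsq : ‖x - y‖^2 = 2 - 2*⟪x, y⟫ := by
      rw [norm_sub_sq_real, hx, hy]; ring
    have hip : 0 ≤ ⟪x, y⟫ := by nlinarith [norm_nonneg (x - y)]
    intro h0
    rw [hC] at h0
    have hnormsq : ‖(A+e) • x + (Bc+e) • y‖^2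
        = (A+e)^2 + 2*((A+e)*(Bc+e))*⟪x, y⟫ + (Bc+e)^2 := by
      rw [norm_add_sq_real, norm_smul, norm_smul, real_inner_smul_left, real_inner_smul_right,
        hx, hy, Real.norm_eq_abs, Real.norm_eq_abs, abs_of_nonneg hAe, abs_of_nonneg hBe]
      ring
    rw [h0, norm_zero] at hnormsq
    have hcross : 0 ≤ (A+e)*(Bc+e)*⟪x, y⟫ := mul_nonneg (mul_nonneg hAe hBe) hip
    have hABm : m ≤ A + Bc := by
      rcases le_total 0 t with h | h
      · have : m + t ≤ A := le_max_right _ _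
        linarith
      · have : m - t ≤ Bc := le_max_right _ _
        linarith
    have hsum : (A+e)^2 + (Bc+e)^2 ≤ 0 := by linarith
    have hα2 : (A+e)^2 = 0 :=
      le_antisymm (by linarith [sq_nonneg (Bc+e)]) (sq_nonneg _)
    have hβ2 : (Bc+e)^2 = 0 :=
      le_antisymm (by linarith [sq_nonneg (A+e)]) (sq_nonneg _)
    have hα0 : A + e = 0 := sq_eq_zero_iff.mp hα2
    have hβ0 : Bc + e = 0 := sq_eq_zero_iff.mp hβ2
    linarith

open Classical in
lemma symPhi_eq_normalize {q : ℝ × X} (h : symC σ f q ≠ 0) :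
    (symPhi σ f q : V) = ‖symC σ f q‖⁻¹ • symC σ f q := by
  have hmem : ‖symC σ f q‖⁻¹ • symC σ f q ∈ Metric.sphere (0:V) 1 := by
    rw [mem_sphere_zero_iff_norm, norm_smul, norm_inv, norm_norm,
      inv_mul_cancel₀ (norm_ne_zero_iff.mpr h)]
  rw [symPhi, dif_pos hmem]

lemma symPhi_of_smul {q : ℝ × X} {c : ℝ} (hc : 0 < c) {z : Metric.sphere (0:V) 1}
    (h : symC σ f q = c • (z : V)) : symPhi σ f q = z := by
  have hz : (z : V) ≠ 0 := by
    intro h'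
    have := sph_norm z
    rw [h', norm_zero] at this; norm_num at this
  have hne : symC σ f q ≠ 0 := by
    rw [h]; exact smul_ne_zero (ne_of_gt hc) hz
  apply Subtype.ext
  rw [symPhi_eq_normalize hne, h, norm_smul, Real.norm_eq_abs, abs_of_pos hc,
    sph_norm z, mul_one, smul_smul, inv_mul_cancel₀ (ne_of_gt hc), one_smul]

lemma symPhi_one (p : X) : symPhi σ f (1, p) = f (1, p) := by
  have hm0 : 0 ≤ symM σ f p := symM_nonneg p
  have hm1 : symM σ f p ≤ 1 := symM_le_one p
  apply symPhi_of_smul (c := symM σ f p + 1) (by linarith)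
  show (max 0 (symM σ f p + 1) + max 0 (1/2 - |(1:ℝ)| - symM σ f p)) •
      (f (max |(1:ℝ)| (symM σ f p), p) : V)
    + (max 0 (symM σ f p - 1) + max 0 (1/2 - |(1:ℝ)| - symM σ f p)) •
      (f (-max |(1:ℝ)| (symM σ f p), p) : V) = _
  rw [abs_one, max_eq_left hm1, max_eq_right (by linarith : (0:ℝ) ≤ symM σ f p + 1),
    max_eq_left (by linarith : symM σ f p - 1 ≤ 0),
    max_eq_left (by linarith : 1/2 - 1 - symM σ f p ≤ 0)]
  simp

lemma symPhi_neg_one (p : X) : symPhi σ f (-1, p) = f (-1, p) := by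
  have hm0 : 0 ≤ symM σ f p := symM_nonneg p
  have hm1 : symM σ f p ≤ 1 := symM_le_one p
  apply symPhi_of_smul (c := symM σ f p + 1) (by linarith)
  show (max 0 (symM σ f p + -1) + max 0 (1/2 - |(-1:ℝ)| - symM σ f p)) •
      (f (max |(-1:ℝ)| (symM σ f p), p) : V)
    + (max 0 (symM σ f p - -1) + max 0 (1/2 - |(-1:ℝ)| - symM σ f p)) •
      (f (-max |(-1:ℝ)| (symM σ f p), p) : V) = _
  rw [abs_neg, abs_one, max_eq_left hm1,
    max_eq_left (by linarith : symM σ f p + -1 ≤ 0),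
    show symM σ f p - -1 = symM σ f p + 1 by ring,
    max_eq_right (by linarith : (0:ℝ) ≤ symM σ f p + 1),
    max_eq_left (by linarith : 1/2 - 1 - symM σ f p ≤ 0)]
  simp

lemma symPhi_diag {U : Set X}
    (hsymm : ∀ p ∈ U, ∀ t ∈ Set.Icc (-1:ℝ) 1, f (-t, σ p) = f (t, p))
    {p : X} (hp : p ∈ U) (hσp : σ p = p) {t : ℝ} (ht : t ∈ Set.Icc (-1:ℝ) 1) :
    symPhi σ f (t, p) = f (1, p) := by
  obtain ⟨ht1, ht2⟩ := ht
  have hD : symD σ f p = 0 := symD_diag hσp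
  have hm : symM σ f p = 1 := by rw [symM, hD]; norm_num
  have habs : |t| ≤ 1 := abs_le.mpr ⟨ht1, ht2⟩
  have habs0 : 0 ≤ |t| := abs_nonneg t
  have hy : f (-1, p) = f (1, p) := by
    have := hsymm p hp 1 (by norm_num)
    rw [hσp] at this
    exact this
  apply symPhi_of_smul (c := (2:ℝ)) (by norm_num)
  show (max 0 (symM σ f p + t) + max 0 (1/2 - |t| - symM σ f p)) •
      (f (max |t| (symM σ f p), p) : V)
    + (max 0 (symM σ f p - t) + max 0 (1/2 - |t| - symM σ f p)) •
      (f (-max |t| (symM σ f p), p) : V) = _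
  rw [hm, max_eq_right habs, hy,
    max_eq_right (by linarith : (0:ℝ) ≤ 1 + t),
    max_eq_right (by linarith : (0:ℝ) ≤ 1 - t),
    max_eq_left (by linarith : 1/2 - |t| - 1 ≤ 0)]
  rw [add_zero, add_zero, ← add_smul]
  congr 1
  ring

lemma symC_symm {U : Set X}
    (hsymm : ∀ p ∈ U, ∀ t ∈ Set.Icc (-1:ℝ) 1, f (-t, σ p) = f (t, p))
    {p : X} (hp : p ∈ U) (hσσ : σ (σ p) = p) {t : ℝ} (ht : t ∈ Set.Icc (-1:ℝ) 1) :
    symC σ f (-t, σ p) = symC σ f (t, p) := by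
  have hm0 : 0 ≤ symM σ f p := symM_nonneg p
  have hm1 : symM σ f p ≤ 1 := symM_le_one p
  have habs : |t| ≤ 1 := abs_le.mpr ⟨ht.1, ht.2⟩
  have hDs : symD σ f (σ p) = symD σ f p := symD_symm hσσ
  have hms : symM σ f (σ p) = symM σ f p := by rw [symM, symM, hDs]
  set m := symM σ f p with hm_def
  set s := max |t| m with hs_def
  have hs0 : 0 ≤ s := le_trans (abs_nonneg t) (le_max_left _ _)
  have hs1 : s ≤ 1 := max_le habs hm1
  have hfs : f (s, σ p) = f (-s, p) := by
    have := hsymm p hp (-s) ⟨by linarith, by linarith⟩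
    simpa using this
  have hfns : f (-s, σ p) = f (s, p) := hsymm p hp s ⟨by linarith, by linarith⟩
  show (max 0 (symM σ f (σ p) + -t) + max 0 (1/2 - |(-t)| - symM σ f (σ p))) •
      (f (max |(-t)| (symM σ f (σ p)), σ p) : V)
    + (max 0 (symM σ f (σ p) - -t) + max 0 (1/2 - |(-t)| - symM σ f (σ p))) •
      (f (-max |(-t)| (symM σ f (σ p)), σ p) : V)
    = (max 0 (m + t) + max 0 (1/2 - |t| - m)) • (f (max |t| m, p) : V)
    + (max 0 (m - t) + max 0 (1/2 - |t| - m)) • (f (-max |t| m, p) : V)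
  rw [hms, abs_neg, ← hs_def, hfs, hfns,
    show m + -t = m - t by ring, show m - -t = m + t by ring]
  rw [add_comm]

open Classical in
lemma symPhi_symm {U : Set X}
    (hsymm : ∀ p ∈ U, ∀ t ∈ Set.Icc (-1:ℝ) 1, f (-t, σ p) = f (t, p))
    {p : X} (hp : p ∈ U) (hσσ : σ (σ p) = p) {t : ℝ} (ht : t ∈ Set.Icc (-1:ℝ) 1) :
    symPhi σ f (-t, σ p) = symPhi σ f (t, p) := by
  have hCeq := symC_symm hsymm hp hσσ ht
  have hfeq : f (-t, σ p) = f (t, p) := hsymm p hp t ht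
  rw [symPhi, symPhi]
  simp only [hCeq, hfeq]


lemma symD_continuousOn {U : Set X} (hσ : Continuous σ) (hUσ : ∀ p ∈ U, σ p ∈ U)
    (hf : ContinuousOn f (Set.Icc (-1:ℝ) 1 ×ˢ U)) :
    ContinuousOn (symD σ f) U := by
  haveI : CompactSpace (Set.Icc (-1:ℝ) 1) := isCompact_iff_compactSpace.mp isCompact_Icc
  rw [continuousOn_iff_continuous_restrict]
  have c0 : Continuous fun q : U × Set.Icc (-1:ℝ) 1 => ((q.2 : ℝ), (q.1 : X)) :=
    (continuous_subtype_val.comp continuous_snd).prodMk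
      (continuous_subtype_val.comp continuous_fst)
  have c1 : Continuous fun q : U × Set.Icc (-1:ℝ) 1 => (f ((q.2 : ℝ), (q.1 : X)) : V) :=
    continuous_subtype_val.comp <| hf.comp_continuous c0 fun q => ⟨q.2.2, q.1.2⟩
  have c0' : Continuous fun q : U × Set.Icc (-1:ℝ) 1 => ((q.2 : ℝ), σ (q.1 : X)) :=
    (continuous_subtype_val.comp continuous_snd).prodMk
      (hσ.comp (continuous_subtype_val.comp continuous_fst))
  have c2 : Continuous fun q : U × Set.Icc (-1:ℝ) 1 => (f ((q.2 : ℝ), σ (q.1 : X)) : V) :=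
    continuous_subtype_val.comp <| hf.comp_continuous c0' fun q => ⟨q.2.2, hUσ _ q.1.2⟩
  set F : C(U × Set.Icc (-1:ℝ) 1, ℝ) :=
    ⟨fun q => ‖(f ((q.2 : ℝ), (q.1 : X)) : V) - (f ((q.2 : ℝ), σ (q.1 : X)) : V)‖,
      (c1.sub c2).norm⟩ with hF_def
  have hre : U.domRestrict (symD σ f) = fun x => ‖F.curry x‖ := by
    funext x
    rw [Set.restrict_apply]
    rw [show symD σ f ↑x
        = sSup ((fun s : ℝ => ‖(f (s, (x : X)) : V) - (f (s, σ (x : X)) : V)‖)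
          '' Set.Icc (-1:ℝ) 1) from rfl]
    have hfun : (fun s : Set.Icc (-1:ℝ) 1 =>
        ‖(f ((s : ℝ), (x : X)) : V) - (f ((s : ℝ), σ (x : X)) : V)‖)
        = fun s : Set.Icc (-1:ℝ) 1 => ‖(F.curry x) s‖ := by
      funext s
      rw [ContinuousMap.curry_apply]
      exact (norm_norm _).symm
    rw [Set.image_eq_range, hfun, ContinuousMap.norm_eq_iSup_norm]
    rfl
  rw [hre]
  exact continuous_norm.comp F.curry.continuous

lemma symC_continuousOn {U : Set X} (hσ : Continuous σ) (hUσ : ∀ p ∈ U, σ p ∈ U)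
    (hf : ContinuousOn f (Set.Icc (-1:ℝ) 1 ×ˢ U)) :
    ContinuousOn (symC σ f) (Set.Icc (-1:ℝ) 1 ×ˢ U) := by
  have hD := symD_continuousOn hσ hUσ hf
  have hmD : ContinuousOn (fun q : ℝ × X => symM σ f q.2) (Set.Icc (-1:ℝ) 1 ×ˢ U) := by
    have hD2 : ContinuousOn (fun q : ℝ × X => symD σ f q.2) (Set.Icc (-1:ℝ) 1 ×ˢ U) :=
      hD.comp continuous_snd.continuousOn fun q hq => hq.2
    exact continuousOn_const.sup (continuousOn_const.sub (continuousOn_const.mul hD2))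
  have habs : ContinuousOn (fun q : ℝ × X => |q.1|) (Set.Icc (-1:ℝ) 1 ×ˢ U) :=
    (continuous_abs.comp continuous_fst).continuousOn
  have hsv : ContinuousOn (fun q : ℝ × X => max |q.1| (symM σ f q.2))
      (Set.Icc (-1:ℝ) 1 ×ˢ U) := habs.sup hmD
  have hmem : ∀ q ∈ Set.Icc (-1:ℝ) 1 ×ˢ U,
      max |q.1| (symM σ f q.2) ∈ Set.Icc (-1:ℝ) 1 := by
    intro q hq
    have h1 : |q.1| ≤ 1 := abs_le.mpr ⟨hq.1.1, hq.1.2⟩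
    have h0 : 0 ≤ max |q.1| (symM σ f q.2) :=
      le_trans (abs_nonneg q.1) (le_max_left _ _)
    exact ⟨by linarith, max_le h1 (symM_le_one _)⟩
  have hx : ContinuousOn (fun q : ℝ × X => (f (max |q.1| (symM σ f q.2), q.2) : V))
      (Set.Icc (-1:ℝ) 1 ×ˢ U) := by
    apply continuous_subtype_val.comp_continuousOn
    exact hf.comp (hsv.prodMk continuous_snd.continuousOn) fun q hq => ⟨hmem q hq, hq.2⟩
  have hy : ContinuousOn (fun q : ℝ × X => (f (-max |q.1| (symM σ f q.2), q.2) : V))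
      (Set.Icc (-1:ℝ) 1 ×ˢ U) := by
    apply continuous_subtype_val.comp_continuousOn
    refine hf.comp (hsv.neg.prodMk continuous_snd.continuousOn) fun q hq => ?_
    have h2 := hmem q hq
    have h3 : -(|q.1| ⊔ symM σ f q.2) ∈ Set.Icc (-1:ℝ) 1 :=
      ⟨by linarith [h2.2], by linarith [h2.1]⟩
    exact ⟨h3, hq.2⟩
  have hc1 : ContinuousOn (fun q : ℝ × X =>
      max 0 (symM σ f q.2 + q.1) + max 0 (1/2 - |q.1| - symM σ f q.2))
      (Set.Icc (-1:ℝ) 1 ×ˢ U) :=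
    (continuousOn_const.sup (hmD.add continuous_fst.continuousOn)).add
      (continuousOn_const.sup ((continuousOn_const.sub habs).sub hmD))
  have hc2 : ContinuousOn (fun q : ℝ × X =>
      max 0 (symM σ f q.2 - q.1) + max 0 (1/2 - |q.1| - symM σ f q.2))
      (Set.Icc (-1:ℝ) 1 ×ˢ U) :=
    (continuousOn_const.sup (hmD.sub continuous_fst.continuousOn)).add
      (continuousOn_const.sup ((continuousOn_const.sub habs).sub hmD))
  exact (hc1.smul hx).add (hc2.smul hy)

open Classical in
lemma symPhi_continuousOn {U : Set X} (hσ : Continuous σ) (hUσ : ∀ p ∈ U, σ p ∈ U)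
    (hsymm : ∀ p ∈ U, ∀ t ∈ Set.Icc (-1:ℝ) 1, f (-t, σ p) = f (t, p))
    (hf : ContinuousOn f (Set.Icc (-1:ℝ) 1 ×ˢ U)) :
    ContinuousOn (symPhi σ f) (Set.Icc (-1:ℝ) 1 ×ˢ U) := by
  have hC := symC_continuousOn hσ hUσ hf
  have hne : ∀ q ∈ Set.Icc (-1:ℝ) 1 ×ˢ U, symC σ f q ≠ 0 := by
    intro q hq
    exact symC_ne hsymm hq.2 hq.1
  have h1 : ContinuousOn (fun q => ‖symC σ f q‖⁻¹ • symC σ f q)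
      (Set.Icc (-1:ℝ) 1 ×ˢ U) :=
    (hC.norm.inv₀ fun q hq => norm_ne_zero_iff.mpr (hne q hq)).smul hC
  apply (Topology.IsInducing.subtypeVal).continuousOn_iff.mpr
  exact h1.congr fun q hq => symPhi_eq_normalize (hne q hq)

end SymAux

/-- Proposition 2.10 (after Grant et al., Theorem 5.2): symmetric fibrewise
motion planners can be deformed so as to be constant on the diagonal. -/
theorem stmt9 {V : Type*} [NormedAddCommGroup V] [InnerProductSpace ℝ V]
    [FiniteDimensional ℝ V] {n : ℕ} (hn : 1 ≤ n) (hdim : Module.finrank ℝ V = n + 1)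
    {B : Type*} [MetricSpace B] [CompactSpace B] {k : ℕ} (hk : 1 ≤ k)
    (U' : Fin (k + 1) → Set (B × Metric.sphere (0 : V) 1 × Metric.sphere (0 : V) 1))
    (φ' : Fin (k + 1) → ℝ × (B × Metric.sphere (0 : V) 1 × Metric.sphere (0 : V) 1) →
      Metric.sphere (0 : V) 1)
    (hU'open : ∀ i, IsOpen (U' i))
    (hU'cover : (⋃ i, U' i) = Set.univ)
    (hU'symm : ∀ i, ∀ p ∈ U' i, (p.1, p.2.2, p.2.1) ∈ U' i)
    (hφ'cont : ∀ i, ContinuousOn (φ' i) (Set.Icc (-1 : ℝ) 1 ×ˢ U' i))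
    (hφ'1 : ∀ i, ∀ p ∈ U' i, φ' i (1, p) = p.2.1)
    (hφ'2 : ∀ i, ∀ p ∈ U' i, φ' i (-1, p) = p.2.2)
    (hφ'symm : ∀ i, ∀ p ∈ U' i, ∀ t ∈ Set.Icc (-1 : ℝ) 1,
      φ' i (-t, (p.1, p.2.2, p.2.1)) = φ' i (t, p)) :
    ∃ (U : Fin (k + 1) → Set (B × Metric.sphere (0 : V) 1 × Metric.sphere (0 : V) 1))
      (φ : Fin (k + 1) → ℝ × (B × Metric.sphere (0 : V) 1 × Metric.sphere (0 : V) 1) →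
        Metric.sphere (0 : V) 1),
      (∀ i, IsOpen (U i)) ∧
      (⋃ i, U i) = Set.univ ∧
      (∀ i, ∀ p ∈ U i, (p.1, p.2.2, p.2.1) ∈ U i) ∧
      (∀ i, ContinuousOn (φ i) (Set.Icc (-1 : ℝ) 1 ×ˢ U i)) ∧
      (∀ i, ∀ p ∈ U i, φ i (1, p) = p.2.1) ∧
      (∀ i, ∀ p ∈ U i, φ i (-1, p) = p.2.2) ∧
      (∀ i, ∀ p ∈ U i, ∀ t ∈ Set.Icc (-1 : ℝ) 1,
        φ i (-t, (p.1, p.2.2, p.2.1)) = φ i (t, p)) ∧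
      (∀ i, ∀ p ∈ U i, p.2.1 = p.2.2 → ∀ t ∈ Set.Icc (-1 : ℝ) 1, φ i (t, p) = p.2.1) := by
  classical
  let σ : B × Metric.sphere (0 : V) 1 × Metric.sphere (0 : V) 1 →
      B × Metric.sphere (0 : V) 1 × Metric.sphere (0 : V) 1 := fun p => (p.1, p.2.2, p.2.1)
  have hσcont : Continuous σ :=
    continuous_fst.prodMk ((continuous_snd.comp continuous_snd).prodMk
      (continuous_fst.comp continuous_snd))
  refine ⟨U', fun i => symPhi σ (φ' i), hU'open, hU'cover, hU'symm, ?_, ?_, ?_, ?_, ?_⟩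
  · intro i
    exact symPhi_continuousOn hσcont (hU'symm i)
      (fun p hp t ht => hφ'symm i p hp t ht) (hφ'cont i)
  · intro i p hp
    show symPhi σ (φ' i) (1, p) = p.2.1
    rw [symPhi_one, hφ'1 i p hp]
  · intro i p hp
    show symPhi σ (φ' i) (-1, p) = p.2.2
    rw [symPhi_neg_one, hφ'2 i p hp]
  · intro i p hp t ht
    show symPhi σ (φ' i) (-t, (p.1, p.2.2, p.2.1)) = symPhi σ (φ' i) (t, p)
    exact symPhi_symm (fun p hp t ht => hφ'symm i p hp t ht) hp rfl ht
  · intro i p hp hdiag t ht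
    show symPhi σ (φ' i) (t, p) = p.2.1
    obtain ⟨b, u, v⟩ := p
    have huv : u = v := hdiag
    subst huv
    have h1 := symPhi_diag (σ := σ) (f := φ' i)
      (fun p hp t ht => hφ'symm i p hp t ht) hp rfl ht
    rw [h1, hφ'1 i (b, u, u) hp]
end

section
/- Let V and V″ be finite-dimensional real inner product spaces of dimension at least 2, B a compact metric space and k ≥ 0. Suppose f : B × S(V) → S(V″) and g : B × S(V″) → S(V) are continuous, and h : [0,1] × B × S(V) → S(V) is a continuous homotopy with h(0,b,u) = u and h(1,b,u) = g(b, f(b,u)) for all (b,u). Suppose further there exist open sets U″_0, …, U″_k covering B × S(V″) × S(V″) and continuous maps φ″_i : [−1,1] × U″_i → S(V″) with φ″_i(1,(b,u,v)) = u, φ″_i(−1,(b,u,v)) = v for all (b,u,v) ∈ U″_i, and φ″_i(t,(b,u,u)) = u for all t whenever (b,u,u) ∈ U″_i. Then there exist open sets U_0, …, U_k covering B × S(V) × S(V) and continuous maps φ_i : [−1,1] × U_i → S(V) with φ_i(1,(b,u,v)) = u, φ_i(−1,(b,u,v)) = v for all (b,u,v) ∈ U_i, and φ_i(t,(b,u,u))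 = u for all t whenever (b,u,u) ∈ U_i. -/
open Set Metric
set_option linter.unusedSectionVars false
set_option maxHeartbeats 1600000
open scoped Classical

namespace Stmt10Aux

/-! ### Geodesic-type paths on the unit sphere -/

section Geo

variable {V : Type*} [NormedAddCommGroup V] [NormedSpace ℝ V]

/-- linear interpolation between `u` at `s = 1` and `v` at `s = -1`. -/
noncomputable def gv (s : ℝ) (u v : V) : V := ((1+s)/2) • u + ((1-s)/2) • v

lemma gv_one (u v : V) : gv 1 u v = u := by
  simp [gv]

lemma gv_neg_one (u v : V) : gv (-1) u v = v := by
  norm_num [gv]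

lemma gv_self (s : ℝ) (u : V) : gv s u u = u := by
  have hc : (1+s)/2 + (1-s)/2 = 1 := by ring
  rw [gv, ← add_smul, hc, one_smul]

lemma gv_eq_left (s : ℝ) (u v : V) : gv s u v = u - ((1-s)/2) • (u - v) := by
  rw [gv]; module

lemma gv_eq_right (s : ℝ) (u v : V) : gv s u v = v + ((1+s)/2) • (u - v) := by
  rw [gv]; module

lemma norm_coe_sphere (u : sphere (0:V) 1) : ‖(u : V)‖ = 1 := by
  have := u.2
  rwa [mem_sphere_zero_iff_norm] at this

lemma norm_gv_le (s : ℝ) (hs : s ∈ Icc (-1:ℝ) 1) (u v : V)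
    (hu : ‖u‖ = 1) (hv : ‖v‖ = 1) : ‖gv s u v‖ ≤ 1 := by
  calc ‖gv s u v‖ ≤ ‖((1+s)/2) • u‖ + ‖((1-s)/2) • v‖ := norm_add_le _ _
  _ ≤ 1 := by
      rw [norm_smul, norm_smul, hu, hv, Real.norm_eq_abs, Real.norm_eq_abs,
        abs_of_nonneg (by linarith [hs.1] : (0:ℝ) ≤ (1+s)/2),
        abs_of_nonneg (by linarith [hs.2] : (0:ℝ) ≤ (1-s)/2)]
      ring_nf; norm_num

lemma norm_gv_ge (s : ℝ) (hs : s ∈ Icc (-1:ℝ) 1) (u v : V)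
    (hu : ‖u‖ = 1) (hv : ‖v‖ = 1) :
    1 - ‖u - v‖ / 2 ≤ ‖gv s u v‖ := by
  rcases le_total ((1-s)/2) ((1+s)/2) with hle | hle
  · have h1 : ‖gv s u v‖ ≥ ‖u‖ - ‖((1-s)/2) • (u - v)‖ := by
      rw [gv_eq_left]
      exact le_trans (le_refl _) (norm_sub_norm_le _ _)
    rw [norm_smul, Real.norm_eq_abs, hu,
      abs_of_nonneg (by linarith [hs.2] : (0:ℝ) ≤ (1-s)/2)] at h1
    have hhalf : (1-s)/2 ≤ 1/2 := by linarith
    nlinarith [norm_nonneg (u - v)]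
  · have h1 : ‖gv s u v‖ ≥ ‖v‖ - ‖((1+s)/2) • (u - v)‖ := by
      rw [gv_eq_right]
      have := norm_sub_norm_le v (-(((1+s)/2) • (u - v)))
      simpa [sub_neg_eq_add, add_comm] using this
    rw [norm_smul, Real.norm_eq_abs, hv,
      abs_of_nonneg (by linarith [hs.1] : (0:ℝ) ≤ (1+s)/2)] at h1
    have hhalf : (1+s)/2 ≤ 1/2 := by linarith
    nlinarith [norm_nonneg (u - v)]

lemma gv_ne_zero {s : ℝ} (hs : s ∈ Icc (-1:ℝ) 1) {u v : V}
    (hu : ‖u‖ = 1) (hv : ‖v‖ = 1) (hd : s = 1 ∨ ‖u - v‖ < 2) :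
    gv s u v ≠ 0 := by
  rcases hd with rfl | hd
  · rw [gv_one]; exact fun h => by simp [h] at hu
  · have := norm_gv_ge s hs u v hu hv
    intro h0
    rw [h0, norm_zero] at this
    linarith

/-- Geodesic-type path on the unit sphere from `v` (at `s = -1`) to `u` (at `s = 1`). -/
noncomputable def gs (s : ℝ) (u v : sphere (0:V) 1) : sphere (0:V) 1 :=
  if hw : gv s (u : V) (v : V) = 0 then u
  else ⟨‖gv s (u:V) (v:V)‖⁻¹ • gv s (u:V) (v:V), by
    rw [mem_sphere_zero_iff_norm, norm_smul, norm_inv, norm_norm,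
      inv_mul_cancel₀ (norm_ne_zero_iff.mpr hw)]⟩

lemma gs_coe {s : ℝ} {u v : sphere (0:V) 1} (hw : gv s (u : V) (v : V) ≠ 0) :
    (gs s u v : V) = ‖gv s (u:V) (v:V)‖⁻¹ • gv s (u:V) (v:V) := by
  rw [gs, dif_neg hw]

lemma gs_of_gv_eq {s : ℝ} {u v : sphere (0:V) 1} (h1 : gv s (u : V) (v : V) = (u : V)) :
    gs s u v = u := by
  have hu : ‖(u:V)‖ = 1 := norm_coe_sphere u
  have hw : gv s (u : V) (v : V) ≠ 0 := by rw [h1]; exact fun h => by simp [h] at hu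
  apply Subtype.ext
  rw [gs_coe hw, h1, hu, inv_one, one_smul]

lemma gs_one (u v : sphere (0:V) 1) : gs 1 u v = u :=
  gs_of_gv_eq (gv_one _ _)

lemma gs_neg_one (u v : sphere (0:V) 1) : gs (-1) u v = v := by
  have hv : ‖(v:V)‖ = 1 := norm_coe_sphere v
  have hw : gv (-1) (u : V) (v : V) ≠ 0 := by
    rw [gv_neg_one]; exact fun h => by simp [h] at hv
  apply Subtype.ext
  rw [gs_coe hw, gv_neg_one, hv, inv_one, one_smul]

lemma gs_self (s : ℝ) (u : sphere (0:V) 1) : gs s u u = u :=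
  gs_of_gv_eq (gv_self _ _)

lemma dist_gs_left {s : ℝ} (hs : s ∈ Icc (-1:ℝ) 1) (u v : sphere (0:V) 1)
    {e : ℝ} (he : e ≤ 1/2) (hd : dist u v ≤ e) :
    dist (gs s u v) u ≤ 2 * e := by
  have hu : ‖(u:V)‖ = 1 := norm_coe_sphere u
  have hv : ‖(v:V)‖ = 1 := norm_coe_sphere v
  have hdv : ‖(u:V) - (v:V)‖ ≤ e := by
    rw [← dist_eq_norm]
    exact le_trans (le_of_eq (Subtype.dist_eq u v).symm) hd
  have he0 : 0 ≤ e := le_trans dist_nonneg hd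
  have hw : gv s (u : V) (v : V) ≠ 0 :=
    gv_ne_zero hs hu hv (Or.inr (by linarith))
  set w := gv s (u : V) (v : V) with hwdef
  have hwu : ‖w - (u:V)‖ ≤ e := by
    rw [hwdef, gv_eq_left]
    have heq : (u:V) - ((1-s)/2) • ((u:V) - (v:V)) - (u:V) =
        -(((1-s)/2) • ((u:V) - (v:V))) := by abel
    rw [heq, norm_neg, norm_smul, Real.norm_eq_abs,
      abs_of_nonneg (by linarith [hs.2] : (0:ℝ) ≤ (1-s)/2)]
    nlinarith [norm_nonneg ((u:V) - (v:V)), hs.1, hs.2]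
  have hwle : ‖w‖ ≤ 1 := norm_gv_le s hs _ _ hu hv
  have hwge : 1 - e/2 ≤ ‖w‖ := by
    have := norm_gv_ge s hs (u:V) (v:V) hu hv
    nlinarith [norm_nonneg ((u:V) - (v:V))]
  have hnw : (0:ℝ) < ‖w‖ := by linarith
  have key : ‖(‖w‖⁻¹ • w) - (u : V)‖ ≤ 2 * e := by
    have h1 : ‖(‖w‖⁻¹ • w) - w‖ = 1 - ‖w‖ := by
      have heq : (‖w‖⁻¹ • w) - w = (‖w‖⁻¹ - 1) • w := by rw [sub_smul, one_smul]
      rw [heq, norm_smul, Real.norm_eq_abs, abs_of_nonneg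
        (by rw [sub_nonneg]; exact le_inv_of_le_inv₀ (by linarith) (by rw [inv_one]; exact hwle)),
        sub_mul, inv_mul_cancel₀ (ne_of_gt hnw), one_mul]
    calc ‖(‖w‖⁻¹ • w) - (u : V)‖ ≤ ‖(‖w‖⁻¹ • w) - w‖ + ‖w - (u:V)‖ := by
          have := norm_add_le ((‖w‖⁻¹ • w) - w) (w - (u:V))
          simpa using this
    _ ≤ (1 - ‖w‖) + e := by rw [h1]; linarith
    _ ≤ 2 * e := by linarith
  rw [Subtype.dist_eq, dist_eq_norm, gs_coe hw]
  exact key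

lemma contOn_gv {α : Type*} [TopologicalSpace α] {A : Set α}
    {σ : α → ℝ} {a b : α → sphere (0:V) 1}
    (hσ : ContinuousOn σ A) (ha : ContinuousOn a A) (hb : ContinuousOn b A) :
    ContinuousOn (fun x => gv (σ x) (a x : V) (b x : V)) A := by
  unfold gv
  have hca : ContinuousOn (fun x => (a x : V)) A :=
    continuous_subtype_val.comp_continuousOn ha
  have hcb : ContinuousOn (fun x => (b x : V)) A :=
    continuous_subtype_val.comp_continuousOn hb
  exact (((continuousOn_const.add hσ).div_const 2).smul hca).add
    (((continuousOn_const.sub hσ).div_const 2).smul hcb)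

lemma contOn_gs {α : Type*} [TopologicalSpace α] {A : Set α}
    {σ : α → ℝ} {a b : α → sphere (0:V) 1}
    (hσ : ContinuousOn σ A) (ha : ContinuousOn a A) (hb : ContinuousOn b A)
    (hw : ∀ x ∈ A, gv (σ x) (a x : V) (b x : V) ≠ 0) :
    ContinuousOn (fun x => gs (σ x) (a x) (b x)) A := by
  rw [Topology.IsInducing.subtypeVal.continuousOn_iff]
  have hwc : ContinuousOn (fun x => gv (σ x) (a x : V) (b x : V)) A :=
    contOn_gv hσ ha hb
  have hmain : ContinuousOn (fun x => ‖gv (σ x) (a x : V) (b x : V)‖⁻¹ •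
      gv (σ x) (a x : V) (b x : V)) A :=
    (hwc.norm.inv₀ (fun x hx => norm_ne_zero_iff.mpr (hw x hx))).smul hwc
  exact hmain.congr (fun x hx => gs_coe (hw x hx))

end Geo

/-! ### Pasting lemma -/

lemma paste4 {α β : Type*} [TopologicalSpace α] [TopologicalSpace β] {f : α → β}
    {D P0 P1 P2 P3 : Set α} (h0 : IsClosed P0) (h1 : IsClosed P1) (h2 : IsClosed P2)
    (h3 : IsClosed P3) (hcov : D ⊆ P0 ∪ P1 ∪ P2 ∪ P3)
    (c0 : ContinuousOn f (D ∩ P0)) (c1 : ContinuousOn f (D ∩ P1))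
    (c2 : ContinuousOn f (D ∩ P2)) (c3 : ContinuousOn f (D ∩ P3)) :
    ContinuousOn f D := by
  intro x hx
  have key : ∀ (P : Set α), IsClosed P → ContinuousOn f (D ∩ P) →
      ContinuousWithinAt f (D ∩ P) x := by
    intro P hP hc
    by_cases hxP : x ∈ P
    · exact hc x ⟨hx, hxP⟩
    · refine continuousWithinAt_of_notMem_closure (fun hcl => hxP ?_)
      exact (closure_minimal inter_subset_right hP) hcl
  have hU : ContinuousWithinAt f ((D ∩ P0) ∪ (D ∩ P1) ∪ (D ∩ P2) ∪ (D ∩ P3)) x :=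
    (((key P0 h0 c0).union (key P1 h1 c1)).union (key P2 h2 c2)).union (key P3 h3 c3)
  refine hU.mono ?_
  intro y hy
  rcases hcov hy with (((h|h)|h)|h)
  · exact Or.inl (Or.inl (Or.inl ⟨hy, h⟩))
  · exact Or.inl (Or.inl (Or.inr ⟨hy, h⟩))
  · exact Or.inl (Or.inr ⟨hy, h⟩)
  · exact Or.inr ⟨hy, h⟩

/-! ### Planners stay near the left endpoint close to the diagonal -/

lemma lemA {X Y : Type*} [MetricSpace X] [MetricSpace Y]
    {C U : Set (X × Y × Y)} {φ : ℝ × (X × Y × Y) → Y}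
    (hC : IsCompact C) (hCU : C ⊆ U)
    (hφ : ContinuousOn φ (Set.Icc (-1:ℝ) 1 ×ˢ U))
    (hdiag : ∀ p ∈ U, p.2.1 = p.2.2 → ∀ t ∈ Set.Icc (-1:ℝ) 1, φ (t, p) = p.2.1)
    {η : ℝ} (hη : 0 < η) :
    ∃ δ, 0 < δ ∧ ∀ t ∈ Set.Icc (-1:ℝ) 1, ∀ p ∈ C, dist p.2.1 p.2.2 ≤ δ →
      dist (φ (t, p)) p.2.1 ≤ η := by
  set K : Set (ℝ × (X × Y × Y)) := Set.Icc (-1:ℝ) 1 ×ˢ C with hK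
  have hKc : IsCompact K := isCompact_Icc.prod hC
  have hKU : K ⊆ Set.Icc (-1:ℝ) 1 ×ˢ U := Set.prod_mono_right hCU
  have hψ : ContinuousOn (fun x : ℝ × (X × Y × Y) => dist (φ x) x.2.2.1) K :=
    continuous_dist.comp_continuousOn
      ((hφ.mono hKU).prodMk (continuous_snd.snd.fst.continuousOn))
  set E : Set (ℝ × (X × Y × Y)) :=
    K ∩ (fun x : ℝ × (X × Y × Y) => dist (φ x) x.2.2.1) ⁻¹' (Set.Ici η) with hE
  have hKclosed : IsClosed K := (isClosed_Icc).prod hC.isClosed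
  have hEclosed : IsClosed E := hψ.preimage_isClosed_of_isClosed hKclosed isClosed_Ici
  have hEc : IsCompact E := hKc.of_isClosed_subset hEclosed inter_subset_left
  rcases E.eq_empty_or_nonempty with hemp | hne
  · refine ⟨1, one_pos, fun t ht p hp _ => ?_⟩
    by_contra hlt
    push_neg at hlt
    have : (t, p) ∈ E := ⟨⟨ht, hp⟩, le_of_lt hlt⟩
    rw [hemp] at this
    exact this
  · obtain ⟨x₀, hx₀E, hmin⟩ := hEc.exists_isMinOn hne
      ((continuous_dist.comp ((continuous_snd.snd.fst).prodMk
        (continuous_snd.snd.snd))).continuousOn)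
    have hρ0 : 0 < dist x₀.2.2.1 x₀.2.2.2 := by
      rcases lt_or_eq_of_le (dist_nonneg : (0:ℝ) ≤ dist x₀.2.2.1 x₀.2.2.2) with hlt | heq
      · exact hlt
      · exfalso
        have hdiageq : x₀.2.2.1 = x₀.2.2.2 := by
          rw [← dist_eq_zero]; exact heq.symm
        have hx₀U : x₀.2 ∈ U := hCU hx₀E.1.2
        have hval := hdiag x₀.2 hx₀U hdiageq x₀.1 hx₀E.1.1
        have hge := hx₀E.2
        simp only [Set.mem_preimage, Set.mem_Ici] at hge
        rw [show x₀ = (x₀.1, x₀.2) from rfl, hval, dist_self] at hge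
        linarith
    refine ⟨dist x₀.2.2.1 x₀.2.2.2 / 2, by linarith, fun t ht p hp hd => ?_⟩
    by_contra hlt
    push_neg at hlt
    have hmem : (t, p) ∈ E := ⟨⟨ht, hp⟩, le_of_lt hlt⟩
    have := hmin hmem
    simp only [Function.comp] at this
    change dist x₀.2.2.1 x₀.2.2.2 ≤ dist p.2.1 p.2.2 at this
    linarith


section Main

variable {V V'' B : Type*} [NormedAddCommGroup V] [NormedSpace ℝ V]
  [NormedAddCommGroup V''] [NormedSpace ℝ V''] [MetricSpace B]

/-- comparison map on fibrewise pairs -/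
noncomputable def FF (f : B × sphere (0:V) 1 → sphere (0:V'') 1)
    (p : B × sphere (0:V) 1 × sphere (0:V) 1) :
    B × sphere (0:V'') 1 × sphere (0:V'') 1 :=
  (p.1, f (p.1, p.2.1), f (p.1, p.2.2))

lemma contFF {f : B × sphere (0:V) 1 → sphere (0:V'') 1} (hf : Continuous f) :
    Continuous (FF f) := by
  unfold FF
  exact continuous_fst.prodMk
    ((hf.comp (continuous_fst.prodMk continuous_snd.fst)).prodMk
      (hf.comp (continuous_fst.prodMk continuous_snd.snd)))

noncomputable def dd (p : B × sphere (0:V) 1 × sphere (0:V) 1) : ℝ := dist p.2.1 p.2.2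

noncomputable def qq (ε : ℝ) (p : B × sphere (0:V) 1 × sphere (0:V) 1) : ℝ :=
  min (2 * dd p / ε) 1

noncomputable def cc (ε : ℝ) (p : B × sphere (0:V) 1 × sphere (0:V) 1) : ℝ :=
  max (-1) (min 1 (4 * dd p / ε - 3))

noncomputable def Acl (τ : ℝ) : ℝ := max 0 (min 1 (min (5*τ) (5*(1-τ))))

noncomputable def sl2 (τ : ℝ) : ℝ := max (-1) (min 1 (3 - 10*τ))

noncomputable def sl3 (τ : ℝ) : ℝ := max (-1) (min 1 (5 - 10*τ))

noncomputable def sl4 (c τ : ℝ) : ℝ := max (-1) (min 1 (((8 - 10*τ) * c - (10*τ - 6)) / 2))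

variable (h : ℝ × (B × sphere (0:V) 1) → sphere (0:V) 1)
  (g : B × sphere (0:V'') 1 → sphere (0:V) 1)
  (f : B × sphere (0:V) 1 → sphere (0:V'') 1)
  (φp : ℝ × (B × sphere (0:V'') 1 × sphere (0:V'') 1) → sphere (0:V'') 1)
  (ε : ℝ)

noncomputable def PhiA (x : ℝ × (B × sphere (0:V) 1 × sphere (0:V) 1)) : sphere (0:V) 1 :=
  h (qq ε x.2 * Acl x.1, (x.2.1, gs (max (cc ε x.2) (sl2 x.1)) x.2.2.1 x.2.2.2))

noncomputable def Xp (p : B × sphere (0:V) 1 × sphere (0:V) 1) : sphere (0:V) 1 :=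
  h (1, (p.1, gs (cc ε p) p.2.1 p.2.2))

noncomputable def Yp (p : B × sphere (0:V) 1 × sphere (0:V) 1) : sphere (0:V) 1 :=
  g (p.1, φp (cc ε p, FF f p))

noncomputable def Phi1 (x : ℝ × (B × sphere (0:V) 1 × sphere (0:V) 1)) : sphere (0:V) 1 :=
  gs (sl3 x.1) (Xp h ε x.2) (Yp g f φp ε x.2)

noncomputable def Phi2 (x : ℝ × (B × sphere (0:V) 1 × sphere (0:V) 1)) : sphere (0:V) 1 :=
  g (x.2.1, φp (sl4 (cc ε x.2) x.1, FF f x.2))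

noncomputable def Phi3 (x : ℝ × (B × sphere (0:V) 1 × sphere (0:V) 1)) : sphere (0:V) 1 :=
  h (max 0 (min 1 (5*(1-x.1))), (x.2.1, x.2.2.2))

noncomputable def Phi (x : ℝ × (B × sphere (0:V) 1 × sphere (0:V) 1)) : sphere (0:V) 1 :=
  if dd x.2 ≤ ε/2 ∨ x.1 ≤ 2/5 then PhiA h ε x
  else if x.1 ≤ 3/5 then Phi1 h g f φp ε x
  else if x.1 ≤ 4/5 then Phi2 g f φp ε x
  else Phi3 h x

variable [CompactSpace B] [ProperSpace V] [ProperSpace V'']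

theorem key
    (hf : Continuous f) (hg : Continuous g)
    (hhcont : ContinuousOn h (Set.Icc (0 : ℝ) 1 ×ˢ Set.univ))
    (hh0 : ∀ p : B × sphere (0 : V) 1, h (0, p) = p.2)
    (hh1 : ∀ p : B × sphere (0 : V) 1, h (1, p) = g (p.1, f p))
    (O C Up : Set (B × sphere (0 : V'') 1 × sphere (0 : V'') 1))
    (hOC : O ⊆ C) (hC : IsCompact C) (hCU : C ⊆ Up)
    (hφcont : ContinuousOn φp (Set.Icc (-1 : ℝ) 1 ×ˢ Up))
    (hφ1 : ∀ p ∈ Up, φp (1, p) = p.2.1)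
    (hφ2 : ∀ p ∈ Up, φp (-1, p) = p.2.2)
    (hφdiag : ∀ p ∈ Up, p.2.1 = p.2.2 → ∀ t ∈ Set.Icc (-1 : ℝ) 1, φp (t, p) = p.2.1) :
    ∃ φ : ℝ × (B × sphere (0 : V) 1 × sphere (0 : V) 1) → sphere (0 : V) 1,
      ContinuousOn φ (Set.Icc (-1 : ℝ) 1 ×ˢ (FF f ⁻¹' O)) ∧
      (∀ p ∈ FF f ⁻¹' O, φ (1, p) = p.2.1) ∧
      (∀ p ∈ FF f ⁻¹' O, φ (-1, p) = p.2.2) ∧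
      (∀ p ∈ FF f ⁻¹' O, p.2.1 = p.2.2 →
        ∀ t ∈ Set.Icc (-1 : ℝ) 1, φ (t, p) = p.2.1) := by
  classical
  -- uniform-continuity moduli
  have modf : ∀ η : ℝ, 0 < η → ∃ δ, 0 < δ ∧ ∀ (b : B) (u v : sphere (0:V) 1),
      dist u v ≤ δ → dist (f (b, u)) (f (b, v)) ≤ η := by
    intro η hη
    have hu := CompactSpace.uniformContinuous_of_continuous hf
    rw [Metric.uniformContinuous_iff] at hu
    obtain ⟨δ, hδ0, hδ⟩ := hu η hη
    refine ⟨δ/2, by linarith, fun b u v hd => ?_⟩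
    have hlt : dist ((b,u) : B × sphere (0:V) 1) (b,v) < δ := by
      rw [Prod.dist_eq]
      simp only [dist_self]
      rw [max_eq_right dist_nonneg]
      linarith
    exact le_of_lt (hδ hlt)
  have modg : ∀ η : ℝ, 0 < η → ∃ δ, 0 < δ ∧ ∀ (b : B) (x y : sphere (0:V'') 1),
      dist x y ≤ δ → dist (g (b, x)) (g (b, y)) ≤ η := by
    intro η hη
    have hu := CompactSpace.uniformContinuous_of_continuous hg
    rw [Metric.uniformContinuous_iff] at hu
    obtain ⟨δ, hδ0, hδ⟩ := hu η hη
    refine ⟨δ/2, by linarith, fun b x y hd => ?_⟩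
    have hlt : dist ((b,x) : B × sphere (0:V'') 1) (b,y) < δ := by
      rw [Prod.dist_eq]
      simp only [dist_self]
      rw [max_eq_right dist_nonneg]
      linarith
    exact le_of_lt (hδ hlt)
  obtain ⟨η, hη0, hηprop⟩ := modg (1/2) (by norm_num)
  obtain ⟨δA, hδA0, hδAprop⟩ := lemA hC hCU hφcont hφdiag hη0
  obtain ⟨δf, hδf0, hδfprop⟩ := modf (min η δA) (lt_min hη0 hδA0)
  set ε : ℝ := min (δf/2) (1/2) with hεdef
  have hε0 : 0 < ε := lt_min (by linarith) (by norm_num)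
  have hεhalf : ε ≤ 1/2 := min_le_right _ _
  have hε2δf : 2*ε ≤ δf := by
    have := min_le_left (δf/2) (1/2)
    rw [← hεdef] at this
    linarith
  have hεδf : ε ≤ δf := by linarith
  set P : Set (B × sphere (0:V) 1 × sphere (0:V) 1) := FF f ⁻¹' O with hPdef
  have hPU : ∀ p ∈ P, FF f p ∈ Up := fun p hp => hCU (hOC hp)
  have hPC : ∀ p ∈ P, FF f p ∈ C := fun p hp => hOC hp
  -- elementary facts about the parameter functions
  have hdd0 : ∀ p : B × sphere (0:V) 1 × sphere (0:V) 1, 0 ≤ dd p := fun p => dist_nonneg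
  have hqmem : ∀ p : B × sphere (0:V) 1 × sphere (0:V) 1, qq ε p ∈ Icc (0:ℝ) 1 := by
    intro p
    exact ⟨le_min (div_nonneg (by linarith [hdd0 p]) hε0.le) zero_le_one, min_le_right _ _⟩
  have hcmem : ∀ p : B × sphere (0:V) 1 × sphere (0:V) 1, cc ε p ∈ Icc (-1:ℝ) 1 :=
    fun p => ⟨le_max_left _ _, max_le (by norm_num) (min_le_left _ _)⟩
  have hAmem : ∀ τ : ℝ, Acl τ ∈ Icc (0:ℝ) 1 :=
    fun τ => ⟨le_max_left _ _, max_le zero_le_one (min_le_left _ _)⟩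
  have hs2mem : ∀ τ : ℝ, sl2 τ ∈ Icc (-1:ℝ) 1 :=
    fun τ => ⟨le_max_left _ _, max_le (by norm_num) (min_le_left _ _)⟩
  have hs3mem : ∀ τ : ℝ, sl3 τ ∈ Icc (-1:ℝ) 1 :=
    fun τ => ⟨le_max_left _ _, max_le (by norm_num) (min_le_left _ _)⟩
  have hs4mem : ∀ (c τ : ℝ), sl4 c τ ∈ Icc (-1:ℝ) 1 :=
    fun c τ => ⟨le_max_left _ _, max_le (by norm_num) (min_le_left _ _)⟩
  have hqone : ∀ p : B × sphere (0:V) 1 × sphere (0:V) 1, ε/2 ≤ dd p → qq ε p = 1 := by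
    intro p hp
    unfold qq
    rw [min_eq_right]
    rw [le_div_iff₀ hε0]
    linarith
  have hqzero : ∀ p : B × sphere (0:V) 1 × sphere (0:V) 1, dd p = 0 → qq ε p = 0 := by
    intro p hp
    unfold qq
    rw [hp]
    norm_num
  have hcone : ∀ p : B × sphere (0:V) 1 × sphere (0:V) 1, ε ≤ dd p → cc ε p = 1 := by
    intro p hp
    unfold cc
    have h4 : (1:ℝ) ≤ 4 * dd p / ε - 3 := by
      rw [le_sub_iff_add_le, le_div_iff₀ hε0]
      linarith
    rw [min_eq_left h4, max_eq_right (by norm_num : (-1:ℝ) ≤ 1)]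
  have hcneg : ∀ p : B × sphere (0:V) 1 × sphere (0:V) 1, dd p ≤ ε/2 → cc ε p = -1 := by
    intro p hp
    unfold cc
    have h4 : 4 * dd p / ε - 3 ≤ -1 := by
      rw [sub_le_iff_le_add, div_le_iff₀ hε0]
      linarith
    rw [min_eq_right (by linarith : 4 * dd p / ε - 3 ≤ 1), max_eq_left h4]
  have hdistnorm : ∀ u v : sphere (0:V) 1, dist u v = ‖(u:V) - (v:V)‖ := by
    intro u v
    rw [Subtype.dist_eq, dist_eq_norm]
  -- nonvanishing of the interpolants
  have hgvmain : ∀ (p : B × sphere (0:V) 1 × sphere (0:V) 1) (s : ℝ), s ∈ Icc (-1:ℝ) 1 →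
      (dd p ≤ ε ∨ s = 1) → gv s (p.2.1 : V) (p.2.2 : V) ≠ 0 := by
    intro p s hs hcase
    apply gv_ne_zero hs (norm_coe_sphere _) (norm_coe_sphere _)
    rcases hcase with hd | h1
    · right
      rw [← hdistnorm]
      calc dist p.2.1 p.2.2 ≤ ε := hd
      _ < 2 := by linarith
    · left; exact h1
  have hsA : ∀ (τ:ℝ) (p : B × sphere (0:V) 1 × sphere (0:V) 1),
      max (cc ε p) (sl2 τ) ∈ Icc (-1:ℝ) 1 :=
    fun τ p => ⟨le_trans (hcmem p).1 (le_max_left _ _), max_le (hcmem p).2 (hs2mem τ).2⟩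
  have hgvA : ∀ (τ : ℝ) (p : B × sphere (0:V) 1 × sphere (0:V) 1),
      gv (max (cc ε p) (sl2 τ)) (p.2.1 : V) (p.2.2 : V) ≠ 0 := by
    intro τ p
    rcases le_total (dd p) ε with hd | hd
    · exact hgvmain p _ (hsA τ p) (Or.inl hd)
    · refine hgvmain p _ (hsA τ p) (Or.inr ?_)
      rw [hcone p hd]
      exact max_eq_left (hs2mem τ).2
  have hgvX : ∀ p : B × sphere (0:V) 1 × sphere (0:V) 1,
      gv (cc ε p) (p.2.1 : V) (p.2.2 : V) ≠ 0 := by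
    intro p
    rcases le_total (dd p) ε with hd | hd
    · exact hgvmain p _ (hcmem p) (Or.inl hd)
    · exact hgvmain p _ (hcmem p) (Or.inr (hcone p hd))
  -- the key distance estimate between the two junction points
  have hXeq : ∀ p : B × sphere (0:V) 1 × sphere (0:V) 1,
      Xp h ε p = g (p.1, f (p.1, gs (cc ε p) p.2.1 p.2.2)) := by
    intro p
    unfold Xp
    exact hh1 (p.1, gs (cc ε p) p.2.1 p.2.2)
  have hKE : ∀ p ∈ P, dist (Xp h ε p) (Yp g f φp ε p) ≤ 1 := by
    intro p hp
    rcases le_total (dd p) ε with hd | hd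
    · have h1 : dist (gs (cc ε p) p.2.1 p.2.2) p.2.1 ≤ 2*ε :=
        dist_gs_left (hcmem p) _ _ hεhalf hd
      have h2 : dist (f (p.1, gs (cc ε p) p.2.1 p.2.2)) (f (p.1, p.2.1)) ≤ min η δA :=
        hδfprop p.1 _ _ (by linarith)
      have h3 : dist (Xp h ε p) (g (p.1, f (p.1, p.2.1))) ≤ 1/2 := by
        rw [hXeq p]
        exact hηprop p.1 _ _ (le_trans h2 (min_le_left _ _))
      have h4 : dist (f (p.1, p.2.1)) (f (p.1, p.2.2)) ≤ δA := by
        have hddval : dd p = dist p.2.1 p.2.2 := rfl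
        have := hδfprop p.1 p.2.1 p.2.2 (by linarith : dist p.2.1 p.2.2 ≤ δf)
        exact le_trans this (min_le_right _ _)
      have h5 : dist (φp (cc ε p, FF f p)) (f (p.1, p.2.1)) ≤ η :=
        hδAprop (cc ε p) (hcmem p) (FF f p) (hPC p hp) h4
      have h6 : dist (Yp g f φp ε p) (g (p.1, f (p.1, p.2.1))) ≤ 1/2 :=
        hηprop p.1 _ _ h5
      calc dist (Xp h ε p) (Yp g f φp ε p)
          ≤ dist (Xp h ε p) (g (p.1, f (p.1, p.2.1)))
            + dist (g (p.1, f (p.1, p.2.1))) (Yp g f φp ε p) := dist_triangle _ _ _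
      _ ≤ 1/2 + 1/2 := add_le_add h3 (by rw [dist_comm]; exact h6)
      _ = 1 := by norm_num
    · have hXv : Xp h ε p = g (p.1, f (p.1, p.2.1)) := by
        rw [hXeq p, hcone p hd, gs_one]
      have hYv : Yp g f φp ε p = g (p.1, f (p.1, p.2.1)) := by
        unfold Yp
        rw [hcone p hd, hφ1 (FF f p) (hPU p hp)]
        rfl
      rw [hXv, hYv, dist_self]
      norm_num
  have hgvXY : ∀ p ∈ P, ∀ s : ℝ, s ∈ Icc (-1:ℝ) 1 →
      gv s (Xp h ε p : V) (Yp g f φp ε p : V) ≠ 0 := by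
    intro p hp s hs
    apply gv_ne_zero hs (norm_coe_sphere _) (norm_coe_sphere _)
    right
    rw [← hdistnorm]
    linarith [hKE p hp]
  -- continuity of the building blocks
  have contdd : Continuous (dd : B × sphere (0:V) 1 × sphere (0:V) 1 → ℝ) := by
    unfold dd
    exact (continuous_snd.fst).dist (continuous_snd.snd)
  have contqq : Continuous (qq ε : B × sphere (0:V) 1 × sphere (0:V) 1 → ℝ) := by
    unfold qq
    exact ((continuous_const.mul contdd).div_const ε).min continuous_const
  have contcc : Continuous (cc ε : B × sphere (0:V) 1 × sphere (0:V) 1 → ℝ) := by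
    unfold cc
    exact continuous_const.max (continuous_const.min
      (((continuous_const.mul contdd).div_const ε).sub continuous_const))
  have contAcl : Continuous Acl := by
    unfold Acl
    exact continuous_const.max (continuous_const.min
      ((continuous_const.mul continuous_id).min
        (continuous_const.mul (continuous_const.sub continuous_id))))
  have contsl2 : Continuous sl2 := by
    unfold sl2
    exact continuous_const.max (continuous_const.min
      (continuous_const.sub (continuous_const.mul continuous_id)))
  have contsl3 : Continuous sl3 := by
    unfold sl3
    exact continuous_const.max (continuous_const.min
      (continuous_const.sub (continuous_const.mul continuous_id)))
  set D : Set (ℝ × (B × sphere (0:V) 1 × sphere (0:V) 1)) := Icc (0:ℝ) 1 ×ˢ P with hDdef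
  have contPhiA : ContinuousOn (PhiA h ε) D := by
    have hinner : ContinuousOn (fun x : ℝ × (B × sphere (0:V) 1 × sphere (0:V) 1) =>
        ((qq ε x.2 * Acl x.1, (x.2.1, gs (max (cc ε x.2) (sl2 x.1)) x.2.2.1 x.2.2.2)) :
          ℝ × (B × sphere (0:V) 1))) D := by
      apply ContinuousOn.prodMk
      · exact ((contqq.comp continuous_snd).mul (contAcl.comp continuous_fst)).continuousOn
      · apply ContinuousOn.prodMk
        · exact continuous_snd.fst.continuousOn
        · apply contOn_gs
          · exact ((contcc.comp continuous_snd).max (contsl2.comp continuous_fst)).continuousOn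
          · exact continuous_snd.snd.fst.continuousOn
          · exact continuous_snd.snd.snd.continuousOn
          · intro x _
            exact hgvA x.1 x.2
    have hmaps : MapsTo (fun x : ℝ × (B × sphere (0:V) 1 × sphere (0:V) 1) =>
        ((qq ε x.2 * Acl x.1, (x.2.1, gs (max (cc ε x.2) (sl2 x.1)) x.2.2.1 x.2.2.2)) :
          ℝ × (B × sphere (0:V) 1))) D (Icc (0:ℝ) 1 ×ˢ univ) := by
      intro x _
      refine ⟨⟨?_, ?_⟩, trivial⟩
      · exact mul_nonneg (hqmem x.2).1 (hAmem x.1).1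
      · calc qq ε x.2 * Acl x.1 ≤ 1 * 1 :=
            mul_le_mul (hqmem x.2).2 (hAmem x.1).2 (hAmem x.1).1 zero_le_one
        _ = 1 := one_mul 1
    exact hhcont.comp hinner hmaps
  have contXD : ContinuousOn (fun x : ℝ × (B × sphere (0:V) 1 × sphere (0:V) 1) =>
      Xp h ε x.2) D := by
    have hinner : ContinuousOn (fun x : ℝ × (B × sphere (0:V) 1 × sphere (0:V) 1) =>
        (((1:ℝ), (x.2.1, gs (cc ε x.2) x.2.2.1 x.2.2.2)) : ℝ × (B × sphere (0:V) 1))) D := by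
      apply ContinuousOn.prodMk continuousOn_const
      apply ContinuousOn.prodMk continuous_snd.fst.continuousOn
      apply contOn_gs ((contcc.comp continuous_snd).continuousOn)
        continuous_snd.snd.fst.continuousOn continuous_snd.snd.snd.continuousOn
      intro x _
      exact hgvX x.2
    have hmaps : MapsTo (fun x : ℝ × (B × sphere (0:V) 1 × sphere (0:V) 1) =>
        (((1:ℝ), (x.2.1, gs (cc ε x.2) x.2.2.1 x.2.2.2)) : ℝ × (B × sphere (0:V) 1))) D
        (Icc (0:ℝ) 1 ×ˢ univ) :=
      fun x _ => ⟨⟨zero_le_one, le_refl 1⟩, trivial⟩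
    exact hhcont.comp hinner hmaps
  have contYD : ContinuousOn (fun x : ℝ × (B × sphere (0:V) 1 × sphere (0:V) 1) =>
      Yp g f φp ε x.2) D := by
    apply hg.comp_continuousOn
    apply ContinuousOn.prodMk continuous_snd.fst.continuousOn
    have hinner : ContinuousOn (fun x : ℝ × (B × sphere (0:V) 1 × sphere (0:V) 1) =>
        ((cc ε x.2, FF f x.2) : ℝ × (B × sphere (0:V'') 1 × sphere (0:V'') 1))) D :=
      ((contcc.comp continuous_snd).continuousOn).prodMk
        (((contFF hf).comp continuous_snd).continuousOn)
    have hmaps : MapsTo (fun x : ℝ × (B × sphere (0:V) 1 × sphere (0:V) 1) =>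
        ((cc ε x.2, FF f x.2) : ℝ × (B × sphere (0:V'') 1 × sphere (0:V'') 1))) D
        (Icc (-1:ℝ) 1 ×ˢ Up) :=
      fun x hx => ⟨hcmem x.2, hPU x.2 hx.2⟩
    exact hφcont.comp hinner hmaps
  have contPhi1 : ContinuousOn (Phi1 h g f φp ε) D := by
    apply contOn_gs ((contsl3.comp continuous_fst).continuousOn) contXD contYD
    intro x hx
    exact hgvXY x.2 hx.2 _ (hs3mem x.1)
  have contPhi2 : ContinuousOn (Phi2 g f φp ε) D := by
    apply hg.comp_continuousOn
    apply ContinuousOn.prodMk continuous_snd.fst.continuousOn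
    have contsl4c : Continuous (fun x : ℝ × (B × sphere (0:V) 1 × sphere (0:V) 1) =>
        sl4 (cc ε x.2) x.1) := by
      unfold sl4
      apply continuous_const.max
      apply continuous_const.min
      exact (((continuous_const.sub (continuous_const.mul continuous_fst)).mul
        (contcc.comp continuous_snd)).sub
        ((continuous_const.mul continuous_fst).sub continuous_const)).div_const 2
    have hinner : ContinuousOn (fun x : ℝ × (B × sphere (0:V) 1 × sphere (0:V) 1) =>
        ((sl4 (cc ε x.2) x.1, FF f x.2) : ℝ × (B × sphere (0:V'') 1 × sphere (0:V'') 1))) D :=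
      contsl4c.continuousOn.prodMk (((contFF hf).comp continuous_snd).continuousOn)
    have hmaps : MapsTo (fun x : ℝ × (B × sphere (0:V) 1 × sphere (0:V) 1) =>
        ((sl4 (cc ε x.2) x.1, FF f x.2) : ℝ × (B × sphere (0:V'') 1 × sphere (0:V'') 1))) D
        (Icc (-1:ℝ) 1 ×ˢ Up) :=
      fun x hx => ⟨hs4mem _ _, hPU x.2 hx.2⟩
    exact hφcont.comp hinner hmaps
  have contPhi3 : ContinuousOn (Phi3 h) D := by
    have hinner : ContinuousOn (fun x : ℝ × (B × sphere (0:V) 1 × sphere (0:V) 1) =>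
        ((max 0 (min 1 (5*(1-x.1))), (x.2.1, x.2.2.2)) : ℝ × (B × sphere (0:V) 1))) D :=
      ((continuous_const.max (continuous_const.min (continuous_const.mul
        (continuous_const.sub continuous_fst)))).prodMk
        (continuous_snd.fst.prodMk continuous_snd.snd.snd)).continuousOn
    have hmaps : MapsTo (fun x : ℝ × (B × sphere (0:V) 1 × sphere (0:V) 1) =>
        ((max 0 (min 1 (5*(1-x.1))), (x.2.1, x.2.2.2)) : ℝ × (B × sphere (0:V) 1))) D
        (Icc (0:ℝ) 1 ×ˢ univ) :=
      fun x _ => ⟨⟨le_max_left _ _, max_le zero_le_one (min_le_left _ _)⟩, trivial⟩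
    exact hhcont.comp hinner hmaps
  -- the four closed pieces
  set Q0 : Set (ℝ × (B × sphere (0:V) 1 × sphere (0:V) 1)) :=
    {x | dd x.2 ≤ ε/2 ∨ x.1 ≤ 2/5} with hQ0def
  have hQ0closed : IsClosed Q0 := by
    have hQ : Q0 = {x : ℝ × (B × sphere (0:V) 1 × sphere (0:V) 1) | dd x.2 ≤ ε/2}
        ∪ {x | x.1 ≤ 2/5} := rfl
    rw [hQ]
    exact (isClosed_le (contdd.comp continuous_snd) continuous_const).union
      (isClosed_le continuous_fst continuous_const)
  set Q1 : Set (ℝ × (B × sphere (0:V) 1 × sphere (0:V) 1)) :=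
    {x | 2/5 ≤ x.1 ∧ x.1 ≤ 3/5 ∧ ε/2 ≤ dd x.2} with hQ1def
  have hQ1closed : IsClosed Q1 := by
    have hQ : Q1 = {x : ℝ × (B × sphere (0:V) 1 × sphere (0:V) 1) | 2/5 ≤ x.1}
        ∩ ({x | x.1 ≤ 3/5} ∩ {x | ε/2 ≤ dd x.2}) := rfl
    rw [hQ]
    exact (isClosed_le continuous_const continuous_fst).inter
      ((isClosed_le continuous_fst continuous_const).inter
        (isClosed_le continuous_const (contdd.comp continuous_snd)))
  set Q2 : Set (ℝ × (B × sphere (0:V) 1 × sphere (0:V) 1)) :=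
    {x | 3/5 ≤ x.1 ∧ x.1 ≤ 4/5 ∧ ε/2 ≤ dd x.2} with hQ2def
  have hQ2closed : IsClosed Q2 := by
    have hQ : Q2 = {x : ℝ × (B × sphere (0:V) 1 × sphere (0:V) 1) | 3/5 ≤ x.1}
        ∩ ({x | x.1 ≤ 4/5} ∩ {x | ε/2 ≤ dd x.2}) := rfl
    rw [hQ]
    exact (isClosed_le continuous_const continuous_fst).inter
      ((isClosed_le continuous_fst continuous_const).inter
        (isClosed_le continuous_const (contdd.comp continuous_snd)))
  set Q3 : Set (ℝ × (B × sphere (0:V) 1 × sphere (0:V) 1)) :=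
    {x | 4/5 ≤ x.1 ∧ ε/2 ≤ dd x.2} with hQ3def
  have hQ3closed : IsClosed Q3 := by
    have hQ : Q3 = {x : ℝ × (B × sphere (0:V) 1 × sphere (0:V) 1) | 4/5 ≤ x.1}
        ∩ {x | ε/2 ≤ dd x.2} := rfl
    rw [hQ]
    exact (isClosed_le continuous_const continuous_fst).inter
      (isClosed_le continuous_const (contdd.comp continuous_snd))
  have hcov : D ⊆ Q0 ∪ Q1 ∪ Q2 ∪ Q3 := by
    intro x _
    by_cases hd : dd x.2 ≤ ε/2
    · exact Or.inl (Or.inl (Or.inl (Or.inl hd)))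
    push_neg at hd
    by_cases h2 : x.1 ≤ 2/5
    · exact Or.inl (Or.inl (Or.inl (Or.inr h2)))
    push_neg at h2
    by_cases h3 : x.1 ≤ 3/5
    · exact Or.inl (Or.inl (Or.inr ⟨le_of_lt h2, h3, le_of_lt hd⟩))
    push_neg at h3
    by_cases h4 : x.1 ≤ 4/5
    · exact Or.inl (Or.inr ⟨by linarith, h4, le_of_lt hd⟩)
    push_neg at h4
    exact Or.inr ⟨by linarith, le_of_lt hd⟩
  -- convenient boundary computations
  have hs2low : ∀ τ : ℝ, 2/5 ≤ τ → sl2 τ = -1 := by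
    intro τ hτ
    unfold sl2
    rw [min_eq_right (by linarith), max_eq_left (by linarith)]
  have hAone : ∀ τ : ℝ, 1/5 ≤ τ → τ ≤ 4/5 → Acl τ = 1 := by
    intro τ h1 h2
    unfold Acl
    rw [min_eq_left (le_min (by linarith) (by linarith)), max_eq_right zero_le_one]
  have hbdY : ∀ p ∈ P, g (p.1, φp (-1, FF f p)) = h (1, (p.1, p.2.2)) := by
    intro p hp
    rw [hφ2 (FF f p) (hPU p hp), hh1 (p.1, p.2.2)]
    rfl
  -- the function agrees with each piece on the corresponding closed set
  have e0 : EqOn (Phi h g f φp ε) (PhiA h ε) (D ∩ Q0) := by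
    intro x hx
    have hcond : dd x.2 ≤ ε/2 ∨ x.1 ≤ 2/5 := hx.2
    unfold Phi
    rw [if_pos hcond]
  have e1 : EqOn (Phi h g f φp ε) (Phi1 h g f φp ε) (D ∩ Q1) := by
    intro x hx
    obtain ⟨hxD, hτl, hτr, hdl⟩ := hx
    unfold Phi
    by_cases hC0 : dd x.2 ≤ ε/2 ∨ x.1 ≤ 2/5
    · rw [if_pos hC0]
      rcases hC0 with hdeq | hτeq
      · have hq1 : qq ε x.2 = 1 := hqone x.2 hdl
        have hcval : cc ε x.2 = -1 := hcneg x.2 hdeq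
        have hs2v : sl2 x.1 = -1 := hs2low x.1 hτl
        have hA1 : Acl x.1 = 1 := hAone x.1 (by linarith) (by linarith)
        unfold PhiA Phi1 Xp Yp
        rw [hq1, hcval, hs2v, hA1, one_mul, max_self, gs_neg_one]
        rw [hbdY x.2 hxD.2, gs_self]
      · have hτE : x.1 = 2/5 := le_antisymm hτeq hτl
        have hq1 : qq ε x.2 = 1 := hqone x.2 hdl
        have hs2v : sl2 x.1 = -1 := hs2low x.1 hτl
        have hA1 : Acl x.1 = 1 := hAone x.1 (by linarith) (by linarith)
        have hs3v : sl3 x.1 = 1 := by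
          unfold sl3
          rw [hτE]
          norm_num
        unfold PhiA Phi1
        rw [hq1, hs2v, hA1, hs3v, gs_one, one_mul, max_eq_left (hcmem x.2).1]
        rfl
    · rw [if_neg hC0, if_pos hτr]
  have e2 : EqOn (Phi h g f φp ε) (Phi2 g f φp ε) (D ∩ Q2) := by
    intro x hx
    obtain ⟨hxD, hτl, hτr, hdl⟩ := hx
    unfold Phi
    by_cases hC0 : dd x.2 ≤ ε/2 ∨ x.1 ≤ 2/5
    · rw [if_pos hC0]
      have hdeq : dd x.2 ≤ ε/2 := by
        rcases hC0 with hh' | hh'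
        · exact hh'
        · linarith
      have hq1 : qq ε x.2 = 1 := hqone x.2 hdl
      have hcval : cc ε x.2 = -1 := hcneg x.2 hdeq
      have hs2v : sl2 x.1 = -1 := hs2low x.1 (by linarith)
      have hA1 : Acl x.1 = 1 := hAone x.1 (by linarith) (by linarith)
      have hs4v : sl4 (-1) x.1 = -1 := by
        unfold sl4
        have harg : ((8 - 10*x.1) * (-1:ℝ) - (10*x.1 - 6))/2 = -1 := by ring
        rw [harg, min_eq_right (by norm_num : (-1:ℝ) ≤ 1), max_self]
      unfold PhiA Phi2
      rw [hq1, hcval, hs2v, hA1, one_mul, max_self, gs_neg_one, hs4v]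
      rw [hbdY x.2 hxD.2]
    · rw [if_neg hC0]
      by_cases hτ3 : x.1 ≤ 3/5
      · rw [if_pos hτ3]
        have hτE : x.1 = 3/5 := le_antisymm hτ3 hτl
        have hs3v : sl3 x.1 = -1 := by
          unfold sl3
          rw [hτE]
          norm_num
        have hs4v : sl4 (cc ε x.2) x.1 = cc ε x.2 := by
          unfold sl4
          rw [hτE]
          have harg : ((8 - 10*(3/5:ℝ)) * (cc ε x.2) - (10*(3/5:ℝ) - 6))/2 = cc ε x.2 := by
            ring
          rw [harg, min_eq_right (hcmem x.2).2, max_eq_right (hcmem x.2).1]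
        unfold Phi1 Phi2 Yp
        rw [hs3v, gs_neg_one, hs4v]
      · rw [if_neg hτ3, if_pos hτr]
  have e3 : EqOn (Phi h g f φp ε) (Phi3 h) (D ∩ Q3) := by
    intro x hx
    obtain ⟨hxD, hτl, hdl⟩ := hx
    unfold Phi
    by_cases hC0 : dd x.2 ≤ ε/2 ∨ x.1 ≤ 2/5
    · rw [if_pos hC0]
      have hdeq : dd x.2 ≤ ε/2 := by
        rcases hC0 with hh' | hh'
        · exact hh'
        · linarith
      have hq1 : qq ε x.2 = 1 := hqone x.2 hdl
      have hcval : cc ε x.2 = -1 := hcneg x.2 hdeq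
      have hs2v : sl2 x.1 = -1 := hs2low x.1 (by linarith)
      have hA : Acl x.1 = max 0 (min 1 (5*(1-x.1))) := by
        unfold Acl
        rw [min_eq_right (by linarith : 5*(1-x.1) ≤ 5*x.1)]
      unfold PhiA Phi3
      rw [hq1, hcval, hs2v, max_self, gs_neg_one, one_mul, hA]
    · rw [if_neg hC0]
      have hτ3 : ¬ (x.1 ≤ 3/5) := by
        push_neg
        linarith
      rw [if_neg hτ3]
      by_cases hτ4 : x.1 ≤ 4/5
      · rw [if_pos hτ4]
        have hτE : x.1 = 4/5 := le_antisymm hτ4 hτl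
        have hs4v : sl4 (cc ε x.2) x.1 = -1 := by
          unfold sl4
          rw [hτE]
          have harg : ((8 - 10*(4/5:ℝ)) * (cc ε x.2) - (10*(4/5:ℝ) - 6))/2 = -1 := by ring
          rw [harg, min_eq_right (by norm_num), max_self]
        have hcl : max (0:ℝ) (min 1 (5*(1-x.1))) = 1 := by
          rw [hτE]
          norm_num
        unfold Phi2 Phi3
        rw [hs4v, hcl, hbdY x.2 hxD.2]
      · rw [if_neg hτ4]
  have contPhi : ContinuousOn (Phi h g f φp ε) D :=
    paste4 hQ0closed hQ1closed hQ2closed hQ3closed hcov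
      ((contPhiA.mono inter_subset_left).congr e0)
      ((contPhi1.mono inter_subset_left).congr e1)
      ((contPhi2.mono inter_subset_left).congr e2)
      ((contPhi3.mono inter_subset_left).congr e3)
  -- endpoint and diagonal values
  have hval0 : ∀ p ∈ P, Phi h g f φp ε (0, p) = p.2.1 := by
    intro p hp
    unfold Phi
    rw [if_pos (Or.inr (by norm_num : ((0:ℝ), p).1 ≤ 2/5))]
    show h (qq ε p * Acl 0, (p.1, gs (max (cc ε p) (sl2 0)) p.2.1 p.2.2)) = p.2.1
    have hA0 : Acl 0 = 0 := by norm_num [Acl]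
    have hs20 : sl2 0 = 1 := by norm_num [sl2]
    rw [hA0, hs20, mul_zero, max_eq_right (hcmem p).2, gs_one]
    exact hh0 (p.1, p.2.1)
  have hval1 : ∀ p ∈ P, Phi h g f φp ε (1, p) = p.2.2 := by
    intro p hp
    unfold Phi
    by_cases hd : dd p ≤ ε/2
    · rw [if_pos (Or.inl hd : dd ((1:ℝ), p).2 ≤ ε/2 ∨ ((1:ℝ), p).1 ≤ 2/5)]
      show h (qq ε p * Acl 1, (p.1, gs (max (cc ε p) (sl2 1)) p.2.1 p.2.2)) = p.2.2
      have hA1 : Acl 1 = 0 := by norm_num [Acl]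
      have hs21 : sl2 1 = -1 := by norm_num [sl2]
      rw [hA1, hs21, mul_zero, hcneg p hd, max_self, gs_neg_one]
      exact hh0 (p.1, p.2.2)
    · push_neg at hd
      have hnc : ¬ (dd ((1:ℝ), p).2 ≤ ε/2 ∨ ((1:ℝ), p).1 ≤ 2/5) := by
        push_neg
        exact ⟨hd, by norm_num⟩
      rw [if_neg hnc, if_neg (by norm_num : ¬ (((1:ℝ), p).1 ≤ 3/5)),
        if_neg (by norm_num : ¬ (((1:ℝ), p).1 ≤ 4/5))]
      show h (max 0 (min 1 (5*(1-(1:ℝ)))), (p.1, p.2.2)) = p.2.2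
      rw [show max (0:ℝ) (min 1 (5*(1-(1:ℝ)))) = 0 by norm_num]
      exact hh0 (p.1, p.2.2)
  have hvaldiag : ∀ p ∈ P, p.2.1 = p.2.2 → ∀ τ : ℝ, Phi h g f φp ε (τ, p) = p.2.1 := by
    rintro ⟨b, u, v⟩ hp heq τ
    simp only at heq
    subst heq
    have hd0 : dd (b, u, u) = 0 := dist_self u
    unfold Phi
    rw [if_pos (Or.inl (by rw [hd0]; linarith : dd (τ, (b, u, u)).2 ≤ ε/2))]
    show h (qq ε (b, u, u) * Acl τ, (b, gs (max (cc ε (b, u, u)) (sl2 τ)) u u)) = u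
    rw [hqzero (b, u, u) hd0, zero_mul, gs_self]
    exact hh0 (b, u)
  -- assemble
  refine ⟨fun z => Phi h g f φp ε ((1 - z.1)/2, z.2), ?_, ?_, ?_, ?_⟩
  · have hmap : MapsTo (fun z : ℝ × (B × sphere (0:V) 1 × sphere (0:V) 1) =>
        (((1 - z.1)/2, z.2) : ℝ × (B × sphere (0:V) 1 × sphere (0:V) 1)))
        (Icc (-1:ℝ) 1 ×ˢ (FF f ⁻¹' O)) D := by
      rintro ⟨t, p⟩ ⟨ht, hp⟩
      exact ⟨⟨by linarith [ht.2], by linarith [ht.1]⟩, hp⟩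
    exact contPhi.comp (((continuous_const.sub continuous_fst).div_const 2).prodMk
      continuous_snd).continuousOn hmap
  · intro p hp
    show Phi h g f φp ε ((1 - 1)/2, p) = p.2.1
    rw [show ((1:ℝ) - 1)/2 = 0 by norm_num]
    exact hval0 p hp
  · intro p hp
    show Phi h g f φp ε ((1 - (-1:ℝ))/2, p) = p.2.2
    rw [show ((1:ℝ) - (-1))/2 = 1 by norm_num]
    exact hval1 p hp
  · intro p hp heq t _
    exact hvaldiag p hp heq _

end Main

end Stmt10Aux

/-- Proposition 2.11 (fibre homotopy invariance of condition (3) of Theorem 2.2),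
for trivialized bundles: if the identity of `B × S(V)` is fibrewise homotopic to
`g ∘ f` and `B × S(V″)` admits `k+1` fibrewise motion planners fixing the
diagonal, then so does `B × S(V)`. -/
theorem stmt10 {V V'' : Type*}
    [NormedAddCommGroup V] [InnerProductSpace ℝ V] [FiniteDimensional ℝ V]
    [NormedAddCommGroup V''] [InnerProductSpace ℝ V''] [FiniteDimensional ℝ V'']
    (hdV : 2 ≤ Module.finrank ℝ V) (hdV'' : 2 ≤ Module.finrank ℝ V'')
    {B : Type*} [MetricSpace B] [CompactSpace B] {k : ℕ}
    (f : B × Metric.sphere (0 : V) 1 → Metric.sphere (0 : V'') 1)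
    (g : B × Metric.sphere (0 : V'') 1 → Metric.sphere (0 : V) 1)
    (hf : Continuous f) (hg : Continuous g)
    (h : ℝ × (B × Metric.sphere (0 : V) 1) → Metric.sphere (0 : V) 1)
    (hhcont : ContinuousOn h (Set.Icc (0 : ℝ) 1 ×ˢ Set.univ))
    (hh0 : ∀ p : B × Metric.sphere (0 : V) 1, h (0, p) = p.2)
    (hh1 : ∀ p : B × Metric.sphere (0 : V) 1, h (1, p) = g (p.1, f p))
    (U'' : Fin (k + 1) → Set (B × Metric.sphere (0 : V'') 1 × Metric.sphere (0 : V'') 1))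
    (φ'' : Fin (k + 1) → ℝ × (B × Metric.sphere (0 : V'') 1 × Metric.sphere (0 : V'') 1) →
      Metric.sphere (0 : V'') 1)
    (hU''open : ∀ i, IsOpen (U'' i))
    (hU''cover : (⋃ i, U'' i) = Set.univ)
    (hφ''cont : ∀ i, ContinuousOn (φ'' i) (Set.Icc (-1 : ℝ) 1 ×ˢ U'' i))
    (hφ''1 : ∀ i, ∀ p ∈ U'' i, φ'' i (1, p) = p.2.1)
    (hφ''2 : ∀ i, ∀ p ∈ U'' i, φ'' i (-1, p) = p.2.2)
    (hφ''diag : ∀ i, ∀ p ∈ U'' i, p.2.1 = p.2.2 →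
      ∀ t ∈ Set.Icc (-1 : ℝ) 1, φ'' i (t, p) = p.2.1) :
    ∃ (U : Fin (k + 1) → Set (B × Metric.sphere (0 : V) 1 × Metric.sphere (0 : V) 1))
      (φ : Fin (k + 1) → ℝ × (B × Metric.sphere (0 : V) 1 × Metric.sphere (0 : V) 1) →
        Metric.sphere (0 : V) 1),
      (∀ i, IsOpen (U i)) ∧
      (⋃ i, U i) = Set.univ ∧
      (∀ i, ContinuousOn (φ i) (Set.Icc (-1 : ℝ) 1 ×ˢ U i)) ∧
      (∀ i, ∀ p ∈ U i, φ i (1, p) = p.2.1) ∧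
      (∀ i, ∀ p ∈ U i, φ i (-1, p) = p.2.2) ∧
      (∀ i, ∀ p ∈ U i, p.2.1 = p.2.2 → ∀ t ∈ Set.Icc (-1 : ℝ) 1, φ i (t, p) = p.2.1) := by
  classical
  obtain ⟨W, hWU, hWopen, hWcl⟩ := exists_iUnion_eq_closure_subset hU''open
    (fun x => Set.toFinite _) hU''cover
  have hkey := fun i : Fin (k+1) =>
    Stmt10Aux.key h g f (φ'' i) hf hg hhcont hh0 hh1 (W i) (closure (W i)) (U'' i)
      subset_closure (isClosed_closure.isCompact) (hWcl i)
      (hφ''cont i) (hφ''1 i) (hφ''2 i) (hφ''diag i)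
  choose φs hc hend1 hend2 hdiag using hkey
  refine ⟨fun i => Stmt10Aux.FF f ⁻¹' (W i), φs, ?_, ?_, ?_, ?_, ?_, ?_⟩
  · intro i
    exact (hWopen i).preimage (Stmt10Aux.contFF hf)
  · apply Set.eq_univ_of_forall
    intro x
    have hx : Stmt10Aux.FF f x ∈ ⋃ i, W i := by rw [hWU]; trivial
    obtain ⟨i, hmem⟩ := Set.mem_iUnion.mp hx
    exact Set.mem_iUnion.mpr ⟨i, hmem⟩
  · exact hc
  · exact hend1
  · exact hend2
  · exact hdiag
end

section
/- Let r ≥ 1 and n = 2^r. In the polynomial ring F₂[S,T] over the field with two elements, let I be the ideal generated by S^{n+1} and T^n + S·T^{n−1} + S²·T^{n−2} + … + S^n (that is, Σ_{i=0}^{n} S^i T^{n−i}). Then (T+S)^{2n−1} ∈ I, but (T+S)^{2n−2} ∉ I; indeed (T+S)^{2n−2} is congruent modulo I to T^n S^{n−2} + T^{n−2} S^n, which is nonzero in F₂[S,T]/I. -/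
open MvPolynomial Finset

private lemma aux_coeff_mul_Xpow (p : MvPolynomial (Fin 2) (ZMod 2)) (s : Fin 2) (j : ℕ)
    (m : Fin 2 →₀ ℕ) (h : m s < j) : MvPolynomial.coeff m (p * X s ^ j) = 0 := by
  rw [X_pow_eq_monomial, coeff_mul_monomial', if_neg]
  rw [Finsupp.single_le_iff]; omega

private lemma aux_finsupp (a b a' b' : ℕ) :
    (Finsupp.single (0 : Fin 2) a + Finsupp.single 1 b =
      Finsupp.single (0 : Fin 2) a' + Finsupp.single 1 b') ↔ a = a' ∧ b = b' := by
  constructor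
  · intro h
    constructor
    · simpa using DFunLike.congr_fun h 0
    · simpa using DFunLike.congr_fun h 1
  · rintro ⟨rfl, rfl⟩; rfl

private lemma aux_coeff_mono (a b a' b' : ℕ) :
    MvPolynomial.coeff (Finsupp.single (0 : Fin 2) a' + Finsupp.single 1 b')
      ((X 1 : MvPolynomial (Fin 2) (ZMod 2)) ^ b * X 0 ^ a) =
      if a = a' ∧ b = b' then 1 else 0 := by
  rw [X_pow_eq_monomial, X_pow_eq_monomial, monomial_mul, coeff_monomial, mul_one]
  congr 1
  rw [add_comm, aux_finsupp]



/-- Example 3.6 (after Farber and Milnor): in `F₂[S,T]` with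
`I = (S^{n+1}, Σ_{i=0}^{n} S^i T^{n-i})` and `n = 2^r`, `(T+S)^{2n-1} ∈ I`, while
`(T+S)^{2n-2}` is congruent mod `I` to `T^n S^{n-2} + T^{n-2} S^n ≠ 0` in the
quotient; in particular `(T+S)^{2n-2} ∉ I`. -/
theorem stmt11 (r n : ℕ) (hr : 1 ≤ r) (hn : n = 2 ^ r)
    (S T : MvPolynomial (Fin 2) (ZMod 2)) (hS : S = MvPolynomial.X 0)
    (hT : T = MvPolynomial.X 1)
    (I : Ideal (MvPolynomial (Fin 2) (ZMod 2)))
    (hI : I = Ideal.span {S ^ (n + 1), ∑ i ∈ Finset.range (n + 1), S ^ i * T ^ (n - i)}) :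
    (T + S) ^ (2 * n - 1) ∈ I ∧
    (T + S) ^ (2 * n - 2) ∉ I ∧
    (T + S) ^ (2 * n - 2) + (T ^ n * S ^ (n - 2) + T ^ (n - 2) * S ^ n) ∈ I ∧
    T ^ n * S ^ (n - 2) + T ^ (n - 2) * S ^ n ∉ I := by
  subst hS hT
  set S : MvPolynomial (Fin 2) (ZMod 2) := X 0 with hS
  set T : MvPolynomial (Fin 2) (ZMod 2) := X 1 with hT
  have hn2 : 2 ≤ n := by
    subst hn
    calc 2 = 2 ^ 1 := rfl
    _ ≤ 2 ^ r := Nat.pow_le_pow_right (by norm_num) hr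
  obtain ⟨k, rfl⟩ : ∃ k, n = k + 2 := ⟨n - 2, by omega⟩
  rw [show 2 * (k + 2) - 1 = 2 * k + 3 from by omega,
    show 2 * (k + 2) - 2 = 2 * k + 2 from by omega,
    show k + 2 - 2 = k from by omega]
  set q : MvPolynomial (Fin 2) (ZMod 2) := ∑ i ∈ Finset.range (k + 2 + 1), S ^ i * T ^ (k + 2 - i)
    with hq
  have hqI : q ∈ I := by rw [hI]; exact Ideal.subset_span (by simp)
  have hSI : S ^ (k + 2 + 1) ∈ I := by rw [hI]; exact Ideal.subset_span (by simp)
  -- key geometric sum identity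
  have hqTS : q * (S + T) = S ^ (k + 2 + 1) + T ^ (k + 2 + 1) := by
    have h := geom_sum₂_mul S T (k + 2 + 1)
    rw [CharTwo.sub_eq_add, CharTwo.sub_eq_add] at h
    rw [hq]
    simpa using h
  have hTI : T ^ (k + 2 + 1) ∈ I := by
    have h : T ^ (k + 2 + 1) = q * (S + T) + S ^ (k + 2 + 1) := by
      linear_combination -hqTS - CharTwo.add_self_eq_zero (S ^ (k + 2 + 1))
    rw [h]
    exact add_mem (Ideal.mul_mem_right _ _ hqI) hSI
  have hST0 : (S + T) ≠ 0 := by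
    intro h
    have h2 := congrArg (MvPolynomial.coeff (Finsupp.single (0 : Fin 2) 1)) h
    simp [hS, hT, MvPolynomial.coeff_X', Finsupp.single_eq_single_iff] at h2
  -- (T+S)^(k+1) = geometric sum
  have hfro : (T + S) ^ (k + 2) = T ^ (k + 2) + S ^ (k + 2) := by
    rw [hn]
    exact add_pow_char_pow ..
  have hg : (T + S) ^ (k + 1) = ∑ i ∈ range (k + 2), S ^ i * T ^ (k + 1 - i) := by
    have hgm : (∑ i ∈ range (k + 2), S ^ i * T ^ (k + 1 - i)) * (S + T)
        = S ^ (k + 2) + T ^ (k + 2) := by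
      have h := geom_sum₂_mul S T (k + 2)
      rw [CharTwo.sub_eq_add, CharTwo.sub_eq_add] at h
      simpa using h
    refine mul_right_cancel₀ hST0 ?_
    rw [hgm]
    linear_combination hfro
  -- square it
  have hsq : (T + S) ^ (2 * k + 2) = ∑ i ∈ range (k + 2), S ^ (2 * i) * T ^ (2 * (k + 1 - i)) := by
    have h2 : 2 * k + 2 = (k + 1) * 2 := by omega
    rw [h2, pow_mul, hg, CharTwo.sum_sq]
    refine Finset.sum_congr rfl fun i _ => ?_
    rw [mul_pow, ← pow_mul, ← pow_mul, Nat.mul_comm i 2, Nat.mul_comm (k + 1 - i) 2]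
  obtain ⟨m0, hm0, hm1⟩ : ∃ m0, k + 2 = 2 * m0 ∧ 1 ≤ m0 := by
    refine ⟨2 ^ (r - 1), ?_, Nat.one_le_two_pow⟩
    rw [hn, ← pow_succ']
    congr 1
    omega
  -- claim 3
  have hmem1 : m0 - 1 ∈ range (k + 2) := by rw [Finset.mem_range]; omega
  have hmem2 : m0 ∈ (range (k + 2)).erase (m0 - 1) := by
    rw [Finset.mem_erase, Finset.mem_range]; omega
  have claim3 : (T + S) ^ (2 * k + 2) + (T ^ (k + 2) * S ^ k + T ^ k * S ^ (k + 2)) ∈ I := by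
    have hrest : ∑ i ∈ ((range (k + 2)).erase (m0 - 1)).erase m0,
        S ^ (2 * i) * T ^ (2 * (k + 1 - i)) ∈ I := by
      refine Ideal.sum_mem _ fun i hi => ?_
      rw [Finset.mem_erase, Finset.mem_erase, Finset.mem_range] at hi
      obtain ⟨hi1, hi2, hi3⟩ := hi
      rcases lt_or_ge i m0 with h | h
      · rw [show 2 * (k + 1 - i) = (k + 2 + 1) + (2 * (k + 1 - i) - (k + 3)) from by omega,
          pow_add]
        exact Ideal.mul_mem_left _ _ (Ideal.mul_mem_right _ _ hTI)
      · rw [show 2 * i = (k + 2 + 1) + (2 * i - (k + 3)) from by omega, pow_add, mul_assoc]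
        exact Ideal.mul_mem_right _ _ hSI
    have heq : (T + S) ^ (2 * k + 2) + (T ^ (k + 2) * S ^ k + T ^ k * S ^ (k + 2))
        = ∑ i ∈ ((range (k + 2)).erase (m0 - 1)).erase m0,
            S ^ (2 * i) * T ^ (2 * (k + 1 - i)) := by
      rw [hsq, ← Finset.add_sum_erase _ _ hmem1, ← Finset.add_sum_erase _ _ hmem2,
        show 2 * (m0 - 1) = k from by omega, show 2 * (k + 1 - (m0 - 1)) = k + 2 from by omega,
        show 2 * m0 = k + 2 from by omega, show 2 * (k + 1 - m0) = k from by omega]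
      linear_combination CharTwo.add_self_eq_zero (S ^ k * T ^ (k + 2))
        + CharTwo.add_self_eq_zero (S ^ (k + 2) * T ^ k)
    rw [heq]
    exact hrest
  -- claim 1
  have hmid : T ^ (k + 2) * S ^ (k + 1) + T ^ (k + 1) * S ^ (k + 2) ∈ I := by
    have h1 : q * T ^ (k + 1) = ∑ i ∈ range (k + 2 + 1), S ^ i * T ^ (2 * k + 3 - i) := by
      rw [hq, Finset.sum_mul]
      refine Finset.sum_congr rfl fun i hi => ?_
      rw [Finset.mem_range] at hi
      rw [mul_assoc, ← pow_add]
      congr 2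
      omega
    have h2 : ∑ i ∈ range (k + 2 + 1), S ^ i * T ^ (2 * k + 3 - i)
        = (∑ i ∈ range (k + 1), S ^ i * T ^ (2 * k + 3 - i))
          + S ^ (k + 1) * T ^ (k + 2) + S ^ (k + 2) * T ^ (k + 1) := by
      rw [show k + 2 + 1 = (k + 1) + 1 + 1 from rfl, Finset.sum_range_succ, Finset.sum_range_succ,
        show k + 1 + 1 = k + 2 from rfl, show 2 * k + 3 - (k + 1) = k + 2 from by omega,
        show 2 * k + 3 - (k + 2) = k + 1 from by omega]
    have key : T ^ (k + 2) * S ^ (k + 1) + T ^ (k + 1) * S ^ (k + 2)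
        = q * T ^ (k + 1) + ∑ i ∈ range (k + 1), S ^ i * T ^ (2 * k + 3 - i) := by
      rw [h1, h2]
      linear_combination -CharTwo.add_self_eq_zero
        (∑ i ∈ range (k + 1), S ^ i * T ^ (2 * k + 3 - i))
    rw [key]
    refine add_mem (Ideal.mul_mem_right _ _ hqI) (Ideal.sum_mem _ fun i hi => ?_)
    rw [Finset.mem_range] at hi
    rw [show 2 * k + 3 - i = (k + 2 + 1) + (k - i) from by omega, pow_add]
    exact Ideal.mul_mem_left _ _ (Ideal.mul_mem_right _ _ hTI)
  have claim1 : (T + S) ^ (2 * k + 3) ∈ I := by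
    have hkey : (T + S) ^ (2 * k + 3)
        = ((T + S) ^ (2 * k + 2) + (T ^ (k + 2) * S ^ k + T ^ k * S ^ (k + 2))) * (T + S)
          + (T ^ (k + 2 + 1) * S ^ k + (T ^ (k + 2) * S ^ (k + 1) + T ^ (k + 1) * S ^ (k + 2))
            + T ^ k * S ^ (k + 2 + 1)) := by
      linear_combination -CharTwo.add_self_eq_zero
        ((T ^ (k + 2) * S ^ k + T ^ k * S ^ (k + 2)) * (T + S))
    rw [hkey]
    exact add_mem (Ideal.mul_mem_right _ _ claim3)
      (add_mem (add_mem (Ideal.mul_mem_right _ _ hTI) hmid) (Ideal.mul_mem_left _ _ hSI))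
  -- claim 4
  have claim4 : T ^ (k + 2) * S ^ k + T ^ k * S ^ (k + 2) ∉ I := by
    intro hm
    rw [hI, Ideal.mem_span_pair] at hm
    obtain ⟨u, v, huv⟩ := hm
    have key : (u * (S + T) + v) * S ^ (k + 2 + 1) + v * T ^ (k + 2 + 1)
        = T ^ (k + 2 + 1) * S ^ k + X 1 ^ (k + 2) * X 0 ^ (k + 1)
          + X 1 ^ (k + 1) * X 0 ^ (k + 2) + T ^ k * S ^ (k + 2 + 1) := by
      linear_combination (S + T) * huv - v * hqTS
    have hc := congrArg
      (MvPolynomial.coeff (Finsupp.single (0 : Fin 2) (k + 1) + Finsupp.single 1 (k + 2))) key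
    have hμ0 : ((Finsupp.single (0 : Fin 2) (k + 1) + Finsupp.single 1 (k + 2) : Fin 2 →₀ ℕ)) 0
        = k + 1 := by simp
    have hμ1 : ((Finsupp.single (0 : Fin 2) (k + 1) + Finsupp.single 1 (k + 2) : Fin 2 →₀ ℕ)) 1
        = k + 2 := by simp
    rw [MvPolynomial.coeff_add, MvPolynomial.coeff_add, MvPolynomial.coeff_add,
      MvPolynomial.coeff_add,
      aux_coeff_mul_Xpow _ 0 _ _ (by rw [hμ0]; omega),
      aux_coeff_mul_Xpow _ 1 _ _ (by rw [hμ1]; omega)] at hc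
    rw [show (T ^ (k + 2 + 1) * S ^ k : MvPolynomial (Fin 2) (ZMod 2))
        = X 1 ^ (k + 2 + 1) * X 0 ^ k from rfl,
      show (T ^ k * S ^ (k + 2 + 1) : MvPolynomial (Fin 2) (ZMod 2))
        = X 1 ^ k * X 0 ^ (k + 2 + 1) from rfl,
      aux_coeff_mono, aux_coeff_mono, aux_coeff_mono, aux_coeff_mono,
      if_neg (by omega), if_pos ⟨rfl, rfl⟩, if_neg (by omega), if_neg (by omega)] at hc
    simp at hc
  have claim2 : (T + S) ^ (2 * k + 2) ∉ I := by
    intro h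
    refine claim4 ?_
    have heq : T ^ (k + 2) * S ^ k + T ^ k * S ^ (k + 2)
        = ((T + S) ^ (2 * k + 2) + (T ^ (k + 2) * S ^ k + T ^ k * S ^ (k + 2)))
          + (T + S) ^ (2 * k + 2) := by
      linear_combination -CharTwo.add_self_eq_zero ((T + S) ^ (2 * k + 2))
    rw [heq]
    exact add_mem claim3 h
  exact ⟨claim1, claim2, claim3, claim4⟩
end
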